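/- arXiv:0812.3055 — 5 statements merged into one kernel-verified Lean document; each statement's English description precedes it below -/
import Mathlib

section
/- Let (ε_k)_{k∈ℕ} be a sequence of i.i.d. random variables with values in ℝ^d and let F : ℝ^d × [0,1] → ℝ be measurable such that sup_{t∈[0,1]} E|F(ε₁,t)| < ∞, lim_{M→∞} sup_{t∈[0,1]} E[|F(ε₁,t)| · 1_{|F(ε₁,t)|>M}] = 0, and t ↦ E F(ε₁,t) is Riemann-integrable on [0,1]. Then (1/n) ∑_{k=1}^n F(ε_k, k/n) converges in probability to ∫₀¹ E F(ε₁,t) dt as n → ∞. -/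
open MeasureTheory ProbabilityTheory Filter
open scoped BigOperators Topology

section llnAux

variable {Ω : Type*} [MeasurableSpace Ω] {P : Measure Ω}
variable {E : Type*} [MeasurableSpace E]

lemma lln_integral_eq {f g : Ω → E} (hf : Measurable f) (hg : Measurable g)
    (h : Measure.map f P = Measure.map g P) {ψ : E → ℝ} (hψ : Measurable ψ) :
    ∫ ω, ψ (f ω) ∂P = ∫ ω, ψ (g ω) ∂P := by
  rw [← integral_map hf.aemeasurable hψ.aestronglyMeasurable, h,
    integral_map hg.aemeasurable hψ.aestronglyMeasurable]

lemma lln_integrable_iff {f g : Ω → E} (hf : Measurable f) (hg : Measurable g)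
    (h : Measure.map f P = Measure.map g P) {ψ : E → ℝ} (hψ : Measurable ψ) :
    Integrable (fun ω => ψ (f ω)) P ↔ Integrable (fun ω => ψ (g ω)) P := by
  rw [show (fun ω => ψ (f ω)) = ψ ∘ f from rfl,
    show (fun ω => ψ (g ω)) = ψ ∘ g from rfl,
    ← integrable_map_measure hψ.aestronglyMeasurable hf.aemeasurable, h,
    integrable_map_measure hψ.aestronglyMeasurable hg.aemeasurable]

/-- clamp to `[-M, M]` -/
noncomputable def llnClamp (M y : ℝ) : ℝ := max (min y M) (-M)

lemma llnClamp_measurable (M : ℝ) : Measurable (llnClamp M) :=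
  (measurable_id.min measurable_const).max measurable_const

lemma abs_llnClamp_le (M y : ℝ) (hM : 0 ≤ M) : |llnClamp M y| ≤ M :=
  abs_le.2 ⟨le_max_right _ _, max_le (min_le_right _ _) (neg_le_self hM)⟩

lemma llnClamp_eq {M y : ℝ} (h : |y| ≤ M) : llnClamp M y = y := by
  rcases abs_le.1 h with ⟨h1, h2⟩
  rw [llnClamp, min_eq_left h2, max_eq_left h1]

lemma abs_sub_llnClamp_le (M y : ℝ) (hM : 0 ≤ M) : |y - llnClamp M y| ≤ |y| := by
  rcases le_total 0 y with hy | hy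
  · rw [llnClamp, max_eq_left (le_min (by linarith) (by linarith))]
    have h1 : min y M ≤ y := min_le_left _ _
    have h2 : 0 ≤ min y M := le_min hy hM
    rw [abs_of_nonneg (by linarith), abs_of_nonneg hy]; linarith
  · rw [llnClamp, min_eq_left (by linarith)]
    have h1 : y ≤ max y (-M) := le_max_left _ _
    have h2 : max y (-M) ≤ 0 := max_le hy (by linarith)
    rw [abs_of_nonpos (by linarith), abs_of_nonpos hy]; linarith

lemma lln_int_abs_le_sqrt [IsProbabilityMeasure P] {g : Ω → ℝ} (hg : MemLp g 2 P) :
    ∫ ω, |g ω| ∂P ≤ Real.sqrt (∫ ω, (g ω) ^ 2 ∂P) := by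
  have h22 : Real.HolderConjugate 2 2 := Real.HolderConjugate.two_two
  have h1 : MemLp g (ENNReal.ofReal 2) P := by
    rw [show ENNReal.ofReal 2 = 2 by norm_num]; exact hg
  have h2 : MemLp (fun _ : Ω => (1 : ℝ)) (ENNReal.ofReal 2) P := memLp_const 1
  have h := integral_mul_norm_le_Lp_mul_Lq h22 h1 h2
  have e2 : (fun ω : Ω => ‖g ω‖ ^ (2:ℝ)) = fun ω => (g ω) ^ 2 :=
    funext fun ω => by rw [Real.norm_eq_abs, Real.rpow_two, sq_abs]
  have e3 : (fun _ : Ω => ‖(1:ℝ)‖ ^ (2:ℝ)) = fun _ => (1:ℝ) := funext fun ω => by norm_num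
  calc ∫ ω, |g ω| ∂P = ∫ ω, ‖g ω‖ * ‖(1:ℝ)‖ ∂P := by simp
  _ ≤ (∫ ω, ‖g ω‖ ^ (2:ℝ) ∂P) ^ (1/(2:ℝ)) * (∫ ω, ‖(1:ℝ)‖ ^ (2:ℝ) ∂P) ^ (1/(2:ℝ)) := h
  _ = Real.sqrt (∫ ω, (g ω) ^ 2 ∂P) := by
      rw [e2, e3, integral_const, probReal_univ, one_smul,
        Real.one_rpow, mul_one, Real.sqrt_eq_rpow]

end llnAux

set_option maxHeartbeats 2000000 in
/-- Law of large numbers for triangular arrays built from an i.i.d. sequence: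
if `(ε k)` is i.i.d., `F` is measurable, `sup_{t ∈ [0,1]} E|F(ε₁,t)| < ∞`, the family
`{F(ε₁,t), t ∈ [0,1]}` is uniformly integrable uniformly in `t`, and `t ↦ E F(ε₁,t)` is
Riemann-integrable on `[0,1]` (its right-endpoint Riemann sums converge to its integral),
then `(1/n) ∑_{k=1}^n F(ε_k, k/n)` converges in probability to `∫₀¹ E F(ε₁,t) dt`. -/
theorem stmt_0
    {Ω : Type*} [MeasurableSpace Ω] (P : Measure Ω) [IsProbabilityMeasure P]
    {d : ℕ} (ε : ℕ → Ω → EuclideanSpace ℝ (Fin d))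
    (hmeas : ∀ k, Measurable (ε k))
    (hindep : iIndepFun ε P)
    (hident : ∀ k, Measure.map (ε k) P = Measure.map (ε 1) P)
    (F : EuclideanSpace ℝ (Fin d) → ℝ → ℝ)
    (hF : Measurable (fun p : EuclideanSpace ℝ (Fin d) × ℝ => F p.1 p.2))
    (hint : ∀ t ∈ Set.Icc (0:ℝ) 1, Integrable (fun ω => F (ε 1 ω) t) P)
    (hbound : ∃ C : ℝ, ∀ t ∈ Set.Icc (0:ℝ) 1, ∫ ω, |F (ε 1 ω) t| ∂P ≤ C)
    (hUI : ∀ δ > (0:ℝ), ∃ M : ℝ, ∀ t ∈ Set.Icc (0:ℝ) 1,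
      ∫ ω in {ω | M < |F (ε 1 ω) t|}, |F (ε 1 ω) t| ∂P ≤ δ)
    (hRiem : Tendsto (fun n : ℕ =>
        (n:ℝ)⁻¹ * ∑ k ∈ Finset.Icc 1 n, ∫ ω, F (ε 1 ω) ((k:ℝ)/(n:ℝ)) ∂P)
      atTop (𝓝 (∫ t in (0:ℝ)..1, ∫ ω, F (ε 1 ω) t ∂P))) :
    TendstoInMeasure P
      (fun (n : ℕ) ω => (n:ℝ)⁻¹ * ∑ k ∈ Finset.Icc 1 n, F (ε k ω) ((k:ℝ)/(n:ℝ)))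
      atTop
      (fun _ => ∫ t in (0:ℝ)..1, ∫ ω, F (ε 1 ω) t ∂P) := by
  set I : ℝ := ∫ t in (0:ℝ)..1, ∫ ω, F (ε 1 ω) t ∂P with hIdef
  have hψ : ∀ t : ℝ, Measurable fun x : EuclideanSpace ℝ (Fin d) => F x t :=
    fun t => hF.comp (measurable_id.prodMk measurable_const)
  have hXint : ∀ k, ∀ t ∈ Set.Icc (0:ℝ) 1, Integrable (fun ω => F (ε k ω) t) P :=
    fun k t ht => (lln_integrable_iff (hmeas k) (hmeas 1) (hident k) (hψ t)).2 (hint t ht)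
  have htmem : ∀ n : ℕ, 1 ≤ n → ∀ k ∈ Finset.Icc 1 n, ((k:ℝ)/(n:ℝ)) ∈ Set.Icc (0:ℝ) 1 := by
    intro n hn1 k hk
    have hn0 : (0:ℝ) < n := by exact_mod_cast hn1
    rw [Finset.mem_Icc] at hk
    constructor
    · positivity
    · rw [div_le_one hn0]; exact_mod_cast hk.2
  have hSi : ∀ n : ℕ, 1 ≤ n → Integrable
      (fun ω => |(n:ℝ)⁻¹ * ∑ k ∈ Finset.Icc 1 n, F (ε k ω) ((k:ℝ)/(n:ℝ)) - I|) P := by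
    intro n hn1
    exact (((integrable_finset_sum _ (fun k hk => hXint k _ (htmem n hn1 k hk))).const_mul
      _).sub (integrable_const I)).abs
  have key : Tendsto (fun n : ℕ =>
      ∫ ω, |(n:ℝ)⁻¹ * ∑ k ∈ Finset.Icc 1 n, F (ε k ω) ((k:ℝ)/(n:ℝ)) - I| ∂P)
      atTop (𝓝 0) := by
    rw [NormedAddCommGroup.tendsto_nhds_zero]
    intro εp hεp
    have hδpos : 0 < εp / 6 := by linarith
    obtain ⟨M₀, hM₀⟩ := hUI (εp/6) hδpos
    set δ : ℝ := εp / 6 with hδdef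
    set M : ℝ := max M₀ 0 with hMdef
    have hM : 0 ≤ M := le_max_right _ _
    have hUI' : ∀ t ∈ Set.Icc (0:ℝ) 1,
        ∫ ω in {ω | M < |F (ε 1 ω) t|}, |F (ε 1 ω) t| ∂P ≤ δ := by
      intro t ht
      have hsub : {ω | M < |F (ε 1 ω) t|} ⊆ {ω | M₀ < |F (ε 1 ω) t|} := by
        intro ω hω
        simp only [Set.mem_setOf_eq] at hω ⊢
        exact lt_of_le_of_lt (le_max_left _ _) hω
      have h1 : ∫ ω in {ω | M < |F (ε 1 ω) t|}, |F (ε 1 ω) t| ∂P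
          ≤ ∫ ω in {ω | M₀ < |F (ε 1 ω) t|}, |F (ε 1 ω) t| ∂P :=
        setIntegral_mono_set ((hint t ht).abs.integrableOn)
          (Filter.Eventually.of_forall fun ω => abs_nonneg _) hsub.eventuallyLE
      exact le_trans h1 (hM₀ t ht)
    have hE1 : ∀ᶠ n : ℕ in atTop,
        dist ((n:ℝ)⁻¹ * ∑ k ∈ Finset.Icc 1 n, ∫ ω, F (ε 1 ω) ((k:ℝ)/(n:ℝ)) ∂P) I < δ :=
      Metric.tendsto_nhds.mp hRiem δ hδpos
    have hE2 : ∀ᶠ n : ℕ in atTop, ((M/δ)^2 : ℝ) ≤ (n:ℝ) := by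
      filter_upwards [eventually_ge_atTop ⌈((M/δ)^2 : ℝ)⌉₊] with n hn
      exact le_trans (Nat.le_ceil _) (by exact_mod_cast hn)
    filter_upwards [hE1, hE2, eventually_ge_atTop 1] with n h1 h2 hn1
    have hn0 : (0:ℝ) < n := by exact_mod_cast hn1
    -- local notation
    set X : ℕ → Ω → ℝ := fun k ω => F (ε k ω) ((k:ℝ)/(n:ℝ)) with hXdef
    set Y : ℕ → Ω → ℝ := fun k ω => llnClamp M (F (ε k ω) ((k:ℝ)/(n:ℝ))) with hYdef
    have hXm : ∀ k, Measurable (X k) := fun k => (hψ _).comp (hmeas k)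
    have hYm : ∀ k, Measurable (Y k) := fun k => (llnClamp_measurable M).comp (hXm k)
    have hXi : ∀ k ∈ Finset.Icc 1 n, Integrable (X k) P :=
      fun k hk => hXint k _ (htmem n hn1 k hk)
    have hY2 : ∀ k, MemLp (Y k) 2 P := fun k =>
      MemLp.of_bound (hYm k).aestronglyMeasurable M
        (Filter.Eventually.of_forall fun ω => by
          simpa [Real.norm_eq_abs] using abs_llnClamp_le M (F (ε k ω) ((k:ℝ)/(n:ℝ))) hM)
    have hYi : ∀ k, Integrable (Y k) P := fun k => (hY2 k).integrable one_le_two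
    set m : ℕ → ℝ := fun k => ∫ ω, X k ω ∂P with hmdef
    set q : ℕ → ℝ := fun k => ∫ ω, Y k ω ∂P with hqdef
    set W : Ω → ℝ := fun ω => ∑ k ∈ Finset.Icc 1 n, Y k ω with hWdef
    set EW : ℝ := ∑ k ∈ Finset.Icc 1 n, q k with hEWdef
    set μn : ℝ := (n:ℝ)⁻¹ * ∑ k ∈ Finset.Icc 1 n, m k with hμndef
    have hWi : Integrable W P := integrable_finset_sum _ fun k _ => hYi k
    have hW2 : MemLp W 2 P := memLp_finset_sum _ fun k _ => hY2 k
    have hEW : ∫ ω, W ω ∂P = EW := integral_finset_sum _ fun k _ => hYi k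
    -- remainder bound
    have hrem : ∀ k ∈ Finset.Icc 1 n, ∫ ω, |X k ω - Y k ω| ∂P ≤ δ := by
      intro k hk
      have e1 : ∫ ω, |X k ω - Y k ω| ∂P
          = ∫ ω, |F (ε 1 ω) ((k:ℝ)/(n:ℝ)) - llnClamp M (F (ε 1 ω) ((k:ℝ)/(n:ℝ)))| ∂P :=
        lln_integral_eq (hmeas k) (hmeas 1) (hident k)
          (((hψ ((k:ℝ)/(n:ℝ))).sub ((llnClamp_measurable M).comp (hψ _))).abs)
      rw [e1]
      have hgmeas : Measurable fun ω => F (ε 1 ω) ((k:ℝ)/(n:ℝ)) := (hψ _).comp (hmeas 1)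
      have hgi : Integrable (fun ω => F (ε 1 ω) ((k:ℝ)/(n:ℝ))) P :=
        hint _ (htmem n hn1 k hk)
      have hsm : MeasurableSet {ω | M < |F (ε 1 ω) ((k:ℝ)/(n:ℝ))|} :=
        measurableSet_lt measurable_const hgmeas.abs
      have hclampi : Integrable (fun ω => llnClamp M (F (ε 1 ω) ((k:ℝ)/(n:ℝ)))) P :=
        memLp_one_iff_integrable.mp (MemLp.of_bound
          ((llnClamp_measurable M).comp hgmeas).aestronglyMeasurable M
          (Filter.Eventually.of_forall fun ω => by
            simpa [Real.norm_eq_abs] using abs_llnClamp_le M (F (ε 1 ω) ((k:ℝ)/(n:ℝ))) hM))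
      calc ∫ ω, |F (ε 1 ω) ((k:ℝ)/(n:ℝ)) - llnClamp M (F (ε 1 ω) ((k:ℝ)/(n:ℝ)))| ∂P
          ≤ ∫ ω, Set.indicator {ω | M < |F (ε 1 ω) ((k:ℝ)/(n:ℝ))|}
              (fun ω => |F (ε 1 ω) ((k:ℝ)/(n:ℝ))|) ω ∂P := by
            refine integral_mono (hgi.sub hclampi).abs (hgi.abs.indicator hsm) fun ω => ?_
            by_cases h : ω ∈ {ω | M < |F (ε 1 ω) ((k:ℝ)/(n:ℝ))|}
            · rw [Set.indicator_of_mem h]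
              exact abs_sub_llnClamp_le M _ hM
            · have h' : ¬ M < |F (ε 1 ω) ((k:ℝ)/(n:ℝ))| := h
              rw [Set.indicator_of_notMem h, llnClamp_eq (not_lt.1 h'), sub_self, abs_zero]
      _ = ∫ ω in {ω | M < |F (ε 1 ω) ((k:ℝ)/(n:ℝ))|}, |F (ε 1 ω) ((k:ℝ)/(n:ℝ))| ∂P :=
            integral_indicator hsm
      _ ≤ δ := hUI' _ (htmem n hn1 k hk)
    -- variance bound
    have hWeq : W = ∑ k ∈ Finset.Icc 1 n, Y k := by
      funext ω; simp [hWdef, Finset.sum_apply]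
    have hvarsum : variance W P = ∑ k ∈ Finset.Icc 1 n, variance (Y k) P := by
      rw [hWeq]
      refine IndepFun.variance_sum (fun k _ => hY2 k) ?_
      intro i _ j _ hij
      exact (hindep.indepFun hij).comp
        ((llnClamp_measurable M).comp (hψ ((i:ℝ)/(n:ℝ))))
        ((llnClamp_measurable M).comp (hψ ((j:ℝ)/(n:ℝ))))
    have hvarY : ∀ k ∈ Finset.Icc 1 n, variance (Y k) P ≤ M^2 := by
      intro k _
      refine le_trans (variance_le_expectation_sq (hY2 k).aestronglyMeasurable) ?_
      calc ∫ ω, ((Y k) ^ 2) ω ∂P ≤ ∫ _ω, M^2 ∂P := by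
            refine integral_mono (hY2 k).integrable_sq (integrable_const _) fun ω => ?_
            have hb := abs_llnClamp_le M (F (ε k ω) ((k:ℝ)/(n:ℝ))) hM
            calc ((Y k) ^ 2) ω = |Y k ω| ^ 2 := by rw [Pi.pow_apply, sq_abs]
            _ ≤ M ^ 2 := pow_le_pow_left₀ (abs_nonneg _) hb 2
      _ = M ^ 2 := by simp
    have hvarW : variance W P ≤ (n:ℝ) * M^2 := by
      rw [hvarsum]
      calc ∑ k ∈ Finset.Icc 1 n, variance (Y k) P
          ≤ (Finset.Icc 1 n).card • (M^2) := Finset.sum_le_card_nsmul _ _ _ hvarY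
      _ = (n:ℝ) * M^2 := by
          rw [Nat.card_Icc]; simp [nsmul_eq_mul]
    -- central L¹ bound via Cauchy–Schwarz
    have hcent : ∫ ω, |W ω - EW| ∂P ≤ Real.sqrt n * M := by
      have hWc2 : MemLp (fun ω => W ω - EW) 2 P := hW2.sub (memLp_const _)
      calc ∫ ω, |W ω - EW| ∂P ≤ Real.sqrt (∫ ω, (W ω - EW)^2 ∂P) := lln_int_abs_le_sqrt hWc2
      _ = Real.sqrt (variance W P) := by
          rw [variance_eq_integral hW2.aestronglyMeasurable.aemeasurable]
          congr 1
          refine integral_congr_ae (Filter.Eventually.of_forall fun ω => ?_)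
          simp [hEW, Pi.pow_apply, Pi.sub_apply]
      _ ≤ Real.sqrt ((n:ℝ) * M^2) := Real.sqrt_le_sqrt hvarW
      _ = Real.sqrt n * M := by rw [Real.sqrt_mul hn0.le, Real.sqrt_sq hM]
    -- identification of the Riemann sum
    have hmk : ∀ k, m k = ∫ ω, F (ε 1 ω) ((k:ℝ)/(n:ℝ)) ∂P := fun k =>
      lln_integral_eq (hmeas k) (hmeas 1) (hident k) (hψ ((k:ℝ)/(n:ℝ)))
    have hμnI : |μn - I| ≤ δ := by
      have : μn = (n:ℝ)⁻¹ * ∑ k ∈ Finset.Icc 1 n, ∫ ω, F (ε 1 ω) ((k:ℝ)/(n:ℝ)) ∂P := by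
        rw [hμndef]; congr 1; exact Finset.sum_congr rfl fun k _ => hmk k
      rw [this, ← Real.dist_eq]
      exact h1.le
    have hmq : ∀ k ∈ Finset.Icc 1 n, |m k - q k| ≤ δ := by
      intro k hk
      have e : m k - q k = ∫ ω, (X k ω - Y k ω) ∂P :=
        (integral_sub (hXi k hk) (hYi k)).symm
      rw [e]
      calc |∫ ω, (X k ω - Y k ω) ∂P| ≤ ∫ ω, |X k ω - Y k ω| ∂P := by
            simpa [Real.norm_eq_abs] using
              norm_integral_le_integral_norm (μ := P) (fun ω => X k ω - Y k ω)
      _ ≤ δ := hrem k hk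
    -- pointwise decomposition
    have hpt : ∀ ω, |(n:ℝ)⁻¹ * ∑ k ∈ Finset.Icc 1 n, X k ω - I|
        ≤ (n:ℝ)⁻¹ * |W ω - EW|
          + (n:ℝ)⁻¹ * ∑ k ∈ Finset.Icc 1 n, |X k ω - Y k ω|
          + ((n:ℝ)⁻¹ * ∑ k ∈ Finset.Icc 1 n, |m k - q k| + |μn - I|) := by
      intro ω
      have e : (n:ℝ)⁻¹ * ∑ k ∈ Finset.Icc 1 n, X k ω - I
          = ((n:ℝ)⁻¹ * (W ω - EW) + (n:ℝ)⁻¹ * ∑ k ∈ Finset.Icc 1 n, (X k ω - Y k ω))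
            + (-((n:ℝ)⁻¹ * ∑ k ∈ Finset.Icc 1 n, (m k - q k)) + (μn - I)) := by
        simp only [hWdef, hEWdef, hμndef, Finset.sum_sub_distrib]
        ring
      rw [e]
      refine le_trans (abs_add_le _ _) (add_le_add (le_trans (abs_add_le _ _)
        (add_le_add ?_ ?_)) (le_trans (abs_add_le _ _) (add_le_add ?_ le_rfl)))
      · rw [abs_mul, abs_of_nonneg (by positivity : (0:ℝ) ≤ (n:ℝ)⁻¹)]
      · rw [abs_mul, abs_of_nonneg (by positivity : (0:ℝ) ≤ (n:ℝ)⁻¹)]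
        exact mul_le_mul_of_nonneg_left (Finset.abs_sum_le_sum_abs _ _) (by positivity)
      · rw [abs_neg, abs_mul, abs_of_nonneg (by positivity : (0:ℝ) ≤ (n:ℝ)⁻¹)]
        exact mul_le_mul_of_nonneg_left (Finset.abs_sum_le_sum_abs _ _) (by positivity)
    -- integrate the pointwise bound
    have hB1 : Integrable (fun ω => (n:ℝ)⁻¹ * |W ω - EW|) P :=
      ((hWi.sub (integrable_const _)).abs).const_mul _
    have hB2 : Integrable (fun ω => (n:ℝ)⁻¹ * ∑ k ∈ Finset.Icc 1 n, |X k ω - Y k ω|) P :=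
      (integrable_finset_sum _ fun k hk => ((hXi k hk).sub (hYi k)).abs).const_mul _
    have hIb : ∫ ω, |(n:ℝ)⁻¹ * ∑ k ∈ Finset.Icc 1 n, X k ω - I| ∂P
        ≤ (n:ℝ)⁻¹ * ∫ ω, |W ω - EW| ∂P
          + (n:ℝ)⁻¹ * ∑ k ∈ Finset.Icc 1 n, ∫ ω, |X k ω - Y k ω| ∂P
          + ((n:ℝ)⁻¹ * ∑ k ∈ Finset.Icc 1 n, |m k - q k| + |μn - I|) := by
      have step := integral_mono (by simpa [hXdef] using hSi n hn1)
        ((hB1.add hB2).add (integrable_const _)) hpt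
      calc ∫ ω, |(n:ℝ)⁻¹ * ∑ k ∈ Finset.Icc 1 n, X k ω - I| ∂P
          ≤ ∫ ω, ((n:ℝ)⁻¹ * |W ω - EW|
            + (n:ℝ)⁻¹ * ∑ k ∈ Finset.Icc 1 n, |X k ω - Y k ω|
            + ((n:ℝ)⁻¹ * ∑ k ∈ Finset.Icc 1 n, |m k - q k| + |μn - I|)) ∂P := step
      _ = (n:ℝ)⁻¹ * ∫ ω, |W ω - EW| ∂P
          + (n:ℝ)⁻¹ * ∑ k ∈ Finset.Icc 1 n, ∫ ω, |X k ω - Y k ω| ∂P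
          + ((n:ℝ)⁻¹ * ∑ k ∈ Finset.Icc 1 n, |m k - q k| + |μn - I|) := by
          have e1 := integral_add (μ := P)
            (f := fun ω => (n:ℝ)⁻¹ * |W ω - EW|
              + (n:ℝ)⁻¹ * ∑ k ∈ Finset.Icc 1 n, |X k ω - Y k ω|)
            (g := fun _ => (n:ℝ)⁻¹ * ∑ k ∈ Finset.Icc 1 n, |m k - q k| + |μn - I|)
            (hB1.add hB2) (integrable_const _)
          have e2 := integral_add (μ := P)
            (f := fun ω => (n:ℝ)⁻¹ * |W ω - EW|)
            (g := fun ω => (n:ℝ)⁻¹ * ∑ k ∈ Finset.Icc 1 n, |X k ω - Y k ω|) hB1 hB2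
          have e3 : ∫ ω, (n:ℝ)⁻¹ * |W ω - EW| ∂P
              = (n:ℝ)⁻¹ * ∫ ω, |W ω - EW| ∂P := integral_const_mul _ _
          have hXYabs : ∀ k ∈ Finset.Icc 1 n,
              Integrable (fun ω => |X k ω - Y k ω|) P :=
            fun k hk => ((hXi k hk).sub (hYi k)).abs
          have e4' : ∫ ω, ∑ k ∈ Finset.Icc 1 n, |X k ω - Y k ω| ∂P
              = ∑ k ∈ Finset.Icc 1 n, ∫ ω, |X k ω - Y k ω| ∂P :=
            integral_finset_sum _ hXYabs
          have e4 : ∫ ω, (n:ℝ)⁻¹ * ∑ k ∈ Finset.Icc 1 n, |X k ω - Y k ω| ∂P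
              = (n:ℝ)⁻¹ * ∑ k ∈ Finset.Icc 1 n, ∫ ω, |X k ω - Y k ω| ∂P := by
            rw [integral_const_mul, e4']
          have e5 : ∫ _ω, ((n:ℝ)⁻¹ * ∑ k ∈ Finset.Icc 1 n, |m k - q k| + |μn - I|) ∂P
              = ((n:ℝ)⁻¹ * ∑ k ∈ Finset.Icc 1 n, |m k - q k| + |μn - I|) := by simp
          rw [e1, e2, e3, e4, e5]
    -- numeric conclusion
    have hsum1 : ∑ k ∈ Finset.Icc 1 n, ∫ ω, |X k ω - Y k ω| ∂P ≤ (n:ℝ) * δ := by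
      calc ∑ k ∈ Finset.Icc 1 n, ∫ ω, |X k ω - Y k ω| ∂P
          ≤ (Finset.Icc 1 n).card • δ := Finset.sum_le_card_nsmul _ _ _ hrem
      _ = (n:ℝ) * δ := by rw [Nat.card_Icc]; simp [nsmul_eq_mul]
    have hsum2 : ∑ k ∈ Finset.Icc 1 n, |m k - q k| ≤ (n:ℝ) * δ := by
      calc ∑ k ∈ Finset.Icc 1 n, |m k - q k|
          ≤ (Finset.Icc 1 n).card • δ := Finset.sum_le_card_nsmul _ _ _ hmq
      _ = (n:ℝ) * δ := by rw [Nat.card_Icc]; simp [nsmul_eq_mul]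
    have hinvn : (n:ℝ)⁻¹ * ((n:ℝ) * δ) = δ := by
      rw [← mul_assoc, inv_mul_cancel₀ hn0.ne', one_mul]
    have hsqrtpos : (0:ℝ) < Real.sqrt n := Real.sqrt_pos.2 hn0
    have hMδ : (n:ℝ)⁻¹ * (Real.sqrt n * M) ≤ δ := by
      have hle : M / δ ≤ Real.sqrt n := by
        rw [show (n:ℝ) = Real.sqrt n * Real.sqrt n from (Real.mul_self_sqrt hn0.le).symm] at h2
        nlinarith [Real.sqrt_nonneg (n:ℝ), div_nonneg hM hδpos.le]
      have hM' : M ≤ δ * Real.sqrt n := by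
        rw [div_le_iff₀ hδpos] at hle; linarith [hle]
      have : (n:ℝ)⁻¹ * (Real.sqrt n * M) = M / Real.sqrt n := by
        have hss : Real.sqrt (n:ℝ) * Real.sqrt (n:ℝ) = (n:ℝ) := Real.mul_self_sqrt hn0.le
        field_simp
        linear_combination M * hss
      rw [this, div_le_iff₀ hsqrtpos]
      linarith [hM']
    have hfinal : ∫ ω, |(n:ℝ)⁻¹ * ∑ k ∈ Finset.Icc 1 n, X k ω - I| ∂P ≤ 4 * δ := by
      have b1 : (n:ℝ)⁻¹ * ∫ ω, |W ω - EW| ∂P ≤ δ :=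
        le_trans (mul_le_mul_of_nonneg_left hcent (by positivity)) hMδ
      have b2 : (n:ℝ)⁻¹ * ∑ k ∈ Finset.Icc 1 n, ∫ ω, |X k ω - Y k ω| ∂P ≤ δ := by
        rw [← hinvn]; exact mul_le_mul_of_nonneg_left hsum1 (by positivity)
      have b3 : (n:ℝ)⁻¹ * ∑ k ∈ Finset.Icc 1 n, |m k - q k| ≤ δ := by
        rw [← hinvn]; exact mul_le_mul_of_nonneg_left hsum2 (by positivity)
      linarith [hIb, hμnI]
    have hnn : 0 ≤ ∫ ω, |(n:ℝ)⁻¹ * ∑ k ∈ Finset.Icc 1 n, X k ω - I| ∂P :=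
      integral_nonneg fun ω => abs_nonneg _
    have : ∫ ω, |(n:ℝ)⁻¹ * ∑ k ∈ Finset.Icc 1 n, X k ω - I| ∂P < εp := by
      rw [hδdef] at hfinal; linarith
    rw [Real.norm_eq_abs, abs_of_nonneg (integral_nonneg fun ω => abs_nonneg _)]
    simpa [hXdef] using this
  -- Markov's inequality step
  rw [tendstoInMeasure_iff_dist]
  intro η hη
  have haux : ∀ᶠ n : ℕ in atTop,
      P {ω | η ≤ dist ((n:ℝ)⁻¹ * ∑ k ∈ Finset.Icc 1 n, F (ε k ω) ((k:ℝ)/(n:ℝ))) I}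
        ≤ ENNReal.ofReal
          ((∫ ω, |(n:ℝ)⁻¹ * ∑ k ∈ Finset.Icc 1 n, F (ε k ω) ((k:ℝ)/(n:ℝ)) - I| ∂P) / η) := by
    filter_upwards [eventually_ge_atTop 1] with n hn1
    have hmar := mul_meas_ge_le_integral_of_nonneg
      (Filter.Eventually.of_forall fun ω => abs_nonneg _) (hSi n hn1) η
    have hset : {ω | η ≤ dist ((n:ℝ)⁻¹ * ∑ k ∈ Finset.Icc 1 n, F (ε k ω) ((k:ℝ)/(n:ℝ))) I}
        = {ω | η ≤ |(n:ℝ)⁻¹ * ∑ k ∈ Finset.Icc 1 n, F (ε k ω) ((k:ℝ)/(n:ℝ)) - I|} := by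
      simp only [Real.dist_eq]
    rw [hset]
    rw [← ENNReal.ofReal_toReal (measure_ne_top P _)]
    apply ENNReal.ofReal_le_ofReal
    rw [le_div_iff₀ hη, mul_comm]
    exact hmar
  refine tendsto_of_tendsto_of_tendsto_of_le_of_le' tendsto_const_nhds ?_
    (Filter.Eventually.of_forall fun n => zero_le) haux
  have h0 : Tendsto (fun n : ℕ =>
      (∫ ω, |(n:ℝ)⁻¹ * ∑ k ∈ Finset.Icc 1 n, F (ε k ω) ((k:ℝ)/(n:ℝ)) - I| ∂P) / η)
      atTop (𝓝 0) := by simpa using key.div_const η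
  simpa using ENNReal.tendsto_ofReal h0
end

section
/- Under assumptions (IID), (Obs), (Esp) and (Cont), any measurable minimizer θ̄_n of M_n over Θ converges in probability to θ* as n → ∞. -/
open MeasureTheory ProbabilityTheory Filter
open scoped BigOperators Topology

-- Markov: for nonneg integrable T, P{a ≤ T} ≤ ofReal(∫T / a)
lemma markov_aux {Ω : Type*} [MeasurableSpace Ω] (P : Measure Ω) [IsFiniteMeasure P]
    {T : Ω → ℝ} (hT0 : ∀ ω, 0 ≤ T ω) (hTi : Integrable T P) {a : ℝ} (ha : 0 < a) :
    P {ω | a ≤ T ω} ≤ ENNReal.ofReal ((∫ ω, T ω ∂P) / a) := by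
  have h := mul_meas_ge_le_integral_of_nonneg (μ := P) (Filter.Eventually.of_forall hT0) hTi a
  have hfin : P {ω | a ≤ T ω} ≠ ⊤ := measure_ne_top _ _
  rw [← ENNReal.ofReal_toReal hfin]
  apply ENNReal.ofReal_le_ofReal
  rw [le_div_iff₀ ha, mul_comm]
  exact h

-- Chebyshev: P{a ≤ |Z|} ≤ ofReal(E Z² / a²)
lemma cheb_aux {Ω : Type*} [MeasurableSpace Ω] (P : Measure Ω) [IsFiniteMeasure P]
    {Z : Ω → ℝ} (hZi : Integrable (fun ω => (Z ω)^2) P) {a : ℝ} (ha : 0 < a) :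
    P {ω | a ≤ |Z ω|} ≤ ENNReal.ofReal ((∫ ω, (Z ω)^2 ∂P) / a^2) := by
  have hsub : {ω | a ≤ |Z ω|} ⊆ {ω | a^2 ≤ (Z ω)^2} := by
    intro ω hω
    simp only [Set.mem_setOf_eq] at hω ⊢
    calc a^2 ≤ |Z ω|^2 := by apply pow_le_pow_left₀ ha.le hω
    _ = (Z ω)^2 := sq_abs _
  refine le_trans (measure_mono hsub) ?_
  exact markov_aux P (fun ω => sq_nonneg _) hZi (by positivity)

lemma sum_sq_aux {Ω : Type*} [MeasurableSpace Ω] (P : Measure Ω) {ι : Type*} (s : Finset ι)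
    (W : ι → Ω → ℝ) (c : ι → ℝ)
    (hmul : ∀ i ∈ s, ∀ j ∈ s, Integrable (fun ω => W i ω * W j ω) P)
    (hoff : ∀ i ∈ s, ∀ j ∈ s, i ≠ j → ∫ ω, W i ω * W j ω ∂P = 0) :
    Integrable (fun ω => (∑ i ∈ s, c i * W i ω)^2) P ∧
    ∫ ω, (∑ i ∈ s, c i * W i ω)^2 ∂P = ∑ i ∈ s, (c i)^2 * ∫ ω, (W i ω)^2 ∂P := by
  have key : ∀ ω, (∑ i ∈ s, c i * W i ω)^2
      = ∑ i ∈ s, ∑ j ∈ s, (c i * c j) * (W i ω * W j ω) := by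
    intro ω
    rw [sq, Finset.sum_mul_sum]
    exact Finset.sum_congr rfl fun i _ => Finset.sum_congr rfl fun j _ => by ring
  have hint : Integrable (fun ω => (∑ i ∈ s, c i * W i ω)^2) P := by
    simp only [key]
    exact integrable_finset_sum _ fun i hi =>
      integrable_finset_sum _ fun j hj => (hmul i hi j hj).const_mul _
  refine ⟨hint, ?_⟩
  calc ∫ ω, (∑ i ∈ s, c i * W i ω)^2 ∂P
      = ∫ ω, ∑ i ∈ s, ∑ j ∈ s, (c i * c j) * (W i ω * W j ω) ∂P :=
        integral_congr_ae (Filter.Eventually.of_forall fun ω => key ω)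
    _ = ∑ i ∈ s, ∫ ω, ∑ j ∈ s, (c i * c j) * (W i ω * W j ω) ∂P :=
        integral_finset_sum _ fun i hi => integrable_finset_sum _ fun j hj =>
          ((hmul i hi j hj).const_mul _)
    _ = ∑ i ∈ s, (c i)^2 * ∫ ω, (W i ω)^2 ∂P := by
        refine Finset.sum_congr rfl fun i hi => ?_
        rw [integral_finset_sum _ fun j hj => ((hmul i hi j hj).const_mul _),
          Finset.sum_eq_single i]
        · rw [integral_const_mul]
          have : ∀ ω, W i ω * W i ω = (W i ω)^2 := fun ω => (sq (W i ω)).symm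
          rw [integral_congr_ae (Filter.Eventually.of_forall this)]
          ring_nf
        · intro j hj hji
          rw [integral_const_mul, hoff i hi j hj (Ne.symm hji), mul_zero]
        · intro hi'; exact absurd hi hi'

lemma ident_aux {Ω α : Type*} [MeasurableSpace Ω] [MeasurableSpace α] {P : Measure Ω}
    {X Y : Ω → α} (hX : Measurable X) (hY : Measurable Y)
    (hid : Measure.map X P = Measure.map Y P) {f : α → ℝ} (hf : Measurable f) :
    (Integrable (fun ω => f (X ω)) P ↔ Integrable (fun ω => f (Y ω)) P) ∧
    ∫ ω, f (X ω) ∂P = ∫ ω, f (Y ω) ∂P := by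
  constructor
  · change Integrable (f ∘ X) P ↔ Integrable (f ∘ Y) P
    rw [← integrable_map_measure hf.aestronglyMeasurable hX.aemeasurable, hid,
      integrable_map_measure hf.aestronglyMeasurable hY.aemeasurable]
  · rw [← integral_map hX.aemeasurable hf.aestronglyMeasurable, hid,
      integral_map hY.aemeasurable hf.aestronglyMeasurable]

lemma riemann_aux {E : Type*} [MetricSpace E] {A : Set E} (hA : IsCompact A)
    (u : ℝ → E → ℝ) (hu : ContinuousOn (fun q : ℝ × E => u q.1 q.2) (Set.Icc (0:ℝ) 1 ×ˢ A))
    {η : ℝ} (hη : 0 < η) :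
    ∃ N : ℕ, 1 ≤ N ∧ ∀ n, N ≤ n → ∀ θ ∈ A,
      |(n:ℝ)⁻¹ * ∑ k ∈ Finset.Icc 1 n, u ((k:ℝ)/(n:ℝ)) θ - ∫ t in (0:ℝ)..1, u t θ| ≤ η := by
  have hcomp : IsCompact (Set.Icc (0:ℝ) 1 ×ˢ A) := isCompact_Icc.prod hA
  have huc : UniformContinuousOn (fun q : ℝ × E => u q.1 q.2) (Set.Icc (0:ℝ) 1 ×ˢ A) :=
    hcomp.uniformContinuousOn_of_continuous hu
  rw [Metric.uniformContinuousOn_iff] at huc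
  obtain ⟨δ, hδ, hδ'⟩ := huc η hη
  refine ⟨Nat.ceil (1/δ) + 1, le_add_self, fun n hn θ hθ => ?_⟩
  have hn1 : 1 ≤ n := le_trans le_add_self hn
  have hnpos : (0:ℝ) < n := by exact_mod_cast hn1
  have hinv : (n:ℝ)⁻¹ < δ := by
    rw [inv_lt_comm₀ hnpos hδ]
    calc δ⁻¹ ≤ (Nat.ceil (1/δ) : ℝ) := by rw [one_div]; exact Nat.le_ceil _
      _ < (Nat.ceil (1/δ) : ℝ) + 1 := lt_add_one _
      _ ≤ n := by exact_mod_cast hn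
  have hslice : ContinuousOn (fun t => u t θ) (Set.Icc (0:ℝ) 1) := by
    have hc : ContinuousOn (fun t : ℝ => ((t, θ) : ℝ × E)) (Set.Icc (0:ℝ) 1) :=
      (continuous_id.prodMk continuous_const).continuousOn
    exact hu.comp hc (fun t ht => ⟨ht, hθ⟩)
  set a : ℕ → ℝ := fun k => (k:ℝ)/(n:ℝ) with ha
  have hstep : ∀ k : ℕ, a k ≤ a (k+1) := fun k =>
    div_le_div_of_nonneg_right (by exact_mod_cast Nat.le_succ k) hnpos.le
  have hd : ∀ k : ℕ, a (k+1) - a k = (n:ℝ)⁻¹ := by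
    intro k
    simp only [ha]
    push_cast
    field_simp
    ring
  have hasub : ∀ k, k < n → Set.uIcc (a k) (a (k+1)) ⊆ Set.Icc (0:ℝ) 1 := by
    intro k hk
    rw [Set.uIcc_of_le (hstep k)]
    intro t ht
    refine ⟨le_trans (by positivity) ht.1, le_trans ht.2 ?_⟩
    rw [div_le_one hnpos]
    exact_mod_cast hk
  have hint : ∀ k, k < n → IntervalIntegrable (fun t => u t θ) volume (a k) (a (k+1)) :=
    fun k hk => (hslice.mono (hasub k hk)).intervalIntegrable
  have htot : ∫ t in (0:ℝ)..1, u t θ = ∑ k ∈ Finset.range n, ∫ t in a k..a (k+1), u t θ := by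
    have h := intervalIntegral.sum_integral_adjacent_intervals (a := a) (n := n)
      (f := fun t => u t θ) (μ := volume) hint
    have ha0 : a 0 = 0 := by simp [ha]
    have han : a n = 1 := by simp [ha, div_self (ne_of_gt hnpos)]
    rw [← ha0, ← han, ← h]
  have hsum : (n:ℝ)⁻¹ * ∑ k ∈ Finset.Icc 1 n, u ((k:ℝ)/(n:ℝ)) θ
      = ∑ k ∈ Finset.range n, (n:ℝ)⁻¹ * u (a (k+1)) θ := by
    rw [Finset.mul_sum, ← Finset.Ico_add_one_right_eq_Icc, Finset.sum_Ico_eq_sum_range]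
    simp only [Nat.succ_sub_one, ha]
    refine Finset.sum_congr rfl fun k _ => ?_
    norm_num [add_comm 1 k]
  rw [hsum, htot, ← Finset.sum_sub_distrib]
  refine le_trans (Finset.abs_sum_le_sum_abs _ _) ?_
  have hbound : ∀ k ∈ Finset.range n,
      |(n:ℝ)⁻¹ * u (a (k+1)) θ - ∫ t in a k..a (k+1), u t θ| ≤ η * (n:ℝ)⁻¹ := by
    intro k hk
    rw [Finset.mem_range] at hk
    have hconst : (n:ℝ)⁻¹ * u (a (k+1)) θ = ∫ t in a k..a (k+1), u (a (k+1)) θ := by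
      rw [intervalIntegral.integral_const, smul_eq_mul, hd k]
    rw [hconst, ← intervalIntegral.integral_sub intervalIntegrable_const (hint k hk)]
    have hle : ∀ t ∈ Set.uIoc (a k) (a (k+1)), ‖u (a (k+1)) θ - u t θ‖ ≤ η := by
      intro t ht
      have hak1 : a (k+1) ∈ Set.Icc (0:ℝ) 1 := hasub k hk Set.right_mem_uIcc
      have htmem : t ∈ Set.Icc (0:ℝ) 1 := hasub k hk (Set.uIoc_subset_uIcc ht)
      have hdist : dist ((a (k+1), θ) : ℝ × E) ((t, θ) : ℝ × E) < δ := by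
        rw [Prod.dist_eq]
        simp only [dist_self]
        apply max_lt ?_ hδ
        rw [Real.dist_eq]
        rw [Set.uIoc_of_le (hstep k)] at ht
        have h1 : a k < t := ht.1
        have h2 : t ≤ a (k+1) := ht.2
        have h3 := hd k
        rw [abs_lt]
        constructor <;> nlinarith [hinv]
      have hlt := hδ' (a (k+1), θ) ⟨hak1, hθ⟩ (t, θ) ⟨htmem, hθ⟩ hdist
      rw [Real.dist_eq] at hlt
      exact le_of_lt hlt
    have hni := intervalIntegral.norm_integral_le_of_norm_le_const hle
    rw [← Real.norm_eq_abs]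
    refine le_trans hni ?_
    have habs : |a (k+1) - a k| = (n:ℝ)⁻¹ := by
      rw [hd k]; exact abs_of_nonneg (by positivity)
    rw [habs]
  refine le_trans (Finset.sum_le_sum hbound) ?_
  rw [Finset.sum_const, Finset.card_range, nsmul_eq_mul, mul_comm η, ← mul_assoc,
    mul_inv_cancel₀ (ne_of_gt hnpos), one_mul]

lemma slice_cont_aux {E : Type*} [MetricSpace E] {Θ : Set E}
    (u : ℝ → E → ℝ) (hu : ContinuousOn (fun q : ℝ × E => u q.1 q.2) (Set.Icc (0:ℝ) 1 ×ˢ Θ))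
    {θ : E} (hθ : θ ∈ Θ) : ContinuousOn (fun t => u t θ) (Set.Icc (0:ℝ) 1) := by
  have hc : ContinuousOn (fun t : ℝ => ((t, θ) : ℝ × E)) (Set.Icc (0:ℝ) 1) :=
    (continuous_id.prodMk continuous_const).continuousOn
  exact hu.comp hc (fun t ht => ⟨ht, hθ⟩)

lemma slice_ii_aux {E : Type*} [MetricSpace E] {Θ : Set E}
    (u : ℝ → E → ℝ) (hu : ContinuousOn (fun q : ℝ × E => u q.1 q.2) (Set.Icc (0:ℝ) 1 ×ˢ Θ))
    {θ : E} (hθ : θ ∈ Θ) : IntervalIntegrable (fun t => u t θ) volume 0 1 := by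
  apply ContinuousOn.intervalIntegrable
  rw [Set.uIcc_of_le (zero_le_one)]
  exact slice_cont_aux u hu hθ

lemma Kmin_aux {E : Type*} [MetricSpace E] {Θ : Set E} (hΘ : IsCompact Θ)
    (u : ℝ → E → ℝ) (hu : ContinuousOn (fun q : ℝ × E => u q.1 q.2) (Set.Icc (0:ℝ) 1 ×ˢ Θ))
    (hnn : ∀ t θ, 0 ≤ u t θ)
    {A : Set E} (hA : IsCompact A) (hAsub : A ⊆ Θ) (hAne : A.Nonempty)
    (hpos : ∀ θ ∈ A, ∃ t ∈ Set.Icc (0:ℝ) 1, 0 < u t θ) :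
    ∃ c, 0 < c ∧ ∀ θ ∈ A, c ≤ ∫ t in (0:ℝ)..1, u t θ := by
  set K : E → ℝ := fun θ => ∫ t in (0:ℝ)..1, u t θ with hK
  -- continuity of K on Θ
  have hKcont : ContinuousOn K Θ := by
    rw [Metric.continuousOn_iff]
    intro θ₀ hθ₀ ε hε
    have hcomp : IsCompact (Set.Icc (0:ℝ) 1 ×ˢ Θ) := isCompact_Icc.prod hΘ
    have huc := hcomp.uniformContinuousOn_of_continuous hu
    rw [Metric.uniformContinuousOn_iff] at huc
    obtain ⟨δ, hδ, hδ'⟩ := huc (ε/2) (by positivity)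
    refine ⟨δ, hδ, fun θ hθ hdθ => ?_⟩
    have hb : ∀ t ∈ Set.uIoc (0:ℝ) 1, ‖u t θ - u t θ₀‖ ≤ ε/2 := by
      intro t ht
      rw [Set.uIoc_of_le zero_le_one] at ht
      have htI : t ∈ Set.Icc (0:ℝ) 1 := ⟨ht.1.le, ht.2⟩
      have hdist : dist ((t, θ) : ℝ × E) ((t, θ₀) : ℝ × E) < δ := by
        rw [Prod.dist_eq]
        simp only [dist_self]
        exact max_lt (by linarith [hδ]) hdθ
      exact (le_of_lt (hδ' (t, θ) ⟨htI, hθ⟩ (t, θ₀) ⟨htI, hθ₀⟩ hdist))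
    have hKd : K θ - K θ₀ = ∫ t in (0:ℝ)..1, (u t θ - u t θ₀) := by
      rw [intervalIntegral.integral_sub (slice_ii_aux u hu hθ) (slice_ii_aux u hu hθ₀)]
    rw [Real.dist_eq, hKd]
    calc |∫ t in (0:ℝ)..1, (u t θ - u t θ₀)| ≤ (ε/2) * |1 - 0| := by
          rw [← Real.norm_eq_abs]
          exact intervalIntegral.norm_integral_le_of_norm_le_const hb
      _ < ε := by rw [sub_zero, abs_one, mul_one]; linarith
  obtain ⟨θ₀, hθ₀A, hmin⟩ := hA.exists_isMinOn hAne (hKcont.mono hAsub)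
  refine ⟨K θ₀, ?_, fun θ hθ => hmin hθ⟩
  -- positivity of K θ₀
  obtain ⟨t₀, ht₀I, ht₀⟩ := hpos θ₀ hθ₀A
  have hsl := slice_cont_aux u hu (hAsub hθ₀A)
  have hcw : ContinuousWithinAt (fun t => u t θ₀) (Set.Icc (0:ℝ) 1) t₀ := hsl t₀ ht₀I
  rw [Metric.continuousWithinAt_iff] at hcw
  obtain ⟨δ, hδ, hδ'⟩ := hcw (u t₀ θ₀) ht₀
  set aa : ℝ := max (t₀ - δ/2) 0 with haa
  set bb : ℝ := min (t₀ + δ/2) 1 with hbb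
  have hab : aa < bb := by
    apply max_lt <;> apply lt_min <;> [linarith; linarith [ht₀I.2]; linarith [ht₀I.1]; norm_num]
  have hIoo : ∀ t ∈ Set.Ioo aa bb, 0 < u t θ₀ := by
    intro t ht
    have htI : t ∈ Set.Icc (0:ℝ) 1 :=
      ⟨le_trans (le_max_right _ _) ht.1.le, le_trans ht.2.le (min_le_right _ _)⟩
    have hdist : dist t t₀ < δ := by
      rw [Real.dist_eq, abs_lt]
      have h1 : t₀ - δ/2 ≤ aa := le_max_left _ _
      have h2 : bb ≤ t₀ + δ/2 := min_le_left _ _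
      constructor <;> nlinarith [ht.1, ht.2, hδ]
    have := hδ' htI hdist
    rw [Real.dist_eq, abs_lt] at this
    linarith [this.1]
  rw [hK]
  rw [intervalIntegral.integral_pos_iff_support_of_nonneg_ae
    (Filter.Eventually.of_forall (fun t => hnn t θ₀)) (slice_ii_aux u hu (hAsub hθ₀A))]
  refine ⟨zero_lt_one, ?_⟩
  have hsub : Set.Ioo aa bb ⊆ Function.support (fun t => u t θ₀) ∩ Set.Ioc 0 1 := by
    intro t ht
    refine ⟨ne_of_gt (hIoo t ht), ?_, ?_⟩
    · exact lt_of_le_of_lt (le_max_right _ _) ht.1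
    · exact le_trans ht.2.le (min_le_right _ _)
  calc (0:ENNReal) < volume (Set.Ioo aa bb) := by
        rw [Real.volume_Ioo]; exact ENNReal.ofReal_pos.mpr (by linarith)
    _ ≤ _ := measure_mono hsub

set_option maxHeartbeats 2000000 in
/-- Under assumptions (IID), (Obs), (Esp) and (Cont), any measurable minimizer
`θ̄_n` of the least squares criterion `M_n` over the compact parameter set `Θ` converges in
probability to the true parameter `θ*`. -/
theorem stmt_3
    {Ω : Type*} [MeasurableSpace Ω] (P : Measure Ω) [IsProbabilityMeasure P]
    {m d : ℕ}
    (Θ : Set (EuclideanSpace ℝ (Fin m))) (hΘ : IsCompact Θ)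
    (θstar : EuclideanSpace ℝ (Fin m)) (hθstar : θstar ∈ Θ)
    (S : ℝ → EuclideanSpace ℝ (Fin m) → EuclideanSpace ℝ (Fin d))
    (Ψ : EuclideanSpace ℝ (Fin d) → ℝ → ℝ)
    (hSmeas : Measurable (fun q : ℝ × EuclideanSpace ℝ (Fin m) => S q.1 q.2))
    (hΨmeas : Measurable (fun q : EuclideanSpace ℝ (Fin d) × ℝ => Ψ q.1 q.2))
    -- trajectory noise: i.i.d. sequence (Assumption (IID))
    (ε : ℕ → Ω → EuclideanSpace ℝ (Fin d))
    (hεmeas : ∀ k, Measurable (ε k))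
    (hεindep : iIndepFun ε P)
    (hεident : ∀ k, Measure.map (ε k) P = Measure.map (ε 1) P)
    -- observation noise: i.i.d. centered with variance σ², independent of (ε_k)
    (V : ℕ → Ω → ℝ) (σ2 : ℝ)
    (hVmeas : ∀ k, Measurable (V k))
    (hVindep : iIndepFun V P)
    (hVident : ∀ k, Measure.map (V k) P = Measure.map (V 1) P)
    (hVint : Integrable (V 1) P) (hVcent : ∫ ω, V 1 ω ∂P = 0)
    (hVsq : Integrable (fun ω => (V 1 ω)^2) P) (hVvar : ∫ ω, (V 1 ω)^2 ∂P = σ2)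
    (hindepεV : IndepFun (fun ω (k : ℕ) => ε k ω) (fun ω (k : ℕ) => V k ω) P)
    -- least squares criterion
    (Mn : ℕ → Ω → EuclideanSpace ℝ (Fin m) → ℝ)
    (hMn : ∀ (n : ℕ) ω θ, Mn n ω θ = (n:ℝ)⁻¹ * ∑ k ∈ Finset.Icc 1 n,
      (Ψ (S ((k:ℝ)/(n:ℝ)) θstar + ε k ω) ((k:ℝ)/(n:ℝ)) + V k ω
        - Ψ (S ((k:ℝ)/(n:ℝ)) θ) ((k:ℝ)/(n:ℝ)))^2)
    -- Assumption (Obs)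
    (hObs : ∀ θ ∈ Θ, (∀ t ∈ Set.Icc (0:ℝ) 1, Ψ (S t θ) t = Ψ (S t θstar) t) → θ = θstar)
    -- Assumption (Esp)
    (hEspInt : ∀ t ∈ Set.Icc (0:ℝ) 1, ∀ θ ∈ Θ,
      Integrable (fun ω => Ψ (S t θ + ε 1 ω) t) P)
    (hEsp : ∀ t ∈ Set.Icc (0:ℝ) 1, ∀ θ ∈ Θ,
      ∫ ω, Ψ (S t θ + ε 1 ω) t ∂P = Ψ (S t θ) t)
    -- Assumption (Cont)
    (hC1a : ∀ t ∈ Set.Icc (0:ℝ) 1,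
      Integrable (fun ω => (Ψ (S t θstar + ε 1 ω) t)^2) P)
    (hC1b : ContinuousOn (fun t => ∫ ω, (Ψ (S t θstar + ε 1 ω) t)^2 ∂P)
      (Set.Icc (0:ℝ) 1))
    (hC2 : ∀ δ > (0:ℝ), ∃ M0 : ℝ, ∀ t ∈ Set.Icc (0:ℝ) 1,
      ∫ ω in {ω | M0 < (Ψ (S t θstar + ε 1 ω) t)^2}, (Ψ (S t θstar + ε 1 ω) t)^2 ∂P ≤ δ)
    (hC3 : ContinuousOn (fun q : ℝ × EuclideanSpace ℝ (Fin m) => Ψ (S q.1 q.2) q.1)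
      (Set.Icc (0:ℝ) 1 ×ˢ Θ))
    -- the least squares estimator: any measurable minimizer of `M_n` over `Θ`
    (θbar : ℕ → Ω → EuclideanSpace ℝ (Fin m))
    (hθbarmeas : ∀ n, Measurable (θbar n))
    (hθbarmem : ∀ n ω, θbar n ω ∈ Θ)
    (hθbarmin : ∀ n ω, ∀ θ ∈ Θ, Mn n ω (θbar n ω) ≤ Mn n ω θ) :
    TendstoInMeasure P (fun n ω => θbar n ω) atTop (fun _ => θstar) := by
  classical
  set g : ℝ → EuclideanSpace ℝ (Fin m) → ℝ := fun t θ => Ψ (S t θ) t with hgdef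
  set u : ℝ → EuclideanSpace ℝ (Fin m) → ℝ := fun t θ => (g t θstar - g t θ)^2 with hudef
  set Y : ℝ → ℕ → Ω → ℝ := fun t k ω => Ψ (S t θstar + ε k ω) t - g t θstar with hYdef
  set W : ℕ → ℕ → Ω → ℝ := fun n k ω => Y ((k:ℝ)/(n:ℝ)) k ω + V k ω with hWdef
  -- membership of grid points
  have htmem : ∀ n k : ℕ, k ∈ Finset.Icc 1 n → (k:ℝ)/(n:ℝ) ∈ Set.Icc (0:ℝ) 1 := by
    intro n k hk
    rw [Finset.mem_Icc] at hk
    have hn1 : 1 ≤ n := le_trans hk.1 hk.2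
    have hnpos : (0:ℝ) < n := by exact_mod_cast hn1
    constructor
    · positivity
    · rw [div_le_one hnpos]; exact_mod_cast hk.2
  -- continuity of g as a function of (t, θ)
  have hgcont : ContinuousOn (fun q : ℝ × EuclideanSpace ℝ (Fin m) => g q.1 q.2)
      (Set.Icc (0:ℝ) 1 ×ˢ Θ) := hC3
  have hgstarcont : ContinuousOn (fun q : ℝ × EuclideanSpace ℝ (Fin m) => g q.1 θstar)
      (Set.Icc (0:ℝ) 1 ×ˢ Θ) := by
    have hmap : ContinuousOn (fun q : ℝ × EuclideanSpace ℝ (Fin m) => ((q.1, θstar) : ℝ × EuclideanSpace ℝ (Fin m)))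
        (Set.Icc (0:ℝ) 1 ×ˢ Θ) := (continuous_fst.prodMk continuous_const).continuousOn
    exact hgcont.comp hmap (fun q hq => ⟨hq.1, hθstar⟩)
  have hucont : ContinuousOn (fun q : ℝ × EuclideanSpace ℝ (Fin m) => u q.1 q.2)
      (Set.Icc (0:ℝ) 1 ×ˢ Θ) := by
    simp only [hudef]
    exact (hgstarcont.sub hgcont).pow 2
  -- bound on g over the compact set
  obtain ⟨Cg, hCg⟩ := (isCompact_Icc.prod hΘ).exists_bound_of_continuousOn hgcont
  set C : ℝ := 2 * Cg + 1 with hCdef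
  have hCg0 : 0 ≤ Cg :=
    le_trans (norm_nonneg _) (hCg ((0:ℝ), θstar) ⟨⟨le_refl 0, zero_le_one⟩, hθstar⟩)
  have hC0 : 0 < C := by rw [hCdef]; linarith
  have hCbound : ∀ t ∈ Set.Icc (0:ℝ) 1, ∀ θ ∈ Θ, |g t θstar - g t θ| ≤ C := by
    intro t ht θ hθ
    have h1 : |g t θstar| ≤ Cg := by
      have := hCg (t, θstar) ⟨ht, hθstar⟩; rwa [Real.norm_eq_abs] at this
    have h2 : |g t θ| ≤ Cg := by
      have := hCg (t, θ) ⟨ht, hθ⟩; rwa [Real.norm_eq_abs] at this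
    have h3 : |g t θstar - g t θ| ≤ |g t θstar| + |g t θ| := abs_sub _ _
    rw [hCdef]; linarith
  -- bound on second moments
  obtain ⟨B2, hB2⟩ := isCompact_Icc.exists_bound_of_continuousOn hC1b
  have hB20 : 0 ≤ B2 :=
    le_trans (norm_nonneg _) (hB2 0 ⟨le_refl 0, zero_le_one⟩)
  have hσ2 : 0 ≤ σ2 := hVvar ▸ integral_nonneg (fun ω => sq_nonneg _)
  set B0 : ℝ := B2 + σ2 with hB0def
  have hB00 : 0 ≤ B0 := by rw [hB0def]; linarith
  set B1 : ℝ := (B0 + 1)/2 with hB1def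
  have hB10 : 0 < B1 := by rw [hB1def]; linarith
  -- facts about V k
  have hVk : ∀ k : ℕ, Integrable (V k) P ∧ (∫ ω, V k ω ∂P = 0) ∧
      Integrable (fun ω => (V k ω)^2) P ∧ (∫ ω, (V k ω)^2 ∂P = σ2) := by
    intro k
    obtain ⟨hiff1, heq1⟩ := ident_aux (hVmeas k) (hVmeas 1) (hVident k)
      (f := fun x : ℝ => x) measurable_id
    obtain ⟨hiff2, heq2⟩ := ident_aux (hVmeas k) (hVmeas 1) (hVident k)
      (f := fun x : ℝ => x^2) (measurable_id.pow_const 2)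
    exact ⟨hiff1.mpr hVint, heq1.trans hVcent, hiff2.mpr hVsq, heq2.trans hVvar⟩
  -- facts about Y t k
  have hYk : ∀ t ∈ Set.Icc (0:ℝ) 1, ∀ k : ℕ, Integrable (Y t k) P ∧ (∫ ω, Y t k ω ∂P = 0) ∧
      Integrable (fun ω => (Y t k ω)^2) P ∧ (∫ ω, (Y t k ω)^2 ∂P ≤ B2) := by
    intro t ht k
    have hφ : Measurable (fun x : EuclideanSpace ℝ (Fin d) => Ψ (S t θstar + x) t) :=
      hΨmeas.comp ((measurable_id.const_add (S t θstar)).prodMk measurable_const)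
    obtain ⟨hiff1, heq1⟩ := ident_aux (hεmeas k) (hεmeas 1) (hεident k) hφ
    obtain ⟨hiff2, heq2⟩ := ident_aux (hεmeas k) (hεmeas 1) (hεident k) (hφ.pow_const 2)
    have hZint : Integrable (fun ω => Ψ (S t θstar + ε k ω) t) P :=
      hiff1.mpr (hEspInt t ht θstar hθstar)
    have hZmean : ∫ ω, Ψ (S t θstar + ε k ω) t ∂P = g t θstar := by
      rw [heq1]; exact hEsp t ht θstar hθstar
    have hZ2int : Integrable (fun ω => (Ψ (S t θstar + ε k ω) t)^2) P :=
      hiff2.mpr (hC1a t ht)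
    have hZ2val : ∫ ω, (Ψ (S t θstar + ε k ω) t)^2 ∂P
        = ∫ ω, (Ψ (S t θstar + ε 1 ω) t)^2 ∂P := heq2
    have hYint : Integrable (Y t k) P := by
      simp only [hYdef]
      exact hZint.sub (integrable_const _)
    have hYmean : ∫ ω, Y t k ω ∂P = 0 := by
      simp only [hYdef]
      rw [integral_sub hZint (integrable_const _), hZmean, integral_const, probReal_univ]
      simp
    have hsq : (fun ω => (Y t k ω)^2) = fun ω => (Ψ (S t θstar + ε k ω) t)^2
        - (2 * g t θstar) * (Ψ (S t θstar + ε k ω) t) + (g t θstar)^2 := by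
      funext ω; simp only [hYdef]; ring
    have hY2int : Integrable (fun ω => (Y t k ω)^2) P := by
      rw [hsq]
      exact (hZ2int.sub (hZint.const_mul _)).add (integrable_const _)
    refine ⟨hYint, hYmean, hY2int, ?_⟩
    have hmulint : Integrable (fun ω => (2 * g t θstar) * Ψ (S t θstar + ε k ω) t) P :=
      hZint.const_mul _
    have hsubint : Integrable (fun ω => (Ψ (S t θstar + ε k ω) t)^2
        - (2 * g t θstar) * Ψ (S t θstar + ε k ω) t) P := hZ2int.sub hmulint
    rw [hsq, integral_add hsubint (integrable_const _),
      integral_sub hZ2int hmulint, integral_const_mul, hZmean, hZ2val,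
      integral_const, probReal_univ]
    simp only [ENNReal.toReal_one, smul_eq_mul, one_mul]
    have hψ : ∫ ω, (Ψ (S t θstar + ε 1 ω) t)^2 ∂P ≤ B2 := by
      have := hB2 t ht; rw [Real.norm_eq_abs] at this
      exact le_trans (le_abs_self _) this
    nlinarith [sq_nonneg (g t θstar)]
  have hYmeas : ∀ t k, Measurable (Y t k) := by
    intro t k
    simp only [hYdef]
    exact (hΨmeas.comp (((hεmeas k).const_add (S t θstar)).prodMk measurable_const)).sub
      measurable_const
  -- independence
  have hYYind : ∀ (t t' : ℝ) (k l : ℕ), k ≠ l → IndepFun (Y t k) (Y t' l) P := by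
    intro t t' k l hkl
    have hφ : ∀ τ : ℝ, Measurable (fun x : EuclideanSpace ℝ (Fin d) =>
        Ψ (S τ θstar + x) τ - g τ θstar) := fun τ =>
      (hΨmeas.comp ((measurable_id.const_add (S τ θstar)).prodMk measurable_const)).sub
        measurable_const
    exact (hεindep.indepFun hkl).comp (hφ t) (hφ t')
  have hYVind : ∀ (t : ℝ) (k l : ℕ), IndepFun (Y t k) (V l) P := by
    intro t k l
    have hF : Measurable (fun w : ℕ → EuclideanSpace ℝ (Fin d) =>
        Ψ (S t θstar + w k) t - g t θstar) :=
      Measurable.sub (hΨmeas.comp (f := fun w : ℕ → EuclideanSpace ℝ (Fin d) => (S t θstar + w k, t))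
        (((measurable_pi_apply (X := fun _ : ℕ => EuclideanSpace ℝ (Fin d)) k).const_add (S t θstar)).prodMk measurable_const)) measurable_const
    have hG : Measurable (fun v : ℕ → ℝ => v l) := measurable_pi_apply l
    exact hindepεV.comp hF hG
  have hVVind : ∀ (k l : ℕ), k ≠ l → IndepFun (V k) (V l) P := fun k l hkl =>
    hVindep.indepFun hkl
  -- facts about W n k
  have hWint : ∀ n : ℕ, ∀ k ∈ Finset.Icc 1 n, Integrable (W n k) P ∧ (∫ ω, W n k ω ∂P = 0) := by
    intro n k hk
    have ht := htmem n k hk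
    obtain ⟨hY1, hY2, _, _⟩ := hYk _ ht k
    obtain ⟨hV1, hV2, _, _⟩ := hVk k
    constructor
    · exact hY1.add hV1
    · simp only [hWdef]
      rw [integral_add hY1 hV1, hY2, hV2, add_zero]
  have hWmul : ∀ n : ℕ, ∀ k ∈ Finset.Icc 1 n, ∀ l ∈ Finset.Icc 1 n,
      Integrable (fun ω => W n k ω * W n l ω) P := by
    intro n k hk l hl
    have htk := htmem n k hk
    have htl := htmem n l hl
    obtain ⟨hYk1, _, hYk3, _⟩ := hYk _ htk k
    obtain ⟨hYl1, _, hYl3, _⟩ := hYk _ htl l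
    obtain ⟨hVk1, _, hVk3, _⟩ := hVk k
    obtain ⟨hVl1, _, hVl3, _⟩ := hVk l
    have hYV1 : Integrable (fun ω => Y ((k:ℝ)/(n:ℝ)) k ω * V l ω) P :=
      (hYVind _ k l).integrable_mul hYk1 hVl1
    have hYV2 : Integrable (fun ω => V k ω * Y ((l:ℝ)/(n:ℝ)) l ω) P := by
      have := ((hYVind _ l k).symm).integrable_mul hVk1 hYl1
      exact this
    rcases eq_or_ne k l with rfl | hkl
    · have hexp : (fun ω => W n k ω * W n k ω) = fun ω =>
          (Y ((k:ℝ)/(n:ℝ)) k ω)^2 + 2 * (Y ((k:ℝ)/(n:ℝ)) k ω * V k ω) + (V k ω)^2 := by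
        funext ω; simp only [hWdef]; ring
      rw [hexp]
      exact (hYk3.add (((hYVind _ k k).integrable_mul hYk1 hVk1).const_mul 2)).add hVk3
    · have hYY : Integrable (fun ω => Y ((k:ℝ)/(n:ℝ)) k ω * Y ((l:ℝ)/(n:ℝ)) l ω) P :=
        (hYYind _ _ k l hkl).integrable_mul hYk1 hYl1
      have hVV : Integrable (fun ω => V k ω * V l ω) P :=
        (hVVind k l hkl).integrable_mul hVk1 hVl1
      have hexp : (fun ω => W n k ω * W n l ω) = fun ω =>
          Y ((k:ℝ)/(n:ℝ)) k ω * Y ((l:ℝ)/(n:ℝ)) l ω + Y ((k:ℝ)/(n:ℝ)) k ω * V l ω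
          + V k ω * Y ((l:ℝ)/(n:ℝ)) l ω + V k ω * V l ω := by
        funext ω; simp only [hWdef]; ring
      rw [hexp]
      exact ((hYY.add hYV1).add hYV2).add hVV
  have hWoff : ∀ n : ℕ, ∀ k ∈ Finset.Icc 1 n, ∀ l ∈ Finset.Icc 1 n, k ≠ l →
      ∫ ω, W n k ω * W n l ω ∂P = 0 := by
    intro n k hk l hl hkl
    have htk := htmem n k hk
    have htl := htmem n l hl
    obtain ⟨hYk1, hYk2, hYk3, _⟩ := hYk _ htk k
    obtain ⟨hYl1, hYl2, hYl3, _⟩ := hYk _ htl l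
    obtain ⟨hVk1, hVk2, hVk3, _⟩ := hVk k
    obtain ⟨hVl1, hVl2, hVl3, _⟩ := hVk l
    have hYY : Integrable (fun ω => Y ((k:ℝ)/(n:ℝ)) k ω * Y ((l:ℝ)/(n:ℝ)) l ω) P :=
      (hYYind _ _ k l hkl).integrable_mul hYk1 hYl1
    have hYV1 : Integrable (fun ω => Y ((k:ℝ)/(n:ℝ)) k ω * V l ω) P :=
      (hYVind _ k l).integrable_mul hYk1 hVl1
    have hYV2 : Integrable (fun ω => V k ω * Y ((l:ℝ)/(n:ℝ)) l ω) P :=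
      ((hYVind _ l k).symm).integrable_mul hVk1 hYl1
    have hVV : Integrable (fun ω => V k ω * V l ω) P :=
      (hVVind k l hkl).integrable_mul hVk1 hVl1
    have hexp : (fun ω => W n k ω * W n l ω) = fun ω =>
        Y ((k:ℝ)/(n:ℝ)) k ω * Y ((l:ℝ)/(n:ℝ)) l ω + Y ((k:ℝ)/(n:ℝ)) k ω * V l ω
        + V k ω * Y ((l:ℝ)/(n:ℝ)) l ω + V k ω * V l ω := by
      funext ω; simp only [hWdef]; ring
    have e1 : ∫ ω, Y ((k:ℝ)/(n:ℝ)) k ω * Y ((l:ℝ)/(n:ℝ)) l ω ∂P = 0 := by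
      rw [(hYYind _ _ k l hkl).integral_fun_mul_eq_mul_integral (hYmeas _ _).aestronglyMeasurable (hYmeas _ _).aestronglyMeasurable, hYk2, zero_mul]
    have e2 : ∫ ω, Y ((k:ℝ)/(n:ℝ)) k ω * V l ω ∂P = 0 := by
      rw [(hYVind _ k l).integral_fun_mul_eq_mul_integral (hYmeas _ _).aestronglyMeasurable (hVmeas _).aestronglyMeasurable, hYk2, zero_mul]
    have e3 : ∫ ω, V k ω * Y ((l:ℝ)/(n:ℝ)) l ω ∂P = 0 := by
      rw [((hYVind _ l k).symm).integral_fun_mul_eq_mul_integral (hVmeas _).aestronglyMeasurable (hYmeas _ _).aestronglyMeasurable, hVk2, zero_mul]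
    have e4 : ∫ ω, V k ω * V l ω ∂P = 0 := by
      rw [(hVVind k l hkl).integral_fun_mul_eq_mul_integral (hVmeas _).aestronglyMeasurable (hVmeas _).aestronglyMeasurable, hVk2, zero_mul]
    have hi1 : Integrable (fun ω => Y ((k:ℝ)/(n:ℝ)) k ω * Y ((l:ℝ)/(n:ℝ)) l ω
        + Y ((k:ℝ)/(n:ℝ)) k ω * V l ω) P := hYY.add hYV1
    have hi2 : Integrable (fun ω => Y ((k:ℝ)/(n:ℝ)) k ω * Y ((l:ℝ)/(n:ℝ)) l ω
        + Y ((k:ℝ)/(n:ℝ)) k ω * V l ω + V k ω * Y ((l:ℝ)/(n:ℝ)) l ω) P := hi1.add hYV2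
    rw [show (∫ ω, W n k ω * W n l ω ∂P) = ∫ ω, (Y ((k:ℝ)/(n:ℝ)) k ω * Y ((l:ℝ)/(n:ℝ)) l ω
        + Y ((k:ℝ)/(n:ℝ)) k ω * V l ω + V k ω * Y ((l:ℝ)/(n:ℝ)) l ω + V k ω * V l ω) ∂P
      from by rw [← hexp]]
    rw [integral_add hi2 hVV, integral_add hi1 hYV2, integral_add hYY hYV1, e1, e2, e3, e4]
    norm_num
  have hWsq : ∀ n : ℕ, ∀ k ∈ Finset.Icc 1 n,
      Integrable (fun ω => (W n k ω)^2) P ∧ (∫ ω, (W n k ω)^2 ∂P ≤ B0) ∧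
      (0 ≤ ∫ ω, (W n k ω)^2 ∂P) := by
    intro n k hk
    have htk := htmem n k hk
    obtain ⟨hYk1, hYk2, hYk3, hYk4⟩ := hYk _ htk k
    obtain ⟨hVk1, hVk2, hVk3, hVk4⟩ := hVk k
    have hYV : Integrable (fun ω => Y ((k:ℝ)/(n:ℝ)) k ω * V k ω) P :=
      (hYVind _ k k).integrable_mul hYk1 hVk1
    have hexp : (fun ω => (W n k ω)^2) = fun ω =>
        (Y ((k:ℝ)/(n:ℝ)) k ω)^2 + 2 * (Y ((k:ℝ)/(n:ℝ)) k ω * V k ω) + (V k ω)^2 := by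
      funext ω; simp only [hWdef]; ring
    have hint : Integrable (fun ω => (W n k ω)^2) P := by
      rw [hexp]; exact (hYk3.add (hYV.const_mul 2)).add hVk3
    have eYV : ∫ ω, Y ((k:ℝ)/(n:ℝ)) k ω * V k ω ∂P = 0 := by
      rw [(hYVind _ k k).integral_fun_mul_eq_mul_integral (hYmeas _ _).aestronglyMeasurable (hVmeas _).aestronglyMeasurable, hYk2, zero_mul]
    have hi0 : Integrable (fun ω => 2 * (Y ((k:ℝ)/(n:ℝ)) k ω * V k ω)) P := hYV.const_mul 2
    have hi1 : Integrable (fun ω => (Y ((k:ℝ)/(n:ℝ)) k ω)^2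
        + 2 * (Y ((k:ℝ)/(n:ℝ)) k ω * V k ω)) P := hYk3.add hi0
    have hval : ∫ ω, (W n k ω)^2 ∂P = (∫ ω, (Y ((k:ℝ)/(n:ℝ)) k ω)^2 ∂P) + σ2 := by
      rw [hexp, integral_add hi1 hVk3, integral_add hYk3 hi0,
        integral_const_mul, eYV, hVk4]
      ring
    refine ⟨hint, ?_, integral_nonneg (fun ω => sq_nonneg _)⟩
    rw [hval, hB0def]
    linarith
  have hWabs : ∀ n : ℕ, ∀ k ∈ Finset.Icc 1 n,
      Integrable (fun ω => |W n k ω|) P ∧ (∫ ω, |W n k ω| ∂P ≤ B1) := by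
    intro n k hk
    have h1 := (hWint n k hk).1.abs
    obtain ⟨h2, h3, _⟩ := hWsq n k hk
    refine ⟨h1, ?_⟩
    have hmono : ∫ ω, |W n k ω| ∂P ≤ ∫ ω, ((W n k ω)^2 + 1)/2 ∂P := by
      apply integral_mono h1 ((h2.add (integrable_const 1)).div_const 2)
      have key : ∀ w : ℝ, |w| ≤ (w^2+1)/2 := by
        intro w
        have hnn := sq_nonneg (|w| - 1)
        have habs : |w|^2 = w^2 := sq_abs _
        have hexp2 : (|w| - 1)^2 = |w|^2 - 2*|w| + 1 := by ring
        rw [hexp2, habs] at hnn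
        linarith
      intro ω
      exact key (W n k ω)
    have heq : ∫ ω, ((W n k ω)^2 + 1)/2 ∂P = ((∫ ω, (W n k ω)^2 ∂P) + 1)/2 := by
      rw [integral_div, integral_add h2 (integrable_const 1), integral_const, probReal_univ]
      norm_num
    rw [hB1def]
    rw [heq] at hmono
    linarith
  -- decomposition of the criterion
  have hdecomp : ∀ n : ℕ, ∀ ω, ∀ θ, Mn n ω θ = Mn n ω θstar
      + (n:ℝ)⁻¹ * (2 * ∑ k ∈ Finset.Icc 1 n, (g ((k:ℝ)/(n:ℝ)) θstar - g ((k:ℝ)/(n:ℝ)) θ) * W n k ω)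
      + (n:ℝ)⁻¹ * ∑ k ∈ Finset.Icc 1 n, u ((k:ℝ)/(n:ℝ)) θ := by
    intro n ω θ
    rw [hMn n ω θ, hMn n ω θstar, ← mul_add, ← mul_add]
    congr 1
    rw [Finset.mul_sum, ← Finset.sum_add_distrib, ← Finset.sum_add_distrib]
    refine Finset.sum_congr rfl fun k hk => ?_
    simp only [hWdef, hYdef, hudef, hgdef]
    ring
  have hunn : ∀ (t : ℝ) (θ0 : EuclideanSpace ℝ (Fin m)), 0 ≤ u t θ0 := by
    intro t θ0; simp only [hudef]; exact sq_nonneg _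
  clear_value g u Y W C B0 B1
  -- start of the convergence proof
  rw [tendstoInMeasure_iff_dist]
  intro r hr
  by_cases hAne : (Θ ∩ {θ | r ≤ dist θ θstar}).Nonempty
  swap
  · have hempty : ∀ n : ℕ, {ω | r ≤ dist (θbar n ω) θstar} = ∅ := by
      intro n
      rw [Set.eq_empty_iff_forall_notMem]
      intro ω hω
      exact hAne ⟨θbar n ω, hθbarmem n ω, hω⟩
    simp only [hempty, measure_empty]
    exact tendsto_const_nhds
  have hAcomp : IsCompact (Θ ∩ {θ | r ≤ dist θ θstar}) :=
    hΘ.inter_right (isClosed_le continuous_const (continuous_id.dist continuous_const))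
  have hAsub : (Θ ∩ {θ | r ≤ dist θ θstar}) ⊆ Θ := Set.inter_subset_left
  have hposA : ∀ θ ∈ (Θ ∩ {θ | r ≤ dist θ θstar}), ∃ t ∈ Set.Icc (0:ℝ) 1, 0 < u t θ := by
    intro θ hθA
    have hθΘ : θ ∈ Θ := hθA.1
    have hne : θ ≠ θstar := by
      intro h
      have hd : r ≤ dist θ θstar := hθA.2
      rw [h, dist_self] at hd
      linarith
    by_contra hcon
    push_neg at hcon
    apply hne
    apply hObs θ hθΘ
    intro t ht
    have h1 := hcon t ht
    have h2 : u t θ = 0 := le_antisymm h1 (hunn t θ)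
    have h3 : g t θstar - g t θ = 0 := by
      have := sq_eq_zero_iff.mp (by simpa only [hudef] using h2)
      exact this
    have h4 : g t θ = g t θstar := by linarith
    simpa only [hgdef] using h4
  obtain ⟨c, hc, hcK⟩ := Kmin_aux hΘ u hucont hunn hAcomp hAsub hAne hposA
  obtain ⟨N₁, hN₁1, hN₁⟩ := riemann_aux hΘ u hucont (show (0:ℝ) < c/2 by linarith)
  rw [ENNReal.tendsto_atTop_zero]
  intro ε' hε'
  obtain ⟨e, he0, hee⟩ : ∃ e : ℝ, 0 < e ∧ ENNReal.ofReal e ≤ ε' := by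
    by_cases hT : ε' = ⊤
    · exact ⟨1, one_pos, by simp [hT]⟩
    · exact ⟨ε'.toReal, ENNReal.toReal_pos hε'.ne' hT, by rw [ENNReal.ofReal_toReal hT]⟩
  set ρ : ℝ := c * e / (32 * (B1 + 1)) with hρdef
  have hρ0 : 0 < ρ := by
    rw [hρdef]
    apply div_pos (mul_pos hc he0) (by linarith)
  clear_value ρ
  -- uniform continuity of g in θ at scale ρ
  obtain ⟨δ, hδ0, hδ⟩ : ∃ δ, 0 < δ ∧ ∀ t ∈ Set.Icc (0:ℝ) 1, ∀ θ ∈ Θ, ∀ θ' ∈ Θ,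
      dist θ θ' < δ → |g t θ - g t θ'| ≤ ρ := by
    have huc := (isCompact_Icc.prod hΘ).uniformContinuousOn_of_continuous hgcont
    rw [Metric.uniformContinuousOn_iff] at huc
    obtain ⟨δ, hδ0, hδ'⟩ := huc ρ hρ0
    refine ⟨δ, hδ0, fun t ht θ hθ θ' hθ' hd => ?_⟩
    have hdist : dist ((t, θ) : ℝ × EuclideanSpace ℝ (Fin m)) ((t, θ') : ℝ × EuclideanSpace ℝ (Fin m)) < δ := by
      rw [Prod.dist_eq]
      simp only [dist_self]
      exact max_lt (by linarith) hd
    have := hδ' (t, θ) ⟨ht, hθ⟩ (t, θ') ⟨ht, hθ'⟩ hdist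
    rw [Real.dist_eq] at this
    exact this.le
  -- finite net
  obtain ⟨s, hsΘ, hscover⟩ := hΘ.elim_nhds_subcover (fun θ' => Metric.ball θ' δ)
    (fun θ' _ => Metric.ball_mem_nhds θ' hδ0)
  -- second-moment bound for the weighted sums
  have hBsum : ∀ n : ℕ, 1 ≤ n → ∀ θ' ∈ Θ,
      Integrable (fun ω => ((n:ℝ)⁻¹ * ∑ k ∈ Finset.Icc 1 n,
        (g ((k:ℝ)/(n:ℝ)) θstar - g ((k:ℝ)/(n:ℝ)) θ') * W n k ω)^2) P ∧
      ∫ ω, ((n:ℝ)⁻¹ * ∑ k ∈ Finset.Icc 1 n,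
        (g ((k:ℝ)/(n:ℝ)) θstar - g ((k:ℝ)/(n:ℝ)) θ') * W n k ω)^2 ∂P ≤ C^2 * B0 / n := by
    intro n hn θ' hθ'
    have hnpos : (0:ℝ) < n := by exact_mod_cast hn
    obtain ⟨hi, heq⟩ := sum_sq_aux P (Finset.Icc 1 n) (fun k => W n k)
      (fun k => g ((k:ℝ)/(n:ℝ)) θstar - g ((k:ℝ)/(n:ℝ)) θ')
      (fun k hk l hl => hWmul n k hk l hl) (fun k hk l hl hkl => hWoff n k hk l hl hkl)
    have hrw : (fun ω => ((n:ℝ)⁻¹ * ∑ k ∈ Finset.Icc 1 n,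
        (g ((k:ℝ)/(n:ℝ)) θstar - g ((k:ℝ)/(n:ℝ)) θ') * W n k ω)^2)
        = fun ω => ((n:ℝ)⁻¹)^2 * (∑ k ∈ Finset.Icc 1 n,
        (g ((k:ℝ)/(n:ℝ)) θstar - g ((k:ℝ)/(n:ℝ)) θ') * W n k ω)^2 := by
      funext ω; ring
    constructor
    · rw [hrw]; exact hi.const_mul _
    · rw [hrw, integral_const_mul, heq]
      have hterm : ∀ k ∈ Finset.Icc 1 n,
          (g ((k:ℝ)/(n:ℝ)) θstar - g ((k:ℝ)/(n:ℝ)) θ')^2 * ∫ ω, (W n k ω)^2 ∂P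
          ≤ C^2 * B0 := by
        intro k hk
        obtain ⟨_, hb, hnn⟩ := hWsq n k hk
        have habs := hCbound _ (htmem n k hk) θ' hθ'
        have hsq : (g ((k:ℝ)/(n:ℝ)) θstar - g ((k:ℝ)/(n:ℝ)) θ')^2 ≤ C^2 := by
          rw [← sq_abs]
          exact pow_le_pow_left₀ (abs_nonneg _) habs 2
        exact mul_le_mul hsq hb hnn (sq_nonneg C)
      have hsumle : ∑ k ∈ Finset.Icc 1 n,
          (g ((k:ℝ)/(n:ℝ)) θstar - g ((k:ℝ)/(n:ℝ)) θ')^2 * ∫ ω, (W n k ω)^2 ∂P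
          ≤ (n : ℝ) * (C^2 * B0) := by
        refine le_trans (Finset.sum_le_sum hterm) ?_
        rw [Finset.sum_const, Nat.card_Icc, Nat.add_sub_cancel, nsmul_eq_mul]
      calc ((n:ℝ)⁻¹)^2 * ∑ k ∈ Finset.Icc 1 n,
            (g ((k:ℝ)/(n:ℝ)) θstar - g ((k:ℝ)/(n:ℝ)) θ')^2 * ∫ ω, (W n k ω)^2 ∂P
          ≤ ((n:ℝ)⁻¹)^2 * ((n:ℝ) * (C^2 * B0)) :=
            mul_le_mul_of_nonneg_left hsumle (by positivity)
        _ = C^2 * B0 / n := by field_simp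
  -- Markov bound quantity
  have hTbound : ∀ n : ℕ, 1 ≤ n →
      Integrable (fun ω => (n:ℝ)⁻¹ * ∑ k ∈ Finset.Icc 1 n, |W n k ω|) P ∧
      ∫ ω, ((n:ℝ)⁻¹ * ∑ k ∈ Finset.Icc 1 n, |W n k ω|) ∂P ≤ B1 := by
    intro n hn
    have hnpos : (0:ℝ) < n := by exact_mod_cast hn
    have hints : ∀ k ∈ Finset.Icc 1 n, Integrable (fun ω => |W n k ω|) P :=
      fun k hk => (hWabs n k hk).1
    have hsumint : Integrable (fun ω => ∑ k ∈ Finset.Icc 1 n, |W n k ω|) P :=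
      integrable_finset_sum _ hints
    constructor
    · exact hsumint.const_mul _
    · rw [integral_const_mul, integral_finset_sum _ hints]
      have hsumle : ∑ k ∈ Finset.Icc 1 n, ∫ ω, |W n k ω| ∂P ≤ (n:ℝ) * B1 := by
        refine le_trans (Finset.sum_le_sum (fun k hk => (hWabs n k hk).2)) ?_
        rw [Finset.sum_const, Nat.card_Icc, Nat.add_sub_cancel, nsmul_eq_mul]
      calc (n:ℝ)⁻¹ * ∑ k ∈ Finset.Icc 1 n, ∫ ω, |W n k ω| ∂P
          ≤ (n:ℝ)⁻¹ * ((n:ℝ) * B1) := mul_le_mul_of_nonneg_left hsumle (by positivity)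
        _ = B1 := by field_simp
  -- choose N₂
  set D : ℝ := (s.card : ℝ) * (64 * C^2 * B0 / c^2) with hDdef
  have hD0 : 0 ≤ D := by
    rw [hDdef]
    apply mul_nonneg (Nat.cast_nonneg _) (div_nonneg (by positivity) (sq_nonneg c))
  clear_value D
  set N₂ : ℕ := Nat.ceil (2 * D / e) + 1 with hN₂def
  refine ⟨max (max N₁ N₂) 1, fun n hn => ?_⟩
  have hnN₁ : N₁ ≤ n := le_trans (le_trans (le_max_left _ _) (le_max_left _ _)) hn
  have hnN₂ : N₂ ≤ n := le_trans (le_trans (le_max_right _ _) (le_max_left _ _)) hn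
  have hn1 : 1 ≤ n := le_trans (le_max_right _ _) hn
  have hnpos : (0:ℝ) < n := by exact_mod_cast hn1
  -- the inclusion of events
  have hincl : {ω | r ≤ dist (θbar n ω) θstar} ⊆
      (⋃ θ' ∈ s, {ω | c/8 ≤ |(n:ℝ)⁻¹ * ∑ k ∈ Finset.Icc 1 n,
        (g ((k:ℝ)/(n:ℝ)) θstar - g ((k:ℝ)/(n:ℝ)) θ') * W n k ω|}) ∪
      {ω | c/(8*ρ) ≤ (n:ℝ)⁻¹ * ∑ k ∈ Finset.Icc 1 n, |W n k ω|} := by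
    intro ω hω
    have hii : (0:ℝ) ≤ (n:ℝ)⁻¹ := by positivity
    have hθbΘ : θbar n ω ∈ Θ := hθbarmem n ω
    have hθbA : θbar n ω ∈ Θ ∩ {θ | r ≤ dist θ θstar} := ⟨hθbΘ, hω⟩
    have hKb : c ≤ ∫ t in (0:ℝ)..1, u t (θbar n ω) := hcK _ hθbA
    have hRie := hN₁ n hnN₁ (θbar n ω) hθbΘ
    rw [abs_le] at hRie
    have hKn : c/2 ≤ (n:ℝ)⁻¹ * ∑ k ∈ Finset.Icc 1 n, u ((k:ℝ)/(n:ℝ)) (θbar n ω) := by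
      linarith [hRie.1]
    have hminb := hθbarmin n ω θstar hθstar
    rw [hdecomp n ω (θbar n ω)] at hminb
    set bbb : ℝ := ∑ k ∈ Finset.Icc 1 n,
      (g ((k:ℝ)/(n:ℝ)) θstar - g ((k:ℝ)/(n:ℝ)) (θbar n ω)) * W n k ω with hbbb
    clear_value bbb
    have hKle : (n:ℝ)⁻¹ * ∑ k ∈ Finset.Icc 1 n, u ((k:ℝ)/(n:ℝ)) (θbar n ω)
        ≤ -((n:ℝ)⁻¹ * (2 * bbb)) := by linarith
    obtain ⟨θ', hθ's, hball⟩ : ∃ θ' ∈ s, θbar n ω ∈ Metric.ball θ' δ := by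
      have := hscover hθbΘ
      simpa using this
    have hθ'Θ : θ' ∈ Θ := hsΘ θ' hθ's
    have hdb : dist θ' (θbar n ω) < δ := by
      rw [Metric.mem_ball] at hball
      rw [dist_comm]
      exact hball
    set bb' : ℝ := ∑ k ∈ Finset.Icc 1 n,
      (g ((k:ℝ)/(n:ℝ)) θstar - g ((k:ℝ)/(n:ℝ)) θ') * W n k ω with hbb'
    clear_value bb'
    set ww : ℝ := ∑ k ∈ Finset.Icc 1 n, |W n k ω| with hww
    clear_value ww
    have hdiff : |bbb - bb'| ≤ ρ * ww := by
      rw [hbbb, hbb', ← Finset.sum_sub_distrib]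
      have hterm : ∀ k ∈ Finset.Icc 1 n,
          |(g ((k:ℝ)/(n:ℝ)) θstar - g ((k:ℝ)/(n:ℝ)) (θbar n ω)) * W n k ω
            - (g ((k:ℝ)/(n:ℝ)) θstar - g ((k:ℝ)/(n:ℝ)) θ') * W n k ω|
          ≤ ρ * |W n k ω| := by
        intro k hk
        have hgd := hδ _ (htmem n k hk) θ' hθ'Θ (θbar n ω) hθbΘ hdb
        have hfact : (g ((k:ℝ)/(n:ℝ)) θstar - g ((k:ℝ)/(n:ℝ)) (θbar n ω)) * W n k ω
            - (g ((k:ℝ)/(n:ℝ)) θstar - g ((k:ℝ)/(n:ℝ)) θ') * W n k ω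
            = (g ((k:ℝ)/(n:ℝ)) θ' - g ((k:ℝ)/(n:ℝ)) (θbar n ω)) * W n k ω := by ring
        rw [hfact, abs_mul]
        exact mul_le_mul_of_nonneg_right hgd (abs_nonneg _)
      refine le_trans (Finset.abs_sum_le_sum_abs _ _) ?_
      rw [hww, Finset.mul_sum]
      exact Finset.sum_le_sum hterm
    have htri : |bbb| ≤ |bb'| + (ρ * ww) := by
      have h := abs_sub_abs_le_abs_sub bbb bb'
      linarith
    have h5 : c/2 ≤ (n:ℝ)⁻¹ * (2 * (-bbb)) := by
      have e1 : (n:ℝ)⁻¹ * (2 * (-bbb)) = -((n:ℝ)⁻¹ * (2 * bbb)) := by ring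
      linarith [e1]
    have h6 : (n:ℝ)⁻¹ * (2 * (-bbb)) ≤ (n:ℝ)⁻¹ * (2 * (|bb'| + ρ * ww)) := by
      apply mul_le_mul_of_nonneg_left _ hii
      have := neg_abs_le bbb
      linarith
    have h7 : c/2 ≤ 2 * ((n:ℝ)⁻¹ * |bb'|) + 2 * ρ * ((n:ℝ)⁻¹ * ww) := by
      have e2 : (n:ℝ)⁻¹ * (2 * (|bb'| + ρ * ww))
          = 2 * ((n:ℝ)⁻¹ * |bb'|) + 2 * ρ * ((n:ℝ)⁻¹ * ww) := by ring
      linarith [le_trans h5 h6, e2]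
    by_cases hx : c/8 ≤ (n:ℝ)⁻¹ * |bb'|
    · left
      rw [Set.mem_iUnion₂]
      refine ⟨θ', hθ's, ?_⟩
      rw [Set.mem_setOf_eq, abs_mul, abs_of_nonneg hii, ← hbb']
      exact hx
    · right
      rw [Set.mem_setOf_eq, ← hww]
      push_neg at hx
      have h8 : c/4 ≤ 2 * ρ * ((n:ℝ)⁻¹ * ww) := by linarith
      rw [div_le_iff₀ (by linarith : (0:ℝ) < 8 * ρ)]
      linarith [h8]
  refine le_trans (measure_mono hincl) ?_
  refine le_trans (measure_union_le _ _) ?_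
  have hpart1 : P (⋃ θ' ∈ s, {ω | c/8 ≤ |(n:ℝ)⁻¹ * ∑ k ∈ Finset.Icc 1 n,
      (g ((k:ℝ)/(n:ℝ)) θstar - g ((k:ℝ)/(n:ℝ)) θ') * W n k ω|}) ≤ ENNReal.ofReal (e/2) := by
    refine le_trans (measure_biUnion_finset_le s _) ?_
    have hc8 : (0:ℝ) < c/8 := by linarith
    have hbound : ∀ θ' ∈ s, P {ω | c/8 ≤ |(n:ℝ)⁻¹ * ∑ k ∈ Finset.Icc 1 n,
        (g ((k:ℝ)/(n:ℝ)) θstar - g ((k:ℝ)/(n:ℝ)) θ') * W n k ω|}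
        ≤ ENNReal.ofReal (64*C^2*B0/(c^2*(n:ℝ))) := by
      intro θ' hθ's
      obtain ⟨hi, hb⟩ := hBsum n hn1 θ' (hsΘ θ' hθ's)
      refine le_trans (cheb_aux P hi hc8) ?_
      apply ENNReal.ofReal_le_ofReal
      have h1 : (∫ ω, ((n:ℝ)⁻¹ * ∑ k ∈ Finset.Icc 1 n,
          (g ((k:ℝ)/(n:ℝ)) θstar - g ((k:ℝ)/(n:ℝ)) θ') * W n k ω)^2 ∂P) / (c/8)^2
          ≤ (C^2 * B0 / (n:ℝ)) / (c/8)^2 :=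
        div_le_div_of_nonneg_right hb (sq_nonneg _)
      refine le_trans h1 ?_
      rw [show (C^2 * B0 / (n:ℝ)) / (c/8)^2 = 64*C^2*B0/(c^2*(n:ℝ)) from by
        field_simp; ring]
    refine le_trans (Finset.sum_le_sum hbound) ?_
    rw [Finset.sum_const, nsmul_eq_mul, ← ENNReal.ofReal_natCast,
      ← ENNReal.ofReal_mul (Nat.cast_nonneg _)]
    apply ENNReal.ofReal_le_ofReal
    have heqD : (s.card : ℝ) * (64*C^2*B0/(c^2*(n:ℝ))) = D / (n:ℝ) := by
      rw [hDdef]; ring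
    rw [heqD]
    have h2D : 2*D/e ≤ (n:ℝ) := by
      calc 2*D/e ≤ (Nat.ceil (2*D/e) : ℝ) := Nat.le_ceil _
        _ ≤ (N₂ : ℝ) := by rw [hN₂def]; exact_mod_cast Nat.le_succ _
        _ ≤ (n : ℝ) := by exact_mod_cast hnN₂
    rw [div_le_iff₀ hnpos]
    have h3 := mul_le_mul_of_nonneg_left h2D (le_of_lt (half_pos he0))
    have h4 : (e/2) * (2*D/e) = D := by field_simp
    linarith
  have hpart2 : P {ω | c/(8*ρ) ≤ (n:ℝ)⁻¹ * ∑ k ∈ Finset.Icc 1 n, |W n k ω|}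
      ≤ ENNReal.ofReal (e/2) := by
    obtain ⟨hTi, hTb⟩ := hTbound n hn1
    have hT0 : ∀ ω, 0 ≤ (n:ℝ)⁻¹ * ∑ k ∈ Finset.Icc 1 n, |W n k ω| := fun ω =>
      mul_nonneg (by positivity) (Finset.sum_nonneg fun k _ => abs_nonneg _)
    have hapos : (0:ℝ) < c/(8*ρ) := div_pos hc (by linarith)
    refine le_trans (markov_aux P hT0 hTi hapos) ?_
    apply ENNReal.ofReal_le_ofReal
    have h1 : (∫ ω, ((n:ℝ)⁻¹ * ∑ k ∈ Finset.Icc 1 n, |W n k ω|) ∂P) / (c/(8*ρ))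
        ≤ B1 / (c/(8*ρ)) := div_le_div_of_nonneg_right hTb (by linarith)
    refine le_trans h1 ?_
    have h2 : B1 / (c/(8*ρ)) = e * B1 / (4*(B1+1)) := by
      rw [hρdef]
      field_simp
      ring
    rw [h2, div_le_div_iff₀ (by linarith) (by norm_num : (0:ℝ) < 2)]
    nlinarith [mul_pos he0 hB10]
  calc P (⋃ θ' ∈ s, {ω | c/8 ≤ |(n:ℝ)⁻¹ * ∑ k ∈ Finset.Icc 1 n,
        (g ((k:ℝ)/(n:ℝ)) θstar - g ((k:ℝ)/(n:ℝ)) θ') * W n k ω|})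
      + P {ω | c/(8*ρ) ≤ (n:ℝ)⁻¹ * ∑ k ∈ Finset.Icc 1 n, |W n k ω|}
      ≤ ENNReal.ofReal (e/2) + ENNReal.ofReal (e/2) := add_le_add hpart1 hpart2
    _ = ENNReal.ofReal e := by
      rw [← ENNReal.ofReal_add (by linarith : (0:ℝ) ≤ e/2) (by linarith : (0:ℝ) ≤ e/2),
        add_halves]
    _ ≤ ε' := hee
end

section
/- Consider the linear trajectory model S_θ(t) = (∑_{k=1}^p a_k e_k(t), ∑_{k=1}^p b_k e_k(t)) with parameter θ = (a₁,…,a_p,b₁,…,b_p)^T, and the bearing function Ψ(x,t) = arctan[(x₂ − O₂(t))/(x₁ − O₁(t))]. Assume θ* lies in the interior of Θ ⊆ ℝ^{2p} and that S_θ(t)₁ − O₁(t) > 0 for all θ ∈ Θ and t ∈ [0,1]. Then the following are equivalent: (i) the observability assumption (Obs) holds at θ* (i.e. Ψ(S_θ(t),t) = Ψ(S_{θ*}(t),t) for all t ∈ [0,1] implies θ = θ* for θ ∈ Θ); (ii) the matrix I_R(θ*) = ∫₀¹ ∇_θΨ(S_{θ*}(t),t) ∇_θΨ(S_{θ*}(t),t)^T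 dt is nonsingular; (iii) the 2p functions e₁,…,e_p, e₁·m(θ*,·),…,e_p·m(θ*,·) are linearly independent in the space of continuous functions on [0,1], where m(θ*,t) = (S_{θ*}(t)₂ − O₂(t))/(S_{θ*}(t)₁ − O₁(t)). -/
open MeasureTheory Filter Matrix
open scoped BigOperators Topology

set_option maxHeartbeats 1000000

lemma gradient_apply_eq_fderiv {ι : Type*} [Fintype ι] [DecidableEq ι]
    (f : EuclideanSpace ℝ ι → ℝ) (x : EuclideanSpace ℝ ι) (i : ι) :
    gradient f x i = (fderiv ℝ f x) (EuclideanSpace.single i 1) := by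
  have h : gradient f x
      = (InnerProductSpace.toDual ℝ (EuclideanSpace ℝ ι)).symm (fderiv ℝ f x) := rfl
  rw [h, ← InnerProductSpace.toDual_symm_apply (𝕜 := ℝ)
    (y := fderiv ℝ f x) (x := EuclideanSpace.single i 1), real_inner_comm,
    EuclideanSpace.inner_single_left]
  simp

lemma grad_formula {p : ℕ} (E : Fin p → ℝ) (c₁ c₂ : ℝ)
    (x : EuclideanSpace ℝ (Fin p ⊕ Fin p))
    (hD : ((∑ k, x (Sum.inl k) * E k) - c₁) ≠ 0) (i : Fin p ⊕ Fin p) :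
    gradient (fun θ : EuclideanSpace ℝ (Fin p ⊕ Fin p) =>
      Real.arctan (((∑ k, θ (Sum.inr k) * E k) - c₂) /
        ((∑ k, θ (Sum.inl k) * E k) - c₁))) x i =
    (Sum.elim (fun k => -(E k) * ((∑ j, x (Sum.inr j) * E j) - c₂))
              (fun k => E k * ((∑ j, x (Sum.inl j) * E j) - c₁)) i)
      / (((∑ j, x (Sum.inl j) * E j) - c₁)^2 + ((∑ j, x (Sum.inr j) * E j) - c₂)^2) := by
  classical
  set L₁ : EuclideanSpace ℝ (Fin p ⊕ Fin p) →L[ℝ] ℝ :=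
    ∑ k, E k • (EuclideanSpace.proj (Sum.inl k) :
      EuclideanSpace ℝ (Fin p ⊕ Fin p) →L[ℝ] ℝ) with hL₁def
  set L₂ : EuclideanSpace ℝ (Fin p ⊕ Fin p) →L[ℝ] ℝ :=
    ∑ k, E k • (EuclideanSpace.proj (Sum.inr k) :
      EuclideanSpace ℝ (Fin p ⊕ Fin p) →L[ℝ] ℝ) with hL₂def
  have hDf : HasFDerivAt
      (fun θ : EuclideanSpace ℝ (Fin p ⊕ Fin p) => (∑ k, θ (Sum.inl k) * E k) - c₁) L₁ x :=
    (HasFDerivAt.fun_sum (fun k (_ : k ∈ Finset.univ) => by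
      exact HasFDerivAt.mul_const
        ((EuclideanSpace.proj (Sum.inl k) :
          EuclideanSpace ℝ (Fin p ⊕ Fin p) →L[ℝ] ℝ).hasFDerivAt (x := x)) (E k))).sub_const c₁
  have hNf : HasFDerivAt
      (fun θ : EuclideanSpace ℝ (Fin p ⊕ Fin p) => (∑ k, θ (Sum.inr k) * E k) - c₂) L₂ x :=
    (HasFDerivAt.fun_sum (fun k (_ : k ∈ Finset.univ) => by
      exact HasFDerivAt.mul_const
        ((EuclideanSpace.proj (Sum.inr k) :
          EuclideanSpace ℝ (Fin p ⊕ Fin p) →L[ℝ] ℝ).hasFDerivAt (x := x)) (E k))).sub_const c₂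
  set Dx : ℝ := (∑ k, x (Sum.inl k) * E k) - c₁ with hDx
  set Nx : ℝ := (∑ k, x (Sum.inr k) * E k) - c₂ with hNx
  have hinv : HasFDerivAt
      (fun θ : EuclideanSpace ℝ (Fin p ⊕ Fin p) => ((∑ k, θ (Sum.inl k) * E k) - c₁)⁻¹)
      ((-(Dx ^ 2)⁻¹) • L₁) x :=
    (hasDerivAt_inv hD).comp_hasFDerivAt x hDf
  have hq : HasFDerivAt
      (fun θ : EuclideanSpace ℝ (Fin p ⊕ Fin p) =>
        ((∑ k, θ (Sum.inr k) * E k) - c₂) * (((∑ k, θ (Sum.inl k) * E k) - c₁))⁻¹)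
      (Nx • ((-(Dx ^ 2)⁻¹) • L₁) + Dx⁻¹ • L₂) x := hNf.mul hinv
  have harc := hq.arctan
  have hfuneq : (fun θ : EuclideanSpace ℝ (Fin p ⊕ Fin p) =>
      Real.arctan (((∑ k, θ (Sum.inr k) * E k) - c₂) /
        ((∑ k, θ (Sum.inl k) * E k) - c₁)))
      = (fun θ : EuclideanSpace ℝ (Fin p ⊕ Fin p) =>
      Real.arctan (((∑ k, θ (Sum.inr k) * E k) - c₂) *
        (((∑ k, θ (Sum.inl k) * E k) - c₁))⁻¹)) := by
    funext θ; rw [div_eq_mul_inv]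
  have hL1l : ∀ j : Fin p, L₁ (EuclideanSpace.single (Sum.inl j) 1) = E j := by
    intro j
    simp [hL₁def, ContinuousLinearMap.sum_apply, PiLp.proj_apply,
      EuclideanSpace.single_apply, Sum.inl.injEq]
  have hL1r : ∀ j : Fin p, L₁ (EuclideanSpace.single (Sum.inr j) 1) = 0 := by
    intro j
    simp [hL₁def, ContinuousLinearMap.sum_apply, PiLp.proj_apply,
      EuclideanSpace.single_apply]
  have hL2l : ∀ j : Fin p, L₂ (EuclideanSpace.single (Sum.inl j) 1) = 0 := by
    intro j
    simp [hL₂def, ContinuousLinearMap.sum_apply, PiLp.proj_apply,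
      EuclideanSpace.single_apply]
  have hL2r : ∀ j : Fin p, L₂ (EuclideanSpace.single (Sum.inr j) 1) = E j := by
    intro j
    simp [hL₂def, ContinuousLinearMap.sum_apply, PiLp.proj_apply,
      EuclideanSpace.single_apply, Sum.inr.injEq]
  rw [gradient_apply_eq_fderiv, hfuneq, harc.fderiv]
  have h1pos : (0:ℝ) < 1 + (Nx * Dx⁻¹) ^ 2 := by positivity
  rcases i with j | j
  · rw [ContinuousLinearMap.smul_apply, ContinuousLinearMap.add_apply,
      ContinuousLinearMap.smul_apply, ContinuousLinearMap.smul_apply,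
      ContinuousLinearMap.smul_apply, hL1l j, hL2l j, Sum.elim_inl]
    simp only [smul_eq_mul, mul_zero, add_zero]
    rw [← hNx, ← hDx]
    field_simp
  · rw [ContinuousLinearMap.smul_apply, ContinuousLinearMap.add_apply,
      ContinuousLinearMap.smul_apply, ContinuousLinearMap.smul_apply,
      ContinuousLinearMap.smul_apply, hL1r j, hL2r j, Sum.elim_inr]
    simp only [smul_eq_mul, mul_zero, add_zero, zero_add]
    rw [← hNx, ← hDx]
    field_simp

lemma sum_factor {p : ℕ} (c E : Fin p → ℝ) (m : ℝ) :
    (∑ i, c i * (E i * m)) = (∑ i, c i * E i) * m := by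
  rw [Finset.sum_mul]; exact Finset.sum_congr rfl fun i _ => by ring

/-- For the linear trajectory model
`S_θ(t) = (∑ a_k e_k(t), ∑ b_k e_k(t))` with bearing function
`Ψ(x,t) = arctan((x₂ − O₂(t))/(x₁ − O₁(t)))`, if `θ*` is interior to `Θ` and
`S_θ(t)₁ − O₁(t) > 0` on `Θ × [0,1]`, the following are equivalent:
(i) observability (Obs) at `θ*`;
(ii) nonsingularity of `I_R(θ*)`;
(iii) linear independence on `[0,1]` of `e₁,…,e_p, e₁·m(θ*,·),…,e_p·m(θ*,·)`,
where `m(θ*,t) = (S_{θ*}(t)₂ − O₂(t))/(S_{θ*}(t)₁ − O₁(t))`.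
The parameter `θ = (a,b)` is indexed by `Fin p ⊕ Fin p` (first the `a`'s, then the `b`'s). -/
theorem stmt_7
    {p : ℕ}
    (e : Fin p → ℝ → ℝ) (he : ∀ i, ContinuousOn (e i) (Set.Icc (0:ℝ) 1))
    (O₁ O₂ : ℝ → ℝ)
    (hO₁ : ContinuousOn O₁ (Set.Icc (0:ℝ) 1)) (hO₂ : ContinuousOn O₂ (Set.Icc (0:ℝ) 1))
    (Θ : Set (EuclideanSpace ℝ (Fin p ⊕ Fin p)))
    (θstar : EuclideanSpace ℝ (Fin p ⊕ Fin p)) (hθstar : θstar ∈ interior Θ)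
    -- positivity of the denominator: S_θ(t)₁ − O₁(t) > 0 on Θ × [0,1]
    (hpos : ∀ θ ∈ Θ, ∀ t ∈ Set.Icc (0:ℝ) 1,
      0 < (∑ i, θ (Sum.inl i) * e i t) - O₁ t)
    -- the matrix I_R(θ*)
    (IR : Matrix (Fin p ⊕ Fin p) (Fin p ⊕ Fin p) ℝ)
    (hIR : ∀ i j, IR i j = ∫ t in (0:ℝ)..1,
      gradient (fun θ : EuclideanSpace ℝ (Fin p ⊕ Fin p) =>
        Real.arctan (((∑ k, θ (Sum.inr k) * e k t) - O₂ t) /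
          ((∑ k, θ (Sum.inl k) * e k t) - O₁ t))) θstar i *
      gradient (fun θ : EuclideanSpace ℝ (Fin p ⊕ Fin p) =>
        Real.arctan (((∑ k, θ (Sum.inr k) * e k t) - O₂ t) /
          ((∑ k, θ (Sum.inl k) * e k t) - O₁ t))) θstar j) :
    -- (i) ↔ (iii)
    ((∀ θ ∈ Θ,
        (∀ t ∈ Set.Icc (0:ℝ) 1,
          Real.arctan (((∑ k, θ (Sum.inr k) * e k t) - O₂ t) /
              ((∑ k, θ (Sum.inl k) * e k t) - O₁ t))
            = Real.arctan (((∑ k, θstar (Sum.inr k) * e k t) - O₂ t) /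
              ((∑ k, θstar (Sum.inl k) * e k t) - O₁ t)))
        → θ = θstar)
      ↔ (∀ c : Fin p ⊕ Fin p → ℝ,
          (∀ t ∈ Set.Icc (0:ℝ) 1,
            (∑ i, c (Sum.inl i) * e i t)
              + (∑ i, c (Sum.inr i) * (e i t *
                  (((∑ k, θstar (Sum.inr k) * e k t) - O₂ t) /
                    ((∑ k, θstar (Sum.inl k) * e k t) - O₁ t)))) = 0)
          → c = 0))
    -- (ii) ↔ (iii)
    ∧ (IR.det ≠ 0
      ↔ (∀ c : Fin p ⊕ Fin p → ℝ,
          (∀ t ∈ Set.Icc (0:ℝ) 1,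
            (∑ i, c (Sum.inl i) * e i t)
              + (∑ i, c (Sum.inr i) * (e i t *
                  (((∑ k, θstar (Sum.inr k) * e k t) - O₂ t) /
                    ((∑ k, θstar (Sum.inl k) * e k t) - O₁ t)))) = 0)
          → c = 0)) := by
  classical
  have hθΘ : θstar ∈ Θ := interior_subset hθstar
  have h01 : Set.uIcc (0:ℝ) 1 = Set.Icc 0 1 := Set.uIcc_of_le zero_le_one
  have hDpos : ∀ t ∈ Set.Icc (0:ℝ) 1,
      0 < (∑ k, θstar (Sum.inl k) * e k t) - O₁ t := fun t ht => hpos θstar hθΘ t ht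
  have hDcont : ContinuousOn (fun t => (∑ k, θstar (Sum.inl k) * e k t) - O₁ t)
      (Set.Icc (0:ℝ) 1) :=
    (continuousOn_finset_sum _ (fun k _ => continuousOn_const.mul (he k))).sub hO₁
  have hNcont : ContinuousOn (fun t => (∑ k, θstar (Sum.inr k) * e k t) - O₂ t)
      (Set.Icc (0:ℝ) 1) :=
    (continuousOn_finset_sum _ (fun k _ => continuousOn_const.mul (he k))).sub hO₂
  have hQpos : ∀ t ∈ Set.Icc (0:ℝ) 1,
      0 < ((∑ k, θstar (Sum.inl k) * e k t) - O₁ t) ^ 2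
        + ((∑ k, θstar (Sum.inr k) * e k t) - O₂ t) ^ 2 := fun t ht =>
    add_pos_of_pos_of_nonneg (pow_pos (hDpos t ht) 2) (sq_nonneg _)
  set g : (Fin p ⊕ Fin p) → ℝ → ℝ := fun i t =>
    (Sum.elim (fun k => -(e k t) * ((∑ j, θstar (Sum.inr j) * e j t) - O₂ t))
      (fun k => e k t * ((∑ j, θstar (Sum.inl j) * e j t) - O₁ t)) i)
      / (((∑ j, θstar (Sum.inl j) * e j t) - O₁ t) ^ 2
          + ((∑ j, θstar (Sum.inr j) * e j t) - O₂ t) ^ 2) with hgdef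
  have hgcont : ∀ i, ContinuousOn (g i) (Set.Icc (0:ℝ) 1) := by
    intro i
    have hden : ContinuousOn (fun t =>
        ((∑ j, θstar (Sum.inl j) * e j t) - O₁ t) ^ 2
          + ((∑ j, θstar (Sum.inr j) * e j t) - O₂ t) ^ 2) (Set.Icc (0:ℝ) 1) :=
      (hDcont.pow 2).add (hNcont.pow 2)
    rcases i with k | k
    · exact ((he k).neg.mul hNcont).div hden (fun t ht => (hQpos t ht).ne')
    · exact ((he k).mul hDcont).div hden (fun t ht => (hQpos t ht).ne')
  have hgrad : ∀ t ∈ Set.Icc (0:ℝ) 1, ∀ i,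
      gradient (fun θ : EuclideanSpace ℝ (Fin p ⊕ Fin p) =>
        Real.arctan (((∑ k, θ (Sum.inr k) * e k t) - O₂ t) /
          ((∑ k, θ (Sum.inl k) * e k t) - O₁ t))) θstar i = g i t := by
    intro t ht i
    have h := grad_formula (fun k => e k t) (O₁ t) (O₂ t) θstar (hDpos t ht).ne' i
    simp only [hgdef]
    simpa using h
  have hIR' : ∀ i j, IR i j = ∫ t in (0:ℝ)..1, g i t * g j t := by
    intro i j
    rw [hIR i j]
    exact intervalIntegral.integral_congr
      (fun t ht => by rw [hgrad t (h01 ▸ ht) i, hgrad t (h01 ▸ ht) j])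
  have hInt : ∀ i j, IntervalIntegrable (fun t => g i t * g j t) volume 0 1 := by
    intro i j
    apply ContinuousOn.intervalIntegrable
    rw [h01]; exact (hgcont i).mul (hgcont j)
  set F : (Fin p ⊕ Fin p → ℝ) → ℝ → ℝ := fun c t =>
    (∑ i, c (Sum.inl i) * e i t)
      + ∑ i, c (Sum.inr i) * (e i t *
          (((∑ k, θstar (Sum.inr k) * e k t) - O₂ t) /
            ((∑ k, θstar (Sum.inl k) * e k t) - O₁ t))) with hFdef
  -- bridge identity
  have hpsiF : ∀ (c : Fin p ⊕ Fin p → ℝ), ∀ t ∈ Set.Icc (0:ℝ) 1,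
      (∑ i, c i * g i t)
        = (((∑ k, θstar (Sum.inl k) * e k t) - O₁ t)
            / (((∑ k, θstar (Sum.inl k) * e k t) - O₁ t) ^ 2
              + ((∑ k, θstar (Sum.inr k) * e k t) - O₂ t) ^ 2)) *
          F (fun i => Sum.elim (fun k => c (Sum.inr k)) (fun k => -(c (Sum.inl k))) i) t := by
    intro c t ht
    have hD0 : ((∑ k, θstar (Sum.inl k) * e k t) - O₁ t) ≠ 0 := (hDpos t ht).ne'
    have hQ0 : (((∑ k, θstar (Sum.inl k) * e k t) - O₁ t) ^ 2
        + ((∑ k, θstar (Sum.inr k) * e k t) - O₂ t) ^ 2) ≠ 0 := (hQpos t ht).ne'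
    rw [Fintype.sum_sum_type]
    simp only [hgdef, hFdef, Sum.elim_inl, Sum.elim_inr]
    rw [sum_factor]
    have h1 : (∑ k : Fin p, c (Sum.inl k) *
        (-(e k t) * ((∑ j, θstar (Sum.inr j) * e j t) - O₂ t)
          / (((∑ j, θstar (Sum.inl j) * e j t) - O₁ t) ^ 2
            + ((∑ j, θstar (Sum.inr j) * e j t) - O₂ t) ^ 2)))
        = (∑ k : Fin p, c (Sum.inl k) * e k t) *
          (-((∑ j, θstar (Sum.inr j) * e j t) - O₂ t)
          / (((∑ j, θstar (Sum.inl j) * e j t) - O₁ t) ^ 2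
            + ((∑ j, θstar (Sum.inr j) * e j t) - O₂ t) ^ 2)) := by
      rw [Finset.sum_mul]; exact Finset.sum_congr rfl fun k _ => by ring
    have h2 : (∑ k : Fin p, c (Sum.inr k) *
        (e k t * ((∑ j, θstar (Sum.inl j) * e j t) - O₁ t)
          / (((∑ j, θstar (Sum.inl j) * e j t) - O₁ t) ^ 2
            + ((∑ j, θstar (Sum.inr j) * e j t) - O₂ t) ^ 2)))
        = (∑ k : Fin p, c (Sum.inr k) * e k t) *
          (((∑ j, θstar (Sum.inl j) * e j t) - O₁ t)
          / (((∑ j, θstar (Sum.inl j) * e j t) - O₁ t) ^ 2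
            + ((∑ j, θstar (Sum.inr j) * e j t) - O₂ t) ^ 2)) := by
      rw [Finset.sum_mul]; exact Finset.sum_congr rfl fun k _ => by ring
    have h3 : (∑ i : Fin p, -c (Sum.inl i) * e i t)
        = -(∑ i : Fin p, c (Sum.inl i) * e i t) := by
      rw [← Finset.sum_neg_distrib]; exact Finset.sum_congr rfl fun i _ => by ring
    rw [h1, h2, h3]
    field_simp
    ring
  -- integrability of mixed terms
  have hpsicont : ∀ (c : Fin p ⊕ Fin p → ℝ),
      ContinuousOn (fun t => ∑ j, c j * g j t) (Set.Icc (0:ℝ) 1) := fun c =>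
    continuousOn_finset_sum _ (fun j _ => continuousOn_const.mul (hgcont j))
  have hIntc : ∀ (c : Fin p ⊕ Fin p → ℝ) i,
      IntervalIntegrable (fun t => g i t * (∑ j, c j * g j t)) volume 0 1 := by
    intro c i
    apply ContinuousOn.intervalIntegrable
    rw [h01]; exact (hgcont i).mul (hpsicont c)
  have hmulVec : ∀ (c : Fin p ⊕ Fin p → ℝ) i,
      IR.mulVec c i = ∫ t in (0:ℝ)..1, g i t * (∑ j, c j * g j t) := by
    intro c i
    have hdef : IR.mulVec c i = ∑ j, IR i j * c j := rfl
    rw [hdef]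
    have h1 : ∀ j, IR i j * c j = ∫ t in (0:ℝ)..1, g i t * g j t * c j := by
      intro j; rw [hIR' i j, ← intervalIntegral.integral_mul_const]
    rw [Finset.sum_congr rfl (fun j _ => h1 j),
      ← intervalIntegral.integral_finset_sum (fun j _ => (hInt i j).mul_const (c j))]
    exact intervalIntegral.integral_congr (fun t _ => by
      rw [Finset.mul_sum]; exact Finset.sum_congr rfl fun j _ => by ring)
  have hquad : ∀ (c : Fin p ⊕ Fin p → ℝ),
      (∑ i, c i * IR.mulVec c i) = ∫ t in (0:ℝ)..1, (∑ j, c j * g j t) ^ 2 := by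
    intro c
    have h1 : ∀ i, c i * IR.mulVec c i
        = ∫ t in (0:ℝ)..1, c i * (g i t * (∑ j, c j * g j t)) := by
      intro i; rw [hmulVec c i, ← intervalIntegral.integral_const_mul]
    rw [Finset.sum_congr rfl (fun i _ => h1 i),
      ← intervalIntegral.integral_finset_sum (fun i _ => (hIntc c i).const_mul (c i))]
    refine intervalIntegral.integral_congr (fun t _ => ?_)
    have h2 : ∑ i, c i * (g i t * (∑ j, c j * g j t))
        = (∑ i, c i * g i t) * (∑ j, c j * g j t) := by
      rw [Finset.sum_mul]; exact Finset.sum_congr rfl fun i _ => by ring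
    rw [h2, sq]
  refine ⟨⟨?_, ?_⟩, ?_, ?_⟩
  · -- (i) → (iii)
    intro H c hc
    set v : EuclideanSpace ℝ (Fin p ⊕ Fin p) :=
      (WithLp.equiv 2 (∀ _ : Fin p ⊕ Fin p, ℝ)).symm
        (fun i => Sum.elim (fun k => -(c (Sum.inr k))) (fun k => c (Sum.inl k)) i) with hvdef
    have hvl : ∀ k, v (Sum.inl k) = -(c (Sum.inr k)) := fun k => rfl
    have hvr : ∀ k, v (Sum.inr k) = c (Sum.inl k) := fun k => rfl
    obtain ⟨ε, hεpos, hball⟩ := Metric.isOpen_iff.mp isOpen_interior θstar hθstar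
    have hnp : (0:ℝ) < ‖v‖ + 1 := by positivity
    set δ : ℝ := ε / (2 * (‖v‖ + 1)) with hδdef
    have hδpos : 0 < δ := by positivity
    set θ : EuclideanSpace ℝ (Fin p ⊕ Fin p) := θstar + δ • v with hθdef
    have hθmem : θ ∈ Θ := by
      refine interior_subset (hball ?_)
      rw [Metric.mem_ball, hθdef, dist_eq_norm, add_sub_cancel_left, norm_smul,
        Real.norm_eq_abs, abs_of_pos hδpos]
      have h2 : δ * (‖v‖ + 1) = ε / 2 := by rw [hδdef]; field_simp
      nlinarith [norm_nonneg v]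
    have hθc : ∀ i, θ i = θstar i + δ * v i := by
      intro i; rw [hθdef]; rfl
    have harct : ∀ t ∈ Set.Icc (0:ℝ) 1,
        Real.arctan (((∑ k, θ (Sum.inr k) * e k t) - O₂ t) /
            ((∑ k, θ (Sum.inl k) * e k t) - O₁ t))
          = Real.arctan (((∑ k, θstar (Sum.inr k) * e k t) - O₂ t) /
            ((∑ k, θstar (Sum.inl k) * e k t) - O₁ t)) := by
      intro t ht
      have hDθ : 0 < (∑ k, θ (Sum.inl k) * e k t) - O₁ t := hpos θ hθmem t ht
      have hDs : 0 < (∑ k, θstar (Sum.inl k) * e k t) - O₁ t := hDpos t ht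
      have hAe : (∑ k, θ (Sum.inl k) * e k t)
          = (∑ k, θstar (Sum.inl k) * e k t) - δ * (∑ k, c (Sum.inr k) * e k t) := by
        have h : ∀ k : Fin p, θ (Sum.inl k) * e k t
            = θstar (Sum.inl k) * e k t - δ * (c (Sum.inr k) * e k t) := fun k => by
          rw [hθc, hvl]; ring
        rw [Finset.sum_congr rfl fun k _ => h k, Finset.sum_sub_distrib, ← Finset.mul_sum]
      have hBe : (∑ k, θ (Sum.inr k) * e k t)
          = (∑ k, θstar (Sum.inr k) * e k t) + δ * (∑ k, c (Sum.inl k) * e k t) := by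
        have h : ∀ k : Fin p, θ (Sum.inr k) * e k t
            = θstar (Sum.inr k) * e k t + δ * (c (Sum.inl k) * e k t) := fun k => by
          rw [hθc, hvr]; ring
        rw [Finset.sum_congr rfl fun k _ => h k, Finset.sum_add_distrib, ← Finset.mul_sum]
      congr 1
      rw [div_eq_div_iff hDθ.ne' hDs.ne', hAe, hBe]
      have hc' := hc t ht
      rw [sum_factor] at hc'
      have h0 : (∑ i, c (Sum.inl i) * e i t) * ((∑ k, θstar (Sum.inl k) * e k t) - O₁ t)
          + (∑ i, c (Sum.inr i) * e i t) * ((∑ k, θstar (Sum.inr k) * e k t) - O₂ t)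
            = 0 := by
        have h := congrArg (fun z => z * ((∑ k, θstar (Sum.inl k) * e k t) - O₁ t)) hc'
        simp only [zero_mul] at h
        calc (∑ i, c (Sum.inl i) * e i t) * ((∑ k, θstar (Sum.inl k) * e k t) - O₁ t)
              + (∑ i, c (Sum.inr i) * e i t) * ((∑ k, θstar (Sum.inr k) * e k t) - O₂ t)
            = ((∑ i, c (Sum.inl i) * e i t) + (∑ i, c (Sum.inr i) * e i t) *
                (((∑ k, θstar (Sum.inr k) * e k t) - O₂ t) /
                  ((∑ k, θstar (Sum.inl k) * e k t) - O₁ t))) *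
                ((∑ k, θstar (Sum.inl k) * e k t) - O₁ t) := by
              field_simp
          _ = 0 := h
      linear_combination δ * h0
    have hθeq : θ = θstar := H θ hθmem harct
    have hv0 : v = 0 := by
      have h : δ • v = 0 := by
        have := hθeq
        rwa [hθdef, add_eq_left] at this
      rcases smul_eq_zero.mp h with h' | h'
      · exact absurd h' hδpos.ne'
      · exact h'
    have hvi : ∀ i, v i = 0 := fun i => by rw [hv0]; rfl
    funext i
    rcases i with k | k
    · have := hvi (Sum.inr k); rw [hvr] at this; simpa using this
    · have := hvi (Sum.inl k); rw [hvl] at this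
      simpa using neg_eq_zero.mp this
  · -- (iii) → (i)
    intro hLI θ hθmem harct
    set c : Fin p ⊕ Fin p → ℝ := fun i =>
      Sum.elim (fun k => θ (Sum.inr k) - θstar (Sum.inr k))
        (fun k => θstar (Sum.inl k) - θ (Sum.inl k)) i with hcdef
    have hF0 : ∀ t ∈ Set.Icc (0:ℝ) 1,
        (∑ i, c (Sum.inl i) * e i t)
          + (∑ i, c (Sum.inr i) * (e i t *
              (((∑ k, θstar (Sum.inr k) * e k t) - O₂ t) /
                ((∑ k, θstar (Sum.inl k) * e k t) - O₁ t)))) = 0 := by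
      intro t ht
      have hDθ : 0 < (∑ k, θ (Sum.inl k) * e k t) - O₁ t := hpos θ hθmem t ht
      have hDs : 0 < (∑ k, θstar (Sum.inl k) * e k t) - O₁ t := hDpos t ht
      have hratio := Real.arctan_injective (harct t ht)
      have hcross := (div_eq_div_iff hDθ.ne' hDs.ne').mp hratio
      have hcl : ∀ k : Fin p, c (Sum.inl k) = θ (Sum.inr k) - θstar (Sum.inr k) :=
        fun k => rfl
      have hcr : ∀ k : Fin p, c (Sum.inr k) = θstar (Sum.inl k) - θ (Sum.inl k) :=
        fun k => rfl
      have hA : (∑ i, c (Sum.inl i) * e i t)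
          = (∑ k, θ (Sum.inr k) * e k t) - (∑ k, θstar (Sum.inr k) * e k t) := by
        rw [← Finset.sum_sub_distrib]
        exact Finset.sum_congr rfl fun k _ => by rw [hcl]; ring
      have hB : (∑ i, c (Sum.inr i) * e i t)
          = (∑ k, θstar (Sum.inl k) * e k t) - (∑ k, θ (Sum.inl k) * e k t) := by
        rw [← Finset.sum_sub_distrib]
        exact Finset.sum_congr rfl fun k _ => by rw [hcr]; ring
      rw [sum_factor, hA, hB]
      have hDs0 : ((∑ k, θstar (Sum.inl k) * e k t) - O₁ t) ≠ 0 := hDs.ne'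
      have key : ((∑ k, θ (Sum.inr k) * e k t) - (∑ k, θstar (Sum.inr k) * e k t))
            * ((∑ k, θstar (Sum.inl k) * e k t) - O₁ t)
          + ((∑ k, θstar (Sum.inl k) * e k t) - (∑ k, θ (Sum.inl k) * e k t))
            * ((∑ k, θstar (Sum.inr k) * e k t) - O₂ t) = 0 := by
        linear_combination hcross
      have hexp : ((∑ k, θ (Sum.inr k) * e k t) - (∑ k, θstar (Sum.inr k) * e k t))
          + ((∑ k, θstar (Sum.inl k) * e k t) - (∑ k, θ (Sum.inl k) * e k t)) *
              (((∑ k, θstar (Sum.inr k) * e k t) - O₂ t) /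
                ((∑ k, θstar (Sum.inl k) * e k t) - O₁ t))
          = (((∑ k, θ (Sum.inr k) * e k t) - (∑ k, θstar (Sum.inr k) * e k t))
              * ((∑ k, θstar (Sum.inl k) * e k t) - O₁ t)
            + ((∑ k, θstar (Sum.inl k) * e k t) - (∑ k, θ (Sum.inl k) * e k t))
              * ((∑ k, θstar (Sum.inr k) * e k t) - O₂ t))
            / ((∑ k, θstar (Sum.inl k) * e k t) - O₁ t) := by
        field_simp
      rw [hexp, key, zero_div]
    have hc0 := hLI c hF0
    refine PiLp.ext fun i => ?_
    rcases i with k | k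
    · have h1 : c (Sum.inr k) = 0 := by rw [hc0]; rfl
      have : θstar (Sum.inl k) - θ (Sum.inl k) = 0 := h1
      linarith [this]
    · have h1 : c (Sum.inl k) = 0 := by rw [hc0]; rfl
      have : θ (Sum.inr k) - θstar (Sum.inr k) = 0 := h1
      linarith [this]
  · -- (ii) → (iii)
    intro hdet c hc
    set d : Fin p ⊕ Fin p → ℝ := fun i =>
      Sum.elim (fun k => -(c (Sum.inr k))) (fun k => c (Sum.inl k)) i with hddef
    have hσd : (fun i => Sum.elim (fun k => d (Sum.inr k)) (fun k => -(d (Sum.inl k))) i) = c := by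
      funext i; rcases i with k | k <;> simp [hddef]
    have hψd0 : ∀ t ∈ Set.Icc (0:ℝ) 1, (∑ i, d i * g i t) = 0 := by
      intro t ht
      rw [hpsiF d t ht, hσd]
      have : F c t = 0 := hc t ht
      rw [this, mul_zero]
    have hmv : IR.mulVec d = 0 := by
      funext i
      rw [hmulVec d i]
      have : (∫ t in (0:ℝ)..1, g i t * (∑ j, d j * g j t)) = ∫ t in (0:ℝ)..1, (0:ℝ) := by
        refine intervalIntegral.integral_congr (fun t ht => ?_)
        rw [hψd0 t (h01 ▸ ht), mul_zero]
      rw [this, intervalIntegral.integral_zero]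
      rfl
    have hd0 : d = 0 := by
      by_contra hne
      exact hdet (Matrix.exists_mulVec_eq_zero_iff.mp ⟨d, hne, hmv⟩)
    funext i
    rcases i with k | k
    · have h1 : d (Sum.inr k) = 0 := by rw [hd0]; rfl
      exact h1
    · have h1 : d (Sum.inl k) = 0 := by rw [hd0]; rfl
      have : -(c (Sum.inr k)) = 0 := h1
      simpa using neg_eq_zero.mp this
  · -- (iii) → (ii)
    intro hLI hdet
    obtain ⟨v, hv0, hmv⟩ := Matrix.exists_mulVec_eq_zero_iff.mpr hdet
    have hint0 : (∫ t in (0:ℝ)..1, (∑ j, v j * g j t) ^ 2) = 0 := by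
      rw [← hquad v, hmv]
      simp
    have hψ0 : ∀ t ∈ Set.Icc (0:ℝ) 1, (∑ j, v j * g j t) = 0 := by
      intro t ht
      by_contra hne
      have hcont : ContinuousOn (fun t => (∑ j, v j * g j t) ^ 2) (Set.Icc (0:ℝ) 1) :=
        (hpsicont v).pow 2
      have hposint : 0 < ∫ t in (0:ℝ)..1, (∑ j, v j * g j t) ^ 2 :=
        intervalIntegral.integral_pos one_pos hcont (fun x _ => sq_nonneg _)
          ⟨t, ht, pow_two_pos_of_ne_zero hne⟩
      linarith [hint0, hposint]
    have hF0 : ∀ t ∈ Set.Icc (0:ℝ) 1,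
        F (fun i => Sum.elim (fun k => v (Sum.inr k)) (fun k => -(v (Sum.inl k))) i) t = 0 := by
      intro t ht
      have h := hpsiF v t ht
      rw [hψ0 t ht] at h
      have hw : (((∑ k, θstar (Sum.inl k) * e k t) - O₁ t)
          / (((∑ k, θstar (Sum.inl k) * e k t) - O₁ t) ^ 2
            + ((∑ k, θstar (Sum.inr k) * e k t) - O₂ t) ^ 2)) ≠ 0 :=
        div_ne_zero (hDpos t ht).ne' (hQpos t ht).ne'
      exact (mul_eq_zero.mp h.symm).resolve_left hw
    have hσv0 := hLI (fun i => Sum.elim (fun k => v (Sum.inr k)) (fun k => -(v (Sum.inl k))) i)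
      hF0
    apply hv0
    funext i
    rcases i with k | k
    · have h1 : Sum.elim (fun k => v (Sum.inr k)) (fun k => -(v (Sum.inl k))) (Sum.inr k)
          = 0 := by rw [congrFun hσv0 (Sum.inr k)]; rfl
      have : -(v (Sum.inl k)) = 0 := h1
      simpa using neg_eq_zero.mp this
    · have h1 : Sum.elim (fun k => v (Sum.inr k)) (fun k => -(v (Sum.inl k))) (Sum.inl k)
          = 0 := by rw [congrFun hσv0 (Sum.inl k)]; rfl
      exact h1
end

section
/- Let o ∈ ℝ² and Ψ(y) = arctan[(y₂ − o₂)/(y₁ − o₁)]. Let x ∈ ℝ² with R = ‖x − o‖ > 0 and x₁ ≠ o₁, and let ε be an ℝ²-valued random variable with E‖ε‖² < ∞ such that almost surely (x₁ − o₁)(x₁ − o₁ + ε₁) > 0. Then for every a ∈ (0,1), E{Ψ(x+ε) − Ψ(x)}² ≤ (E‖ε‖²/R²)·(π²/a² + 1/(1−a)²); in particular, taking a = 1/(1 + π^{−2/3}), E{Ψ(x+ε) − Ψ(x)}² ≤ π²(1 + π^{−2/3})³ · E‖ε‖²/R². -/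
open MeasureTheory Filter Real
open scoped BigOperators Topology

private lemma stmt9_hasDeriv (p q e1 e2 h : ℝ) (hden : p + h * e1 ≠ 0) :
    HasDerivAt (fun s => Real.arctan ((q + s * e2) / (p + s * e1)))
      ((p * e2 - q * e1) / ((p + h * e1) ^ 2 + (q + h * e2) ^ 2)) h := by
  have h1 : HasDerivAt (fun s : ℝ => q + s * e2) e2 h := by
    simpa using ((hasDerivAt_id h).mul_const e2).const_add q
  have h2 : HasDerivAt (fun s : ℝ => p + s * e1) e1 h := by
    simpa using ((hasDerivAt_id h).mul_const e1).const_add p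
  have h3 := h1.div h2 hden
  have h4 := (Real.hasDerivAt_arctan ((q + h * e2) / (p + h * e1))).comp h h3
  refine HasDerivAt.congr_deriv h4 ?_
  have hd2 : (0:ℝ) < (p + h * e1) ^ 2 :=
    lt_of_le_of_ne (sq_nonneg _) (Ne.symm (pow_ne_zero 2 hden))
  have hN : ((p + h * e1) ^ 2 + (q + h * e2) ^ 2) ≠ 0 := by
    nlinarith [sq_nonneg (q + h * e2)]
  have h6 : 1 + ((q + h * e2) / (p + h * e1)) ^ 2 ≠ 0 := by positivity
  field_simp
  ring

private lemma stmt9_den_pos (p e1 : ℝ) (hp : 0 < p * (p + e1)) {h : ℝ}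
    (h0 : 0 ≤ h) (h1 : h ≤ 1) : 0 < p * (p + h * e1) := by
  have hp0 : p ≠ 0 := by rintro rfl; simp at hp
  have hp2 : 0 < p ^ 2 := by positivity
  rcases le_or_gt 0 (p * e1) with hc | hc
  · nlinarith
  · nlinarith [mul_le_mul_of_nonpos_right h1 hc.le]

set_option maxHeartbeats 1000000 in
private lemma stmt9_ptwise (p q e1 e2 a : ℝ) (ha0 : 0 < a) (ha1 : a < 1)
    (hp : 0 < p * (p + e1)) :
    (arctan ((q + e2) / (p + e1)) - arctan (q / p)) ^ 2
      ≤ (e1 ^ 2 + e2 ^ 2) / (p ^ 2 + q ^ 2) * (π ^ 2 / a ^ 2 + 1 / (1 - a) ^ 2) := by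
  have hp0 : p ≠ 0 := by rintro rfl; simp at hp
  have hR2 : 0 < p ^ 2 + q ^ 2 := by positivity
  have h1a : 0 < 1 - a := by linarith
  set D : ℝ := arctan ((q + e2) / (p + e1)) - arctan (q / p) with hD
  have habs : |D| ≤ π := by
    have := arctan_lt_pi_div_two ((q + e2) / (p + e1))
    have := neg_pi_div_two_lt_arctan ((q + e2) / (p + e1))
    have := arctan_lt_pi_div_two (q / p)
    have := neg_pi_div_two_lt_arctan (q / p)
    rw [abs_le]; constructor <;> simp only [hD] <;> linarith
  set R : ℝ := Real.sqrt (p ^ 2 + q ^ 2) with hRdef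
  set E : ℝ := Real.sqrt (e1 ^ 2 + e2 ^ 2) with hEdef
  have hRpos : 0 < R := Real.sqrt_pos.mpr hR2
  have hRsq : R ^ 2 = p ^ 2 + q ^ 2 := Real.sq_sqrt hR2.le
  have hEsq : E ^ 2 = e1 ^ 2 + e2 ^ 2 := Real.sq_sqrt (by positivity)
  have hE0 : 0 ≤ E := Real.sqrt_nonneg _
  rcases le_or_gt (a * R) E with hcase | hcase
  · -- large ε
    have h1 : D ^ 2 ≤ π ^ 2 := by nlinarith [abs_nonneg D, sq_abs D, pi_pos]
    have h2 : a ^ 2 * (p ^ 2 + q ^ 2) ≤ e1 ^ 2 + e2 ^ 2 := by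
      have := pow_le_pow_left₀ (by positivity : 0 ≤ a * R) hcase 2
      rw [mul_pow, hRsq, hEsq] at this; linarith
    have key : π ^ 2 ≤ (e1 ^ 2 + e2 ^ 2) / (p ^ 2 + q ^ 2) * (π ^ 2 / a ^ 2) := by
      rw [div_mul_div_comm, le_div_iff₀ (by positivity)]
      nlinarith [pi_pos]
    have h3 : 0 ≤ (e1 ^ 2 + e2 ^ 2) / (p ^ 2 + q ^ 2) * (1 / (1 - a) ^ 2) := by positivity
    calc D ^ 2 ≤ π ^ 2 := h1
      _ ≤ _ := by rw [mul_add]; linarith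
  · -- small ε : E < a R
    set C : ℝ := E / ((1 - a) * R) with hC
    have hC0 : 0 ≤ C := by positivity
    have hne : ∀ h ∈ Set.Icc (0:ℝ) 1, p + h * e1 ≠ 0 := by
      intro h hh
      have := stmt9_den_pos p e1 hp hh.1 hh.2
      intro hz; rw [hz] at this; simp at this
    have hbound : ∀ h ∈ Set.Icc (0:ℝ) 1,
        ‖(p * e2 - q * e1) / ((p + h * e1) ^ 2 + (q + h * e2) ^ 2)‖ ≤ C := by
      intro h hh
      have hden := hne h hh
      have hd2 : (0:ℝ) < (p + h * e1) ^ 2 :=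
        lt_of_le_of_ne (sq_nonneg _) (Ne.symm (pow_ne_zero 2 hden))
      have hNpos : (0:ℝ) < (p + h * e1) ^ 2 + (q + h * e2) ^ 2 := by
        nlinarith [sq_nonneg (q + h * e2)]
      have hLag : (p * e2 - q * e1) ^ 2
          ≤ ((p + h * e1) ^ 2 + (q + h * e2) ^ 2) * E ^ 2 := by
        rw [hEsq]
        nlinarith [sq_nonneg ((p + h * e1) * e1 + (q + h * e2) * e2)]
      have hdot : (p * e1 + q * e2) ^ 2 ≤ (R * E) ^ 2 := by
        rw [mul_pow, hRsq, hEsq]; nlinarith [sq_nonneg (p * e2 - q * e1)]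
      have hRE0 : 0 ≤ R * E := by positivity
      have hdot' : -(R * E) ≤ p * e1 + q * e2 := by nlinarith
      have hhE : h * E ≤ a * R := by nlinarith [hh.1, hh.2]
      have hstep : (R - h * E) ^ 2 ≤ (p + h * e1) ^ 2 + (q + h * e2) ^ 2 := by
        have hE2 : h ^ 2 * E ^ 2 = h ^ 2 * (e1 ^ 2 + e2 ^ 2) := by rw [hEsq]
        nlinarith [mul_le_mul_of_nonneg_left hdot' hh.1, hRsq, hE2]
      have hle : (1 - a) * R ≤ R - h * E := by linarith
      have hNge : ((1 - a) * R) ^ 2 ≤ (p + h * e1) ^ 2 + (q + h * e2) ^ 2 :=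
        le_trans (pow_le_pow_left₀ (by positivity) hle 2) hstep
      have hdsq : ((p * e2 - q * e1) / ((p + h * e1) ^ 2 + (q + h * e2) ^ 2)) ^ 2
          ≤ C ^ 2 := by
        rw [hC, div_pow, div_pow,
          div_le_div_iff₀ (by positivity) (by positivity)]
        calc (p * e2 - q * e1) ^ 2 * ((1 - a) * R) ^ 2
            ≤ (((p + h * e1) ^ 2 + (q + h * e2) ^ 2) * E ^ 2)
              * (((p + h * e1) ^ 2 + (q + h * e2) ^ 2)) :=
              mul_le_mul hLag hNge (sq_nonneg _)
                (mul_nonneg hNpos.le (sq_nonneg E))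
          _ = E ^ 2 * (((p + h * e1) ^ 2 + (q + h * e2) ^ 2)) ^ 2 := by ring
      rw [Real.norm_eq_abs]
      nlinarith [sq_abs ((p * e2 - q * e1) / ((p + h * e1) ^ 2 + (q + h * e2) ^ 2)),
        abs_nonneg ((p * e2 - q * e1) / ((p + h * e1) ^ 2 + (q + h * e2) ^ 2))]
    have hmvt := Convex.norm_image_sub_le_of_norm_hasDerivWithin_le
      (f := fun s => Real.arctan ((q + s * e2) / (p + s * e1)))
      (f' := fun h => (p * e2 - q * e1) / ((p + h * e1) ^ 2 + (q + h * e2) ^ 2))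
      (fun h hh => (stmt9_hasDeriv p q e1 e2 h (hne h hh)).hasDerivWithinAt)
      hbound (convex_Icc 0 1) (Set.left_mem_Icc.mpr zero_le_one)
      (Set.right_mem_Icc.mpr zero_le_one)
    simp only [one_mul, zero_mul, add_zero, Real.norm_eq_abs, sub_zero, norm_one] at hmvt
    have hmvt' : |D| ≤ C := by simpa [hD] using hmvt
    have hDC : D ^ 2 ≤ C ^ 2 := by nlinarith [abs_nonneg D, sq_abs D]
    have hCval : C ^ 2 = (e1 ^ 2 + e2 ^ 2) / (p ^ 2 + q ^ 2) * (1 / (1 - a) ^ 2) := by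
      rw [hC, div_pow, mul_pow, hEsq, hRsq, div_mul_div_comm, mul_one, mul_comm]
    have h3 : 0 ≤ (e1 ^ 2 + e2 ^ 2) / (p ^ 2 + q ^ 2) * (π ^ 2 / a ^ 2) := by positivity
    calc D ^ 2 ≤ C ^ 2 := hDC
      _ = _ := hCval
      _ ≤ _ := by rw [mul_add]; linarith

private lemma stmt9_norm_sq (v : EuclideanSpace ℝ (Fin 2)) :
    ‖v‖ ^ 2 = v 0 ^ 2 + v 1 ^ 2 := by
  rw [EuclideanSpace.norm_eq, Real.sq_sqrt (by positivity)]
  simp [Fin.sum_univ_two, sq_abs]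

private lemma stmt9_arctan_sq_le (u v : ℝ) : (arctan u - arctan v) ^ 2 ≤ π ^ 2 := by
  nlinarith [arctan_lt_pi_div_two u, arctan_lt_pi_div_two v,
    neg_pi_div_two_lt_arctan u, neg_pi_div_two_lt_arctan v]

/-- For the bearing function `Ψ(y) = arctan((y₂ − o₂)/(y₁ − o₁))` seen from `o`,
if `R = ‖x − o‖ > 0`, `x₁ ≠ o₁`, `E‖ε‖² < ∞` and almost surely
`(x₁ − o₁)(x₁ − o₁ + ε₁) > 0`, then for every `a ∈ (0,1)`,
`E{Ψ(x+ε) − Ψ(x)}² ≤ (E‖ε‖²/R²)(π²/a² + 1/(1−a)²)`, and in particular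
`E{Ψ(x+ε) − Ψ(x)}² ≤ π²(1 + π^{−2/3})³ E‖ε‖²/R²`. -/
theorem stmt_9
    {Ω : Type*} [MeasurableSpace Ω] (P : Measure Ω) [IsProbabilityMeasure P]
    (o x : EuclideanSpace ℝ (Fin 2))
    (hR : 0 < ‖x - o‖) (hx1 : x 0 ≠ o 0)
    (ε : Ω → EuclideanSpace ℝ (Fin 2)) (hε : Measurable ε)
    (hL2 : Integrable (fun ω => ‖ε ω‖^2) P)
    (hsign : ∀ᵐ ω ∂P, 0 < (x 0 - o 0) * (x 0 - o 0 + ε ω 0)) :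
    (∀ a ∈ Set.Ioo (0:ℝ) 1,
      ∫ ω, (Real.arctan (((x + ε ω) 1 - o 1) / ((x + ε ω) 0 - o 0))
              - Real.arctan ((x 1 - o 1) / (x 0 - o 0)))^2 ∂P
        ≤ (∫ ω, ‖ε ω‖^2 ∂P) / ‖x - o‖^2 * (π^2 / a^2 + 1 / (1 - a)^2))
    ∧ ∫ ω, (Real.arctan (((x + ε ω) 1 - o 1) / ((x + ε ω) 0 - o 0))
              - Real.arctan ((x 1 - o 1) / (x 0 - o 0)))^2 ∂P
        ≤ π^2 * (1 + π ^ (-(2:ℝ)/3))^3 * (∫ ω, ‖ε ω‖^2 ∂P) / ‖x - o‖^2 := by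
  simp only [PiLp.add_apply]
  have hε0 : Measurable fun ω => ε ω 0 :=
    (EuclideanSpace.proj (0 : Fin 2) :
      EuclideanSpace ℝ (Fin 2) →L[ℝ] ℝ).continuous.measurable.comp hε
  have hε1 : Measurable fun ω => ε ω 1 :=
    (EuclideanSpace.proj (1 : Fin 2) :
      EuclideanSpace ℝ (Fin 2) →L[ℝ] ℝ).continuous.measurable.comp hε
  have hmeas : Measurable fun ω =>
      (Real.arctan ((x 1 + ε ω 1 - o 1) / (x 0 + ε ω 0 - o 0))
        - Real.arctan ((x 1 - o 1) / (x 0 - o 0))) ^ 2 := by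
    apply Measurable.pow_const
    apply Measurable.sub _ measurable_const
    exact Real.continuous_arctan.measurable.comp
      (((hε1.const_add (x 1)).sub_const (o 1)).div
        ((hε0.const_add (x 0)).sub_const (o 0)))
  have hxo : ‖x - o‖ ^ 2 = (x 0 - o 0) ^ 2 + (x 1 - o 1) ^ 2 := by
    rw [stmt9_norm_sq (x - o)]; simp [PiLp.sub_apply]
  have hfint : Integrable (fun ω =>
      (Real.arctan ((x 1 + ε ω 1 - o 1) / (x 0 + ε ω 0 - o 0))
        - Real.arctan ((x 1 - o 1) / (x 0 - o 0))) ^ 2) P := by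
    refine (integrable_const (π ^ 2)).mono' hmeas.aestronglyMeasurable
      (ae_of_all _ fun ω => ?_)
    rw [Real.norm_eq_abs, abs_of_nonneg (sq_nonneg _)]
    exact stmt9_arctan_sq_le _ _
  have main : ∀ a ∈ Set.Ioo (0:ℝ) 1,
      ∫ ω, (Real.arctan ((x 1 + ε ω 1 - o 1) / (x 0 + ε ω 0 - o 0))
              - Real.arctan ((x 1 - o 1) / (x 0 - o 0))) ^ 2 ∂P
        ≤ (∫ ω, ‖ε ω‖ ^ 2 ∂P) / ‖x - o‖ ^ 2 * (π ^ 2 / a ^ 2 + 1 / (1 - a) ^ 2) := by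
    rintro a ⟨ha0, ha1⟩
    have hgint : Integrable
        (fun ω => ‖ε ω‖ ^ 2 / ‖x - o‖ ^ 2 * (π ^ 2 / a ^ 2 + 1 / (1 - a) ^ 2)) P :=
      (hL2.div_const _).mul_const _
    have hae : ∀ᵐ ω ∂P,
        (Real.arctan ((x 1 + ε ω 1 - o 1) / (x 0 + ε ω 0 - o 0))
          - Real.arctan ((x 1 - o 1) / (x 0 - o 0))) ^ 2
        ≤ ‖ε ω‖ ^ 2 / ‖x - o‖ ^ 2 * (π ^ 2 / a ^ 2 + 1 / (1 - a) ^ 2) := by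
      filter_upwards [hsign] with ω hω
      have key := stmt9_ptwise (x 0 - o 0) (x 1 - o 1) (ε ω 0) (ε ω 1) a ha0 ha1 hω
      have e1 : x 1 + ε ω 1 - o 1 = x 1 - o 1 + ε ω 1 := by ring
      have e0 : x 0 + ε ω 0 - o 0 = x 0 - o 0 + ε ω 0 := by ring
      rw [e1, e0, hxo, stmt9_norm_sq (ε ω)]
      exact key
    calc ∫ ω, (Real.arctan ((x 1 + ε ω 1 - o 1) / (x 0 + ε ω 0 - o 0))
              - Real.arctan ((x 1 - o 1) / (x 0 - o 0))) ^ 2 ∂P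
        ≤ ∫ ω, ‖ε ω‖ ^ 2 / ‖x - o‖ ^ 2 * (π ^ 2 / a ^ 2 + 1 / (1 - a) ^ 2) ∂P :=
          integral_mono_ae hfint hgint hae
      _ = (∫ ω, ‖ε ω‖ ^ 2 ∂P) / ‖x - o‖ ^ 2 * (π ^ 2 / a ^ 2 + 1 / (1 - a) ^ 2) := by
          rw [integral_mul_const, integral_div]
  refine ⟨main, ?_⟩
  set t := π ^ (-(2:ℝ)/3) with htdef
  have ht : 0 < t := Real.rpow_pos_of_pos pi_pos _
  have ht3 : t ^ 3 * π ^ 2 = 1 := by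
    have h1 : t ^ (3:ℕ) = π ^ ((-(2:ℝ)/3) * 3) := by
      rw [htdef, ← Real.rpow_natCast (π ^ (-(2:ℝ)/3)) 3, ← Real.rpow_mul pi_pos.le]
      norm_num
    have h2 : (π:ℝ) ^ (2:ℕ) = π ^ ((2:ℕ):ℝ) := (Real.rpow_natCast π 2).symm
    rw [h1, h2, ← Real.rpow_add pi_pos]
    norm_num
  have hmem : 1 / (1 + t) ∈ Set.Ioo (0:ℝ) 1 :=
    ⟨by positivity, by rw [div_lt_one (by positivity)]; linarith⟩
  have h2 := main _ hmem
  have hconst : π ^ 2 / (1 / (1 + t)) ^ 2 + 1 / (1 - 1 / (1 + t)) ^ 2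
      = π ^ 2 * (1 + t) ^ 3 := by
    have hne : (1:ℝ) + t ≠ 0 := by positivity
    have h1mt : (1:ℝ) - 1 / (1 + t) = t / (1 + t) := by field_simp; ring
    rw [h1mt]
    field_simp
    linear_combination (-1) * ht3
  rw [hconst] at h2
  calc ∫ ω, (Real.arctan ((x 1 + ε ω 1 - o 1) / (x 0 + ε ω 0 - o 0))
          - Real.arctan ((x 1 - o 1) / (x 0 - o 0))) ^ 2 ∂P
      ≤ (∫ ω, ‖ε ω‖ ^ 2 ∂P) / ‖x - o‖ ^ 2 * (π ^ 2 * (1 + t) ^ 3) := h2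
    _ = π ^ 2 * (1 + t) ^ 3 * (∫ ω, ‖ε ω‖ ^ 2 ∂P) / ‖x - o‖ ^ 2 := by ring
end

section
/- Let (ε_k)_{k∈ℕ} be a stationary sequence of ℝ^d-valued random variables with strong mixing coefficients (α_k) satisfying α_k → 0 as k → ∞, and let F : ℝ^d × [0,1] → ℝ be measurable with E F(ε₁,t) = 0 for all t ∈ [0,1], sup_{t∈[0,1]} E|F(ε₁,t)| < ∞, and lim_{M→∞} sup_{t∈[0,1]} E[|F(ε₁,t)| 1_{|F(ε₁,t)|>M}] = 0. Then (1/n) ∑_{k=1}^n F(ε_k, k/n) converges in probability to 0 as n → ∞. -/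
open MeasureTheory ProbabilityTheory Filter
open scoped BigOperators Topology

/-- The strong mixing (α-mixing) coefficients of a sequence `(ε_k)`:
`α_0 = 1/2` and, for `k ≥ 1`,
`α_k = 2 sup |P(A ∩ B) − P(A) P(B)|`, the supremum being over `ℓ ∈ ℕ`,
`A ∈ σ(ε_i : i ≤ ℓ)` and `B ∈ σ(ε_i : i ≥ k + ℓ)`. -/
noncomputable def alphaMix {Ω : Type*} [MeasurableSpace Ω] (P : Measure Ω)
    {E : Type*} [MeasurableSpace E] (ε : ℕ → Ω → E) : ℕ → ℝ
  | 0 => 1/2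
  | (k+1) => 2 * sSup {x : ℝ | ∃ (ℓ : ℕ) (A B : Set Ω),
      MeasurableSet[⨆ i ∈ {i : ℕ | i ≤ ℓ}, MeasurableSpace.comap (ε i) inferInstance] A ∧
      MeasurableSet[⨆ i ∈ {i : ℕ | k + 1 + ℓ ≤ i}, MeasurableSpace.comap (ε i) inferInstance] B ∧
      x = |(P (A ∩ B)).toReal - (P A).toReal * (P B).toReal|}

set_option maxHeartbeats 4000000

section Cov
variable {Ω : Type*} {𝒜 m0 : MeasurableSpace Ω}

lemma cov_step (h𝒜 : 𝒜 ≤ m0) (P : Measure Ω) [IsProbabilityMeasure P] {X Y : Ω → ℝ}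
    (hX : StronglyMeasurable[𝒜] X) {a : ℝ} (ha0 : 0 ≤ a) (hXa : ∀ ω, |X ω| ≤ a)
    (hY : Integrable Y P) {c : ℝ}
    (hc : ∀ A : Set Ω, MeasurableSet[𝒜] A →
      |(∫ ω in A, Y ω ∂P) - (P A).toReal * ∫ ω, Y ω ∂P| ≤ c) :
    |(∫ ω, X ω * Y ω ∂P) - (∫ ω, X ω ∂P) * ∫ ω, Y ω ∂P| ≤ 2 * a * c := by
  have hfin : SigmaFinite (P.trim h𝒜) := by
    have : IsFiniteMeasure (P.trim h𝒜) := isFiniteMeasure_trim h𝒜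
    infer_instance
  set g : Ω → ℝ := P[Y | 𝒜] with hg_def
  have hgint : Integrable g P := integrable_condExp
  have hgm : StronglyMeasurable[𝒜] g := stronglyMeasurable_condExp
  have hXm : StronglyMeasurable X := hX.mono h𝒜
  have hXint : Integrable X P :=
    (integrable_const a).mono' hXm.aestronglyMeasurable
      (Filter.Eventually.of_forall fun ω => by simpa using hXa ω)
  have hXY : Integrable (fun ω => X ω * Y ω) P :=
    hY.bdd_mul hXm.aestronglyMeasurable (Filter.Eventually.of_forall fun ω => by simpa using hXa ω)
  have hXg : Integrable (fun ω => X ω * g ω) P :=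
    hgint.bdd_mul hXm.aestronglyMeasurable (Filter.Eventually.of_forall fun ω => by simpa using hXa ω)
  -- key: ∫ X*Y = ∫ X*g
  have hpull : (∫ ω, X ω * Y ω ∂P) = ∫ ω, X ω * g ω ∂P := by
    have h1 : (∫ ω, X ω * Y ω ∂P) = ∫ ω, (P[fun ω => X ω * Y ω | 𝒜]) ω ∂P :=
      (integral_condExp h𝒜).symm
    have h2 : P[fun ω => X ω * Y ω | 𝒜] =ᵐ[P] fun ω => X ω * g ω :=
      condExp_stronglyMeasurable_mul_of_bound h𝒜 hX hY a
        (Filter.Eventually.of_forall fun ω => by simpa using hXa ω)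
    rw [h1, integral_congr_ae h2]
  have hEg : (∫ ω, g ω ∂P) = ∫ ω, Y ω ∂P := integral_condExp h𝒜
  set μY : ℝ := ∫ ω, Y ω ∂P with hμY
  set φ : Ω → ℝ := fun ω => g ω - μY with hφ_def
  have hφint : Integrable φ P := hgint.sub (integrable_const μY)
  have hφm : StronglyMeasurable[𝒜] φ := hgm.sub stronglyMeasurable_const
  have hstep1 : |(∫ ω, X ω * Y ω ∂P) - (∫ ω, X ω ∂P) * μY| ≤ a * ∫ ω, |φ ω| ∂P := by
    have heq : (∫ ω, X ω * Y ω ∂P) - (∫ ω, X ω ∂P) * μY = ∫ ω, X ω * φ ω ∂P := by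
      rw [hpull]
      have : (fun ω => X ω * φ ω) = fun ω => X ω * g ω - X ω * μY := by
        funext ω; simp [hφ_def]; ring
      rw [this, integral_sub hXg (hXint.mul_const μY), integral_mul_const]
    rw [heq]
    have hXφ : Integrable (fun ω => X ω * φ ω) P :=
      hφint.bdd_mul hXm.aestronglyMeasurable (Filter.Eventually.of_forall fun ω => by simpa using hXa ω)
    calc |∫ ω, X ω * φ ω ∂P| ≤ ∫ ω, |X ω * φ ω| ∂P := by
          simpa only [Real.norm_eq_abs] using
            norm_integral_le_integral_norm (μ := P) (f := fun ω => X ω * φ ω)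
      _ ≤ ∫ ω, a * |φ ω| ∂P := by
          refine integral_mono_ae hXφ.abs
            ((hφint.abs).const_mul a) (Filter.Eventually.of_forall fun ω => ?_)
          simp only [abs_mul]
          exact mul_le_mul_of_nonneg_right (hXa ω) (abs_nonneg _)
      _ = a * ∫ ω, |φ ω| ∂P := integral_const_mul a _
  set A : Set Ω := {ω | 0 ≤ φ ω} with hA_def
  have hAmeas : MeasurableSet[𝒜] A := stronglyMeasurable_const.measurableSet_le hφm
  have hAmeas0 : MeasurableSet A := h𝒜 _ hAmeas
  have habs : (∫ ω, |φ ω| ∂P) = 2 * ((∫ ω in A, Y ω ∂P) - (P A).toReal * μY) := by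
    have hsplit : (∫ ω, |φ ω| ∂P) = (∫ ω in A, |φ ω| ∂P) + ∫ ω in Aᶜ, |φ ω| ∂P :=
      (integral_add_compl hAmeas0 hφint.abs).symm
    have hA1 : (∫ ω in A, |φ ω| ∂P) = ∫ ω in A, φ ω ∂P := by
      refine setIntegral_congr_fun hAmeas0 fun ω hω => ?_
      exact abs_of_nonneg hω
    have hA2 : (∫ ω in Aᶜ, |φ ω| ∂P) = ∫ ω in Aᶜ, -(φ ω) ∂P := by
      refine setIntegral_congr_fun hAmeas0.compl fun ω hω => ?_
      have : φ ω < 0 := lt_of_not_ge hω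
      simp [abs_of_neg this]
    have hφtot : (∫ ω, φ ω ∂P) = 0 := by
      rw [hφ_def]
      simp only
      rw [integral_sub hgint (integrable_const μY), hEg, integral_const]
      simp [hμY]
    have hcompl : (∫ ω in Aᶜ, φ ω ∂P) = - ∫ ω in A, φ ω ∂P := by
      have := integral_add_compl hAmeas0 hφint
      linarith
    have hAφ : (∫ ω in A, φ ω ∂P) = (∫ ω in A, Y ω ∂P) - (P A).toReal * μY := by
      have h1 : (∫ ω in A, φ ω ∂P) = (∫ ω in A, g ω ∂P) - ∫ ω in A, (μY : ℝ) ∂P :=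
        integral_sub (hgint.integrableOn) integrableOn_const
      have h2 : (∫ ω in A, g ω ∂P) = ∫ ω in A, Y ω ∂P := setIntegral_condExp h𝒜 hY hAmeas
      have h3 : (∫ ω in A, (μY : ℝ) ∂P) = (P A).toReal * μY := by
        rw [setIntegral_const, smul_eq_mul, measureReal_def]
      rw [h1, h2, h3]
    rw [hsplit, hA1, hA2, integral_neg, hcompl, hAφ]; ring
  have hc' := hc A hAmeas
  have hca : 0 ≤ (∫ ω in A, Y ω ∂P) - (P A).toReal * μY := by
    have h0 : 0 ≤ ∫ ω, |φ ω| ∂P := integral_nonneg fun ω => abs_nonneg _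
    linarith
  calc |(∫ ω, X ω * Y ω ∂P) - (∫ ω, X ω ∂P) * μY| ≤ a * ∫ ω, |φ ω| ∂P := hstep1
    _ = a * (2 * ((∫ ω in A, Y ω ∂P) - (P A).toReal * μY)) := by rw [habs]
    _ ≤ a * (2 * c) := by
        have : (∫ ω in A, Y ω ∂P) - (P A).toReal * μY ≤ c := (abs_le.1 hc').2
        nlinarith
    _ = 2 * a * c := by ring

end Cov

section Cov2
variable {Ω : Type*} {𝒜 ℬ m0 : MeasurableSpace Ω}

lemma cov_bound (h𝒜 : 𝒜 ≤ m0) (hℬ : ℬ ≤ m0) (P : Measure Ω) [IsProbabilityMeasure P]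
    {X Y : Ω → ℝ} (hX : StronglyMeasurable[𝒜] X) (hY : StronglyMeasurable[ℬ] Y)
    {a b : ℝ} (ha0 : 0 ≤ a) (hb0 : 0 ≤ b) (hXa : ∀ ω, |X ω| ≤ a) (hYb : ∀ ω, |Y ω| ≤ b)
    {η : ℝ}
    (hAB : ∀ A B : Set Ω, MeasurableSet[𝒜] A → MeasurableSet[ℬ] B →
      |(P (A ∩ B)).toReal - (P A).toReal * (P B).toReal| ≤ η) :
    |(∫ ω, X ω * Y ω ∂P) - (∫ ω, X ω ∂P) * ∫ ω, Y ω ∂P| ≤ 4 * a * b * η := by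
  have hYm : StronglyMeasurable Y := hY.mono hℬ
  have hYint : Integrable Y P :=
    (integrable_const b).mono' hYm.aestronglyMeasurable
      (Filter.Eventually.of_forall fun ω => by simpa using hYb ω)
  have key : ∀ A : Set Ω, MeasurableSet[𝒜] A →
      |(∫ ω in A, Y ω ∂P) - (P A).toReal * ∫ ω, Y ω ∂P| ≤ 2 * b * η := by
    intro A hA
    have hA0 : MeasurableSet A := h𝒜 _ hA
    have hInd : Integrable (A.indicator (fun _ => (1:ℝ))) P :=
      (integrable_const (1:ℝ)).indicator hA0
    have h1 : ∀ B : Set Ω, MeasurableSet[ℬ] B →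
        |(∫ ω in B, A.indicator (fun _ => (1:ℝ)) ω ∂P) -
          (P B).toReal * ∫ ω, A.indicator (fun _ => (1:ℝ)) ω ∂P| ≤ η := by
      intro B hB
      have hB0 : MeasurableSet B := hℬ _ hB
      have e1 : (∫ ω in B, A.indicator (fun _ => (1:ℝ)) ω ∂P) = (P (A ∩ B)).toReal := by
        rw [setIntegral_indicator hA0]
        simp [Measure.restrict_apply hA0, Set.inter_comm, measureReal_def]
      have e2 : (∫ ω, A.indicator (fun _ => (1:ℝ)) ω ∂P) = (P A).toReal := by
        simp [integral_indicator hA0, measureReal_def]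
      rw [e1, e2, mul_comm]
      exact hAB A B hA hB
    have h2 := cov_step hℬ P hY hb0 hYb hInd h1
    -- ∫ Y * 1_A = ∫_A Y ;  ∫ 1_A = P A
    have e3 : (∫ ω, Y ω * A.indicator (fun _ => (1:ℝ)) ω ∂P) = ∫ ω in A, Y ω ∂P := by
      rw [← integral_indicator hA0]
      congr 1; funext ω
      by_cases hω : ω ∈ A <;> simp [hω]
    have e4 : (∫ ω, A.indicator (fun _ => (1:ℝ)) ω ∂P) = (P A).toReal := by
      simp [integral_indicator hA0, measureReal_def]
    rw [e3, e4] at h2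
    calc |(∫ ω in A, Y ω ∂P) - (P A).toReal * ∫ ω, Y ω ∂P|
        = |(∫ ω in A, Y ω ∂P) - (∫ ω, Y ω ∂P) * (P A).toReal| := by ring_nf
      _ ≤ 2 * b * η := h2
  have := cov_step h𝒜 P hX ha0 hXa hYint key
  calc |(∫ ω, X ω * Y ω ∂P) - (∫ ω, X ω ∂P) * ∫ ω, Y ω ∂P| ≤ 2 * a * (2 * b * η) := this
    _ = 4 * a * b * η := by ring

end Cov2

section Alpha
variable {Ω : Type*} [m0 : MeasurableSpace Ω] {E : Type*} [MeasurableSpace E]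
variable (P : Measure Ω) [IsProbabilityMeasure P] (ε : ℕ → Ω → E)

lemma prob_toReal_le_one (s : Set Ω) : (P s).toReal ≤ 1 := by
  have h := prob_le_one (μ := P) (s := s)
  have := ENNReal.toReal_mono (by simp) h
  simpa using this

lemma alpha_set_bddAbove (k : ℕ) : BddAbove {x : ℝ | ∃ (ℓ : ℕ) (A B : Set Ω),
      MeasurableSet[⨆ i ∈ {i : ℕ | i ≤ ℓ}, MeasurableSpace.comap (ε i) inferInstance] A ∧
      MeasurableSet[⨆ i ∈ {i : ℕ | k + 1 + ℓ ≤ i}, MeasurableSpace.comap (ε i) inferInstance] B ∧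
      x = |(P (A ∩ B)).toReal - (P A).toReal * (P B).toReal|} := by
  refine ⟨1, fun x hx => ?_⟩
  obtain ⟨ℓ, A, B, -, -, rfl⟩ := hx
  have h1 : (P (A ∩ B)).toReal ≤ 1 := prob_toReal_le_one P _
  have h2 : (P A).toReal ≤ 1 := prob_toReal_le_one P _
  have h3 : (P B).toReal ≤ 1 := prob_toReal_le_one P _
  have h4 : 0 ≤ (P (A ∩ B)).toReal := ENNReal.toReal_nonneg
  have h5 : 0 ≤ (P A).toReal := ENNReal.toReal_nonneg
  have h6 : 0 ≤ (P B).toReal := ENNReal.toReal_nonneg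
  rw [abs_le]
  constructor <;> nlinarith

lemma alpha_nonneg (m : ℕ) : 0 ≤ alphaMix P ε m := by
  cases m with
  | zero => norm_num [alphaMix]
  | succ k =>
    rw [alphaMix]
    have h0 : (0:ℝ) ∈ {x : ℝ | ∃ (ℓ : ℕ) (A B : Set Ω),
      MeasurableSet[⨆ i ∈ {i : ℕ | i ≤ ℓ}, MeasurableSpace.comap (ε i) inferInstance] A ∧
      MeasurableSet[⨆ i ∈ {i : ℕ | k + 1 + ℓ ≤ i}, MeasurableSpace.comap (ε i) inferInstance] B ∧
      x = |(P (A ∩ B)).toReal - (P A).toReal * (P B).toReal|} := by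
      refine ⟨0, ∅, ∅,
        @MeasurableSet.empty _ (⨆ i ∈ {i : ℕ | i ≤ 0}, MeasurableSpace.comap (ε i) inferInstance),
        @MeasurableSet.empty _ (⨆ i ∈ {i : ℕ | k + 1 + 0 ≤ i},
          MeasurableSpace.comap (ε i) inferInstance), ?_⟩
      simp
    have := le_csSup (alpha_set_bddAbove P ε k) h0
    linarith

lemma alpha_pair (hmeas : ∀ k, Measurable (ε k)) (j m : ℕ) (hm : 1 ≤ m)
    {A B : Set Ω}
    (hA : MeasurableSet[MeasurableSpace.comap (ε j) inferInstance] A)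
    (hB : MeasurableSet[MeasurableSpace.comap (ε (j + m)) inferInstance] B) :
    |(P (A ∩ B)).toReal - (P A).toReal * (P B).toReal| ≤ alphaMix P ε m / 2 := by
  obtain ⟨k, rfl⟩ : ∃ k, m = k + 1 := ⟨m - 1, by omega⟩
  rw [alphaMix]
  have hmem : |(P (A ∩ B)).toReal - (P A).toReal * (P B).toReal| ∈
      {x : ℝ | ∃ (ℓ : ℕ) (A B : Set Ω),
      MeasurableSet[⨆ i ∈ {i : ℕ | i ≤ ℓ}, MeasurableSpace.comap (ε i) inferInstance] A ∧
      MeasurableSet[⨆ i ∈ {i : ℕ | k + 1 + ℓ ≤ i}, MeasurableSpace.comap (ε i) inferInstance] B ∧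
      x = |(P (A ∩ B)).toReal - (P A).toReal * (P B).toReal|} := by
    refine ⟨j, A, B, ?_, ?_, rfl⟩
    · have hle : MeasurableSpace.comap (ε j) inferInstance ≤
          ⨆ i ∈ {i : ℕ | i ≤ j}, MeasurableSpace.comap (ε i) inferInstance := by
        exact le_iSup₂ (f := fun i (_ : i ∈ {i : ℕ | i ≤ j}) =>
          MeasurableSpace.comap (ε i) inferInstance) j (by simp only [Set.mem_setOf_eq]; exact le_rfl)
      exact hle _ hA
    · have hle : MeasurableSpace.comap (ε (j + (k + 1))) inferInstance ≤
          ⨆ i ∈ {i : ℕ | k + 1 + j ≤ i}, MeasurableSpace.comap (ε i) inferInstance := by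
        exact le_iSup₂ (f := fun i (_ : i ∈ {i : ℕ | k + 1 + j ≤ i}) =>
          MeasurableSpace.comap (ε i) inferInstance) (j + (k + 1)) (by simp only [Set.mem_setOf_eq]; omega)
      exact hle _ hB
  have := le_csSup (alpha_set_bddAbove P ε k) hmem
  linarith

lemma abs_cov_quarter {A B : Set Ω} (hB : MeasurableSet B) :
    |(P (A ∩ B)).toReal - (P A).toReal * (P B).toReal| ≤ 1/4 := by
  set x := (P A).toReal
  set y := (P B).toReal
  set z := (P (A ∩ B)).toReal
  have hx1 : x ≤ 1 := prob_toReal_le_one P _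
  have hy1 : y ≤ 1 := prob_toReal_le_one P _
  have hx0 : 0 ≤ x := ENNReal.toReal_nonneg
  have hy0 : 0 ≤ y := ENNReal.toReal_nonneg
  have hz0 : 0 ≤ z := ENNReal.toReal_nonneg
  have hzx : z ≤ x := ENNReal.toReal_mono (measure_ne_top _ _)
    (measure_mono Set.inter_subset_left)
  have hzy : z ≤ y := ENNReal.toReal_mono (measure_ne_top _ _)
    (measure_mono Set.inter_subset_right)
  have hlow : x + y - 1 ≤ z := by
    have h := measure_union_add_inter (μ := P) A hB
    have hfin1 : P (A ∪ B) ≠ ⊤ := measure_ne_top _ _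
    have hfin2 : P (A ∩ B) ≠ ⊤ := measure_ne_top _ _
    have h' : (P (A ∪ B)).toReal + (P (A ∩ B)).toReal = x + y := by
      rw [← ENNReal.toReal_add hfin1 hfin2, h,
        ENNReal.toReal_add (measure_ne_top _ _) (measure_ne_top _ _)]
    have hle1 : (P (A ∪ B)).toReal ≤ 1 := prob_toReal_le_one P _
    linarith
  rw [abs_le]
  constructor
  · nlinarith [mul_nonneg hx0 hy0, sq_nonneg (x + y - 1), sq_nonneg (x - y)]
  · nlinarith [mul_nonneg (sub_nonneg.2 hzy) (sub_nonneg.2 hy1),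
      mul_nonneg (sub_nonneg.2 hzx) hy0, sq_nonneg (2*y - 1)]
end Alpha

-- counting lemma
lemma count_sum_le (f : ℕ → ℝ) (hf : ∀ m, 0 ≤ f m) (n j : ℕ) (hj : j ∈ Finset.Icc 1 n) :
    ∑ k ∈ Finset.Icc 1 n, f (max j k - min j k) ≤ 2 * ∑ m ∈ Finset.range n, f m := by
  simp only [Finset.mem_Icc] at hj
  have hsplit : Finset.Icc 1 n = Finset.Icc 1 j ∪ Finset.Icc (j+1) n := by
    ext a
    simp only [Finset.mem_Icc, Finset.mem_union]
    omega
  have hdisj : Disjoint (Finset.Icc 1 j) (Finset.Icc (j+1) n) := by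
    simp [Finset.disjoint_left, Finset.mem_Icc]
    intro a _ ha2 ha3; omega
  rw [hsplit, Finset.sum_union hdisj]
  have h1 : ∑ k ∈ Finset.Icc 1 j, f (max j k - min j k) ≤ ∑ m ∈ Finset.range n, f m := by
    rw [show (∑ k ∈ Finset.Icc 1 j, f (max j k - min j k))
        = ∑ k ∈ Finset.Icc 1 j, f (j - k) from Finset.sum_congr rfl fun k hk => by
          simp only [Finset.mem_Icc] at hk
          congr 1; omega]
    rw [← Finset.sum_image (f := f) (g := fun k => j - k) (s := Finset.Icc 1 j)
      (by intro a ha b hb hab; simp only [Finset.mem_coe, Finset.mem_Icc] at ha hb; dsimp only at hab; omega)]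
    refine Finset.sum_le_sum_of_subset_of_nonneg ?_ (fun m _ _ => hf m)
    intro m hm
    simp only [Finset.mem_image, Finset.mem_Icc, Finset.mem_range] at hm ⊢
    obtain ⟨k, hk, rfl⟩ := hm; omega
  have h2 : ∑ k ∈ Finset.Icc (j+1) n, f (max j k - min j k) ≤ ∑ m ∈ Finset.range n, f m := by
    rw [show (∑ k ∈ Finset.Icc (j+1) n, f (max j k - min j k))
        = ∑ k ∈ Finset.Icc (j+1) n, f (k - j) from Finset.sum_congr rfl fun k hk => by
          simp only [Finset.mem_Icc] at hk
          congr 1; omega]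
    rw [← Finset.sum_image (f := f) (g := fun k => k - j) (s := Finset.Icc (j+1) n)
      (by intro a ha b hb hab; simp only [Finset.mem_coe, Finset.mem_Icc] at ha hb; dsimp only at hab; omega)]
    refine Finset.sum_le_sum_of_subset_of_nonneg ?_ (fun m _ _ => hf m)
    intro m hm
    simp only [Finset.mem_image, Finset.mem_Icc, Finset.mem_range] at hm ⊢
    obtain ⟨k, hk, rfl⟩ := hm; omega
  linarith

lemma law_eq {Ω : Type*} [MeasurableSpace Ω] (P : Measure Ω)
    {E : Type*} [MeasurableSpace E] (ε : ℕ → Ω → E) (hmeas : ∀ k, Measurable (ε k))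
    (hstat : ∀ k : ℕ, Measure.map (fun ω (i : ℕ) => ε (i + k) ω) P
      = Measure.map (fun ω (i : ℕ) => ε i ω) P)
    (k : ℕ) (hk : 1 ≤ k) : Measure.map (ε k) P = Measure.map (ε 1) P := by
  have hpath : ∀ j : ℕ, Measurable (fun ω (i : ℕ) => ε (i + j) ω) :=
    fun j => measurable_pi_lambda _ fun i => hmeas (i + j)
  have hpath0 : Measurable (fun ω (i : ℕ) => ε i ω) :=
    measurable_pi_lambda _ fun i => hmeas i
  have heval : Measurable (fun f : ℕ → E => f 1) := measurable_pi_apply 1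
  have h1 : Measure.map (fun f : ℕ → E => f 1)
      (Measure.map (fun ω (i : ℕ) => ε (i + (k - 1)) ω) P) = Measure.map (ε k) P := by
    rw [Measure.map_map heval (hpath (k - 1))]
    congr 1
    funext ω
    show ε (1 + (k - 1)) ω = ε k ω
    congr 1
    omega
  have h2 : Measure.map (fun f : ℕ → E => f 1)
      (Measure.map (fun ω (i : ℕ) => ε i ω) P) = Measure.map (ε 1) P := by
    rw [Measure.map_map heval hpath0]
    rfl
  rw [← h1, hstat (k - 1), h2]

/-- Law of large numbers for triangular arrays built from a stationary strongly
mixing sequence: if `(ε_k)` is stationary with strong mixing coefficients `α_k → 0`, `F` is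
measurable with `E F(ε₁,t) = 0` for all `t ∈ [0,1]`, `sup_{t∈[0,1]} E|F(ε₁,t)| < ∞` and the
family `{F(ε₁,t)}` is uniformly integrable uniformly in `t`, then
`(1/n) ∑_{k=1}^n F(ε_k, k/n) → 0` in probability. -/
theorem stmt_14
    {Ω : Type*} [MeasurableSpace Ω] (P : Measure Ω) [IsProbabilityMeasure P]
    {d : ℕ} (ε : ℕ → Ω → EuclideanSpace ℝ (Fin d))
    (hmeas : ∀ k, Measurable (ε k))
    -- stationarity
    (hstat : ∀ k : ℕ, Measure.map (fun ω (i : ℕ) => ε (i + k) ω) P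
      = Measure.map (fun ω (i : ℕ) => ε i ω) P)
    -- strong mixing
    (hmix : Tendsto (alphaMix P ε) atTop (𝓝 0))
    (F : EuclideanSpace ℝ (Fin d) → ℝ → ℝ)
    (hF : Measurable (fun q : EuclideanSpace ℝ (Fin d) × ℝ => F q.1 q.2))
    (hint : ∀ t ∈ Set.Icc (0:ℝ) 1, Integrable (fun ω => F (ε 1 ω) t) P)
    (hcent : ∀ t ∈ Set.Icc (0:ℝ) 1, ∫ ω, F (ε 1 ω) t ∂P = 0)
    (hbound : ∃ C : ℝ, ∀ t ∈ Set.Icc (0:ℝ) 1, ∫ ω, |F (ε 1 ω) t| ∂P ≤ C)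
    (hUI : ∀ δ > (0:ℝ), ∃ M : ℝ, ∀ t ∈ Set.Icc (0:ℝ) 1,
      ∫ ω in {ω | M < |F (ε 1 ω) t|}, |F (ε 1 ω) t| ∂P ≤ δ) :
    TendstoInMeasure P
      (fun (n : ℕ) ω => (n:ℝ)⁻¹ * ∑ k ∈ Finset.Icc 1 n, F (ε k ω) ((k:ℝ)/(n:ℝ)))
      atTop (fun _ => (0:ℝ)) := by
  classical
  -- basic measurability
  have hFt : ∀ t : ℝ, Measurable (fun x => F x t) := fun t =>
    hF.comp (measurable_id.prodMk measurable_const)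
  -- law transfer for integrals
  have hlaw : ∀ k, 1 ≤ k → Measure.map (ε k) P = Measure.map (ε 1) P :=
    fun k hk => law_eq P ε hmeas hstat k hk
  have htrans : ∀ (g : EuclideanSpace ℝ (Fin d) → ℝ), Measurable g → ∀ k, 1 ≤ k →
      ∫ ω, g (ε k ω) ∂P = ∫ ω, g (ε 1 ω) ∂P := by
    intro g hg k hk
    rw [← integral_map (hmeas k).aemeasurable hg.stronglyMeasurable.aestronglyMeasurable,
      hlaw k hk, integral_map (hmeas 1).aemeasurable hg.stronglyMeasurable.aestronglyMeasurable]
  have htransInt : ∀ (g : EuclideanSpace ℝ (Fin d) → ℝ), Measurable g → ∀ k, 1 ≤ k →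
      Integrable (fun ω => g (ε 1 ω)) P → Integrable (fun ω => g (ε k ω)) P := by
    intro g hg k hk h1
    have e1 : Integrable g (Measure.map (ε 1) P) :=
      (integrable_map_measure hg.stronglyMeasurable.aestronglyMeasurable
        (hmeas 1).aemeasurable).2 h1
    rw [← hlaw k hk] at e1
    exact (integrable_map_measure hg.stronglyMeasurable.aestronglyMeasurable
      (hmeas k).aemeasurable).1 e1
  -- setup of ε-δ gymnastics
  rw [tendstoInMeasure_iff_dist]
  intro e he
  simp only [Real.dist_0_eq_abs]
  rw [ENNReal.tendsto_nhds_zero]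
  intro γ hγ
  rcases eq_or_ne γ ⊤ with rfl | hγtop
  · exact Filter.Eventually.of_forall fun n => le_top
  set r : ℝ := γ.toReal with hrdef
  have hr0 : 0 < r := ENNReal.toReal_pos hγ.ne' hγtop
  suffices h : ∀ᶠ n : ℕ in atTop, P {ω | e ≤ |(n:ℝ)⁻¹ * ∑ k ∈ Finset.Icc 1 n,
      F (ε k ω) ((k:ℝ)/(n:ℝ))|} ≤ ENNReal.ofReal r by
    refine h.mono fun n hn => ?_
    rwa [hrdef, ENNReal.ofReal_toReal hγtop] at hn
  -- choose truncation level
  set δ : ℝ := r * e / 8 with hδdef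
  have hδ0 : 0 < δ := by positivity
  obtain ⟨M₀, hM₀⟩ := hUI δ hδ0
  set M : ℝ := max M₀ 1 with hMdef
  have hM1 : (1:ℝ) ≤ M := le_max_right _ _
  have hM0 : (0:ℝ) < M := lt_of_lt_of_le one_pos hM1
  have hUIM : ∀ t ∈ Set.Icc (0:ℝ) 1,
      ∫ ω in {ω | M < |F (ε 1 ω) t|}, |F (ε 1 ω) t| ∂P ≤ δ := by
    intro t ht
    refine le_trans (setIntegral_mono_set ((hint t ht).abs.integrableOn)
      (Filter.Eventually.of_forall fun ω => abs_nonneg _)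
      (HasSubset.Subset.eventuallyLE fun ω hω => ?_)) (hM₀ t ht)
    simp only [Set.mem_setOf_eq] at hω ⊢
    exact lt_of_le_of_lt (le_max_left _ _) hω
  -- truncation
  set Fc : EuclideanSpace ℝ (Fin d) → ℝ → ℝ :=
    fun x t => max (-M) (min M (F x t)) with hFcdef
  have hFct : ∀ t : ℝ, Measurable (fun x => Fc x t) := fun t =>
    measurable_const.max (measurable_const.min (hFt t))
  have hFcb : ∀ x t, |Fc x t| ≤ M := by
    intro x t
    rw [abs_le]
    constructor
    · exact le_max_left _ _
    · exact max_le (by linarith) (min_le_left _ _)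
  have hFcint : ∀ (k : ℕ) (t : ℝ), Integrable (fun ω => Fc (ε k ω) t) P := by
    intro k t
    exact (integrable_const M).mono' ((hFct t).comp (hmeas k)).aestronglyMeasurable
      (Filter.Eventually.of_forall fun ω => by simpa using hFcb (ε k ω) t)
  -- truncation error
  have hdiff : ∀ t ∈ Set.Icc (0:ℝ) 1,
      ∫ ω, |F (ε 1 ω) t - Fc (ε 1 ω) t| ∂P ≤ δ := by
    intro t ht
    set s : Set Ω := {ω | M < |F (ε 1 ω) t|} with hsdef
    have hsmeas : MeasurableSet s :=
      measurableSet_lt measurable_const ((hFt t).comp (hmeas 1)).abs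
    have hptwise : ∀ ω, |F (ε 1 ω) t - Fc (ε 1 ω) t| ≤
        s.indicator (fun ω => |F (ε 1 ω) t|) ω := by
      intro ω
      by_cases hω : ω ∈ s
      · rw [Set.indicator_of_mem hω]
        set y := F (ε 1 ω) t with hy
        have : Fc (ε 1 ω) t = max (-M) (min M y) := rfl
        rw [this]
        rcases le_total y (-M) with h | h
        · rw [min_eq_right (by linarith), max_eq_left (by linarith),
            abs_of_nonpos (by linarith), abs_of_nonpos (by linarith)]
          linarith
        rcases le_total M y with h' | h'
        · rw [min_eq_left h', max_eq_right (by linarith),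
            abs_of_nonneg (by linarith), abs_of_nonneg (by linarith)]
          linarith
        · rw [min_eq_right h', max_eq_right h]
          simp [abs_nonneg]
      · have hω' : ¬ (M < |F (ε 1 ω) t|) := hω
        have h1 := abs_le.1 (le_of_not_gt hω')
        have : Fc (ε 1 ω) t = F (ε 1 ω) t := by
          rw [hFcdef]
          simp only
          rw [min_eq_right h1.2, max_eq_right h1.1]
        rw [Set.indicator_of_notMem hω, this]
        simp
    calc ∫ ω, |F (ε 1 ω) t - Fc (ε 1 ω) t| ∂P
        ≤ ∫ ω, s.indicator (fun ω => |F (ε 1 ω) t|) ω ∂P := by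
          refine integral_mono ((hint t ht).sub (hFcint 1 t)).abs
            (((hint t ht).abs).indicator hsmeas) hptwise
      _ = ∫ ω in s, |F (ε 1 ω) t| ∂P := integral_indicator hsmeas
      _ ≤ δ := hUIM t ht
  -- centering
  set c : ℝ → ℝ := fun t => ∫ ω, Fc (ε 1 ω) t ∂P with hcdef
  have hcM : ∀ t, |c t| ≤ M := by
    intro t
    calc |c t| ≤ ∫ ω, |Fc (ε 1 ω) t| ∂P := by
          simpa only [Real.norm_eq_abs] using
            norm_integral_le_integral_norm (μ := P) (f := fun ω => Fc (ε 1 ω) t)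
      _ ≤ ∫ _ω, M ∂P := integral_mono (hFcint 1 t).abs (integrable_const M)
          (fun ω => hFcb _ _)
      _ = M := by simp
  have hcδ : ∀ t ∈ Set.Icc (0:ℝ) 1, |c t| ≤ δ := by
    intro t ht
    have h1 : c t = ∫ ω, (Fc (ε 1 ω) t - F (ε 1 ω) t) ∂P := by
      rw [integral_sub (hFcint 1 t) (hint t ht)]
      have := hcent t ht
      rw [this, sub_zero]
    rw [h1]
    calc |∫ ω, (Fc (ε 1 ω) t - F (ε 1 ω) t) ∂P|
        ≤ ∫ ω, |Fc (ε 1 ω) t - F (ε 1 ω) t| ∂P := by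
          simpa only [Real.norm_eq_abs] using
            norm_integral_le_integral_norm (μ := P)
              (f := fun ω => Fc (ε 1 ω) t - F (ε 1 ω) t)
      _ = ∫ ω, |F (ε 1 ω) t - Fc (ε 1 ω) t| ∂P := by
          congr 1; funext ω; rw [abs_sub_comm]
      _ ≤ δ := hdiff t ht
  -- the centered truncated variables
  set b : ℝ := 2 * M with hbdef
  have hb0 : (0:ℝ) ≤ b := by positivity
  set Z : ℕ → ℕ → Ω → ℝ :=
    fun n k ω => Fc (ε k ω) ((k:ℝ)/(n:ℝ)) - c ((k:ℝ)/(n:ℝ)) with hZdef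
  have hZb : ∀ n k ω, |Z n k ω| ≤ b := by
    intro n k ω
    calc |Z n k ω| ≤ |Fc (ε k ω) ((k:ℝ)/(n:ℝ))| + |c ((k:ℝ)/(n:ℝ))| := abs_sub _ _
      _ ≤ M + M := add_le_add (hFcb _ _) (hcM _)
      _ = b := by rw [hbdef]; ring
  have hZmeasU : ∀ n k, Measurable
      (fun x : EuclideanSpace ℝ (Fin d) => Fc x ((k:ℝ)/(n:ℝ)) - c ((k:ℝ)/(n:ℝ))) :=
    fun n k => (hFct _).sub measurable_const
  have hZsm : ∀ n k, StronglyMeasurable[MeasurableSpace.comap (ε k) inferInstance] (Z n k) :=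
    fun n k => ((hZmeasU n k).comp (comap_measurable (ε k))).stronglyMeasurable
  have hZmeas : ∀ n k, Measurable (Z n k) := fun n k => (hZmeasU n k).comp (hmeas k)
  have hZint : ∀ n k, Integrable (Z n k) P := fun n k =>
    (integrable_const b).mono' (hZmeas n k).aestronglyMeasurable
      (Filter.Eventually.of_forall fun ω => by simpa using hZb n k ω)
  have hZ0 : ∀ n k, 1 ≤ k → ∫ ω, Z n k ω ∂P = 0 := by
    intro n k hk
    have htr := htrans (fun x => Fc x ((k:ℝ)/(n:ℝ))) (hFct _) k hk
    rw [hZdef]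
    simp only
    rw [integral_sub (hFcint k _) (integrable_const _), htr, integral_const]
    simp [hcdef]
  -- covariance bound for pairs
  have hcov : ∀ n j k, 1 ≤ j → 1 ≤ k →
      |∫ ω, Z n j ω * Z n k ω ∂P| ≤ 2 * b^2 * alphaMix P ε (max j k - min j k) := by
    have hwlog : ∀ n j k, 1 ≤ j → j ≤ k →
        |∫ ω, Z n j ω * Z n k ω ∂P| ≤ 2 * b^2 * alphaMix P ε (k - j) := by
      intro n j k hj hjk
      rcases eq_or_lt_of_le hjk with rfl | hlt
      · have hzero : j - j = 0 := by omega
        rw [hzero]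
        have hα : alphaMix P ε 0 = 1/2 := rfl
        rw [hα]
        calc |∫ ω, Z n j ω * Z n j ω ∂P| ≤ ∫ ω, |Z n j ω * Z n j ω| ∂P := by
              simpa only [Real.norm_eq_abs] using norm_integral_le_integral_norm (μ := P)
                (f := fun ω => Z n j ω * Z n j ω)
          _ ≤ ∫ _ω, b^2 ∂P := by
              refine integral_mono ?_ (integrable_const _) ?_
              · exact ((hZint n j).bdd_mul (hZmeas n j).aestronglyMeasurable
                  (Filter.Eventually.of_forall fun ω => by simpa using hZb n j ω)).abs
              · intro ω
                show |Z n j ω * Z n j ω| ≤ b ^ 2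
                rw [abs_mul, sq]
                exact mul_le_mul (hZb n j ω) (hZb n j ω) (abs_nonneg _) hb0
          _ = b^2 := by simp
          _ ≤ 2 * b^2 * (1/2) := by ring_nf; rfl
      · set m := k - j with hmdef
        have hm : 1 ≤ m := by omega
        have hkm : k = j + m := by omega
        have h0 := cov_bound ((hmeas j).comap_le) ((hmeas k).comap_le) P
          (hZsm n j) (hZsm n k) hb0 hb0 (hZb n j) (hZb n k)
          (η := alphaMix P ε m / 2)
          (fun A B hA hB => by
            rw [hkm] at hB
            exact alpha_pair P ε hmeas j m hm hA hB)
        rw [hZ0 n k (by omega), mul_zero, sub_zero] at h0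
        calc |∫ ω, Z n j ω * Z n k ω ∂P| ≤ 4 * b * b * (alphaMix P ε m / 2) := h0
          _ = 2 * b^2 * alphaMix P ε m := by ring
    intro n j k hj hk
    rcases le_total j k with h | h
    · have := hwlog n j k hj h
      rw [max_eq_right h, min_eq_left h]
      exact this
    · have := hwlog n k j hk h
      rw [max_eq_left h, min_eq_right h]
      have hcomm : (fun ω => Z n j ω * Z n k ω) = fun ω => Z n k ω * Z n j ω := by
        funext ω; ring
      rw [show (∫ ω, Z n j ω * Z n k ω ∂P) = ∫ ω, Z n k ω * Z n j ω ∂P by rw [hcomm]]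
      exact this
  -- the two parts of the sum
  set T : ℕ → Ω → ℝ := fun n ω => (n:ℝ)⁻¹ * ∑ k ∈ Finset.Icc 1 n, Z n k ω with hTdef
  set U : ℕ → Ω → ℝ := fun n ω => (n:ℝ)⁻¹ * ∑ k ∈ Finset.Icc 1 n,
    (F (ε k ω) ((k:ℝ)/(n:ℝ)) - Fc (ε k ω) ((k:ℝ)/(n:ℝ)) + c ((k:ℝ)/(n:ℝ))) with hUdef
  have hTU : ∀ (n : ℕ) (ω : Ω), (n:ℝ)⁻¹ * ∑ k ∈ Finset.Icc 1 n, F (ε k ω) ((k:ℝ)/(n:ℝ))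
      = T n ω + U n ω := by
    intro n ω
    rw [hTdef, hUdef]
    simp only
    rw [← mul_add, ← Finset.sum_add_distrib]
    congr 1
    refine Finset.sum_congr rfl fun k _ => ?_
    rw [hZdef]
    ring
  -- T is measurable and bounded
  have hTmeas : ∀ n, Measurable (T n) := fun n =>
    measurable_const.mul (Finset.measurable_sum _ fun k _ => hZmeas n k)
  have hTb : ∀ (n : ℕ) (ω : Ω), |T n ω| ≤ b := by
    intro n ω
    rw [hTdef]
    simp only
    rw [abs_mul, abs_inv, Nat.abs_cast]
    rcases Nat.eq_zero_or_pos n with rfl | hn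
    · simp [hb0]
    have hnR : (0:ℝ) < (n:ℝ) := by exact_mod_cast hn
    calc ((n:ℝ))⁻¹ * |∑ k ∈ Finset.Icc 1 n, Z n k ω|
        ≤ ((n:ℝ))⁻¹ * ∑ k ∈ Finset.Icc 1 n, |Z n k ω| := by
          refine mul_le_mul_of_nonneg_left ?_ (by positivity)
          exact Finset.abs_sum_le_sum_abs _ _
      _ ≤ ((n:ℝ))⁻¹ * ∑ k ∈ Finset.Icc 1 n, b := by
          refine mul_le_mul_of_nonneg_left ?_ (by positivity)
          exact Finset.sum_le_sum fun k _ => hZb n k ω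
      _ = ((n:ℝ))⁻¹ * ((n:ℝ) * b) := by
          rw [Finset.sum_const, Nat.card_Icc]
          simp [nsmul_eq_mul]
      _ = b := by field_simp
  have hTsqint : ∀ n, Integrable (fun ω => (T n ω)^2) P := by
    intro n
    refine (integrable_const (b^2)).mono' ((hTmeas n).pow_const 2).aestronglyMeasurable
      (Filter.Eventually.of_forall fun ω => ?_)
    rw [Real.norm_eq_abs, abs_pow]
    exact pow_le_pow_left₀ (abs_nonneg _) (hTb n ω) 2
  -- second moment of T
  set aa : ℕ → ℝ := fun n => (n:ℝ)⁻¹ * ∑ m ∈ Finset.range n, alphaMix P ε m with haadef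
  have haa0 : ∀ n, 0 ≤ aa n := by
    intro n
    refine mul_nonneg (by positivity) (Finset.sum_nonneg fun m _ => alpha_nonneg P ε m)
  have hprodint : ∀ (n j k : ℕ), Integrable (fun ω => Z n j ω * Z n k ω) P := by
    intro n j k
    exact (hZint n k).bdd_mul (hZmeas n j).aestronglyMeasurable
      (Filter.Eventually.of_forall fun ω => by simpa using hZb n j ω)
  have hTsq : ∀ n : ℕ, 1 ≤ n → ∫ ω, (T n ω)^2 ∂P ≤ 4 * b^2 * aa n := by
    intro n hn
    have hnR : (0:ℝ) < (n:ℝ) := by exact_mod_cast hn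
    have hsq : ∀ ω : Ω, (T n ω)^2 =
        ((n:ℝ)⁻¹)^2 * ∑ j ∈ Finset.Icc 1 n, ∑ k ∈ Finset.Icc 1 n, Z n j ω * Z n k ω := by
      intro ω
      rw [hTdef]
      simp only
      rw [mul_pow]
      congr 1
      rw [sq, Finset.sum_mul_sum]
    have h1 : ∫ ω, (T n ω)^2 ∂P = ((n:ℝ)⁻¹)^2 *
        ∑ j ∈ Finset.Icc 1 n, ∑ k ∈ Finset.Icc 1 n, ∫ ω, Z n j ω * Z n k ω ∂P := by
      rw [integral_congr_ae (Filter.Eventually.of_forall hsq), integral_const_mul]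
      congr 1
      rw [integral_finset_sum _ fun j _ => integrable_finset_sum _ fun k _ => hprodint n j k]
      exact Finset.sum_congr rfl fun j _ =>
        integral_finset_sum _ fun k _ => hprodint n j k
    have h2 : ∑ j ∈ Finset.Icc 1 n, ∑ k ∈ Finset.Icc 1 n, ∫ ω, Z n j ω * Z n k ω ∂P
        ≤ (n:ℝ) * (2 * b^2 * (2 * ∑ m ∈ Finset.range n, alphaMix P ε m)) := by
      calc ∑ j ∈ Finset.Icc 1 n, ∑ k ∈ Finset.Icc 1 n, ∫ ω, Z n j ω * Z n k ω ∂P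
          ≤ ∑ j ∈ Finset.Icc 1 n, ∑ k ∈ Finset.Icc 1 n,
              2 * b^2 * alphaMix P ε (max j k - min j k) := by
            refine Finset.sum_le_sum fun j hj => Finset.sum_le_sum fun k hk => ?_
            simp only [Finset.mem_Icc] at hj hk
            exact (le_abs_self _).trans (hcov n j k hj.1 hk.1)
        _ = ∑ j ∈ Finset.Icc 1 n, 2 * b^2 *
              ∑ k ∈ Finset.Icc 1 n, alphaMix P ε (max j k - min j k) := by
            exact Finset.sum_congr rfl fun j _ => (Finset.mul_sum _ _ _).symm
        _ ≤ ∑ j ∈ Finset.Icc 1 n, 2 * b^2 * (2 * ∑ m ∈ Finset.range n, alphaMix P ε m) := by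
            refine Finset.sum_le_sum fun j hj => ?_
            refine mul_le_mul_of_nonneg_left ?_ (by positivity)
            exact count_sum_le (alphaMix P ε) (alpha_nonneg P ε) n j hj
        _ = (n:ℝ) * (2 * b^2 * (2 * ∑ m ∈ Finset.range n, alphaMix P ε m)) := by
            rw [Finset.sum_const, Nat.card_Icc]
            simp [nsmul_eq_mul]
    calc ∫ ω, (T n ω)^2 ∂P
        = ((n:ℝ)⁻¹)^2 * ∑ j ∈ Finset.Icc 1 n, ∑ k ∈ Finset.Icc 1 n,
            ∫ ω, Z n j ω * Z n k ω ∂P := h1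
      _ ≤ ((n:ℝ)⁻¹)^2 * ((n:ℝ) * (2 * b^2 * (2 * ∑ m ∈ Finset.range n, alphaMix P ε m))) := by
          refine mul_le_mul_of_nonneg_left h2 (by positivity)
      _ = 4 * b^2 * aa n := by
          rw [haadef]
          field_simp
          ring
  -- the remainder term U
  have htmem : ∀ n k : ℕ, 1 ≤ k → k ≤ n → (k:ℝ)/(n:ℝ) ∈ Set.Icc (0:ℝ) 1 := by
    intro n k hk hkn
    have hnR : (0:ℝ) < (n:ℝ) := by
      have : 1 ≤ n := le_trans hk hkn
      exact_mod_cast this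
    constructor
    · positivity
    · rw [div_le_one hnR]
      exact_mod_cast hkn
  have hFkint : ∀ n k : ℕ, 1 ≤ k → k ≤ n →
      Integrable (fun ω => F (ε k ω) ((k:ℝ)/(n:ℝ))) P := by
    intro n k hk hkn
    exact htransInt (fun x => F x ((k:ℝ)/(n:ℝ))) (hFt _) k hk (hint _ (htmem n k hk hkn))
  have hterm_int : ∀ n k : ℕ, 1 ≤ k → k ≤ n →
      Integrable (fun ω => F (ε k ω) ((k:ℝ)/(n:ℝ)) - Fc (ε k ω) ((k:ℝ)/(n:ℝ))
        + c ((k:ℝ)/(n:ℝ))) P := fun n k hk hkn =>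
    ((hFkint n k hk hkn).sub (hFcint k _)).add (integrable_const _)
  have hterm : ∀ n k : ℕ, 1 ≤ k → k ≤ n →
      ∫ ω, |F (ε k ω) ((k:ℝ)/(n:ℝ)) - Fc (ε k ω) ((k:ℝ)/(n:ℝ)) + c ((k:ℝ)/(n:ℝ))| ∂P
        ≤ 2 * δ := by
    intro n k hk hkn
    have ht := htmem n k hk hkn
    set t : ℝ := (k:ℝ)/(n:ℝ) with htdef
    have hg : Measurable (fun x => |F x t - Fc x t|) := ((hFt t).sub (hFct t)).abs
    have htr : ∫ ω, |F (ε k ω) t - Fc (ε k ω) t| ∂P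
        = ∫ ω, |F (ε 1 ω) t - Fc (ε 1 ω) t| ∂P := htrans _ hg k hk
    have habs_int : Integrable (fun ω => |F (ε k ω) t - Fc (ε k ω) t|) P :=
      ((hFkint n k hk hkn).sub (hFcint k _)).abs
    calc ∫ ω, |F (ε k ω) t - Fc (ε k ω) t + c t| ∂P
        ≤ ∫ ω, (|F (ε k ω) t - Fc (ε k ω) t| + |c t|) ∂P := by
          refine integral_mono (hterm_int n k hk hkn).abs
            (habs_int.add (integrable_const _)) fun ω => abs_add_le _ _
      _ = (∫ ω, |F (ε k ω) t - Fc (ε k ω) t| ∂P) + |c t| := by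
          rw [integral_add habs_int (integrable_const _), integral_const]
          simp
      _ ≤ δ + δ := by
          refine add_le_add ?_ (hcδ t ht)
          rw [htr]
          exact hdiff t ht
      _ = 2 * δ := by ring
  have hUint : ∀ n : ℕ, Integrable (U n) P := by
    intro n
    rw [hUdef]
    refine Integrable.const_mul ?_ _
    refine integrable_finset_sum _ fun k hk => ?_
    simp only [Finset.mem_Icc] at hk
    exact hterm_int n k hk.1 hk.2
  have hUbound : ∀ n : ℕ, 1 ≤ n → ∫ ω, |U n ω| ∂P ≤ 2 * δ := by
    intro n hn
    have hnR : (0:ℝ) < (n:ℝ) := by exact_mod_cast hn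
    have hptw : ∀ ω : Ω, |U n ω| ≤ (n:ℝ)⁻¹ * ∑ k ∈ Finset.Icc 1 n,
        |F (ε k ω) ((k:ℝ)/(n:ℝ)) - Fc (ε k ω) ((k:ℝ)/(n:ℝ)) + c ((k:ℝ)/(n:ℝ))| := by
      intro ω
      rw [hUdef]
      simp only
      rw [abs_mul, abs_inv, Nat.abs_cast]
      exact mul_le_mul_of_nonneg_left (Finset.abs_sum_le_sum_abs _ _) (by positivity)
    have habs_int : ∀ k ∈ Finset.Icc 1 n, Integrable (fun ω =>
        |F (ε k ω) ((k:ℝ)/(n:ℝ)) - Fc (ε k ω) ((k:ℝ)/(n:ℝ)) + c ((k:ℝ)/(n:ℝ))|) P := by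
      intro k hk
      simp only [Finset.mem_Icc] at hk
      exact (hterm_int n k hk.1 hk.2).abs
    calc ∫ ω, |U n ω| ∂P
        ≤ ∫ ω, (n:ℝ)⁻¹ * ∑ k ∈ Finset.Icc 1 n,
            |F (ε k ω) ((k:ℝ)/(n:ℝ)) - Fc (ε k ω) ((k:ℝ)/(n:ℝ)) + c ((k:ℝ)/(n:ℝ))| ∂P := by
          refine integral_mono (hUint n).abs ?_ hptw
          exact (integrable_finset_sum _ habs_int).const_mul _
      _ = (n:ℝ)⁻¹ * ∑ k ∈ Finset.Icc 1 n, ∫ ω,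
            |F (ε k ω) ((k:ℝ)/(n:ℝ)) - Fc (ε k ω) ((k:ℝ)/(n:ℝ)) + c ((k:ℝ)/(n:ℝ))| ∂P := by
          rw [integral_const_mul, integral_finset_sum _ habs_int]
      _ ≤ (n:ℝ)⁻¹ * ∑ k ∈ Finset.Icc 1 n, 2 * δ := by
          refine mul_le_mul_of_nonneg_left ?_ (by positivity)
          refine Finset.sum_le_sum fun k hk => ?_
          simp only [Finset.mem_Icc] at hk
          exact hterm n k hk.1 hk.2
      _ = (n:ℝ)⁻¹ * ((n:ℝ) * (2 * δ)) := by
          rw [Finset.sum_const, Nat.card_Icc]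
          simp [nsmul_eq_mul]
      _ = 2 * δ := by field_simp
  -- Markov inequalities
  have he2 : (0:ℝ) < e/2 := by linarith
  have he2sq : (0:ℝ) < (e/2)^2 := by positivity
  have hmarkT : ∀ n : ℕ, 1 ≤ n →
      (e/2)^2 * (P {ω | (e/2)^2 ≤ (T n ω)^2}).toReal ≤ 4*b^2*aa n := fun n hn =>
    le_trans (mul_meas_ge_le_integral_of_nonneg
      (Filter.Eventually.of_forall fun ω => sq_nonneg _) (hTsqint n) _) (hTsq n hn)
  have hmarkU : ∀ n : ℕ, 1 ≤ n →
      (e/2) * (P {ω | e/2 ≤ |U n ω|}).toReal ≤ 2*δ := fun n hn =>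
    le_trans (mul_meas_ge_le_integral_of_nonneg
      (Filter.Eventually.of_forall fun ω => abs_nonneg _) (hUint n).abs _) (hUbound n hn)
  -- choice of the threshold for the Cesàro average
  set ρ : ℝ := r * (e/2)^2 / (8*(b^2+1)) with hρdef
  have hρ0 : (0:ℝ) < ρ := by positivity
  have hα : Tendsto aa atTop (𝓝 0) := by
    have := hmix.cesaro
    simpa only [smul_eq_mul] using this
  have hev := (hα.eventually (eventually_le_nhds hρ0)).and (eventually_ge_atTop 1)
  refine hev.mono fun n hn => ?_
  obtain ⟨hain, hn1⟩ := hn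
  -- splitting of the event
  have hsub : {ω | e ≤ |(n:ℝ)⁻¹ * ∑ k ∈ Finset.Icc 1 n, F (ε k ω) ((k:ℝ)/(n:ℝ))|}
      ⊆ {ω | e/2 ≤ |T n ω|} ∪ {ω | e/2 ≤ |U n ω|} := by
    intro ω hω
    simp only [Set.mem_setOf_eq, Set.mem_union] at hω ⊢
    by_contra hcon
    push_neg at hcon
    rw [hTU n ω] at hω
    have habs := abs_add_le (T n ω) (U n ω)
    have h1 := hcon.1
    have h2 := hcon.2
    linarith
  have hsub2 : {ω | e/2 ≤ |T n ω|} ⊆ {ω | (e/2)^2 ≤ (T n ω)^2} := by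
    intro ω hω
    simp only [Set.mem_setOf_eq] at hω ⊢
    calc (e/2)^2 ≤ |T n ω|^2 := pow_le_pow_left₀ (by positivity) hω 2
      _ = (T n ω)^2 := sq_abs _
  -- T-part bound
  have hPT : (P {ω | e/2 ≤ |T n ω|}).toReal ≤ r/2 := by
    have h1 : (P {ω | e/2 ≤ |T n ω|}).toReal ≤ (P {ω | (e/2)^2 ≤ (T n ω)^2}).toReal :=
      ENNReal.toReal_mono (measure_ne_top _ _) (measure_mono hsub2)
    have h2 := hmarkT n hn1
    have h4 : 4*b^2*aa n ≤ 4*b^2*ρ := mul_le_mul_of_nonneg_left hain (by positivity)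
    have h5 : 4*b^2*ρ ≤ r/2*(e/2)^2 := by
      rw [hρdef, mul_div_assoc']
      rw [div_le_iff₀ (by positivity : (0:ℝ) < 8*(b^2+1))]
      nlinarith [sq_nonneg b, mul_pos hr0 he2sq]
    have h6 : (e/2)^2 * (P {ω | (e/2)^2 ≤ (T n ω)^2}).toReal ≤ r/2*(e/2)^2 := by linarith
    have h7 : (P {ω | (e/2)^2 ≤ (T n ω)^2}).toReal ≤ r/2 := by
      have := le_of_mul_le_mul_left (by linarith : (e/2)^2 *
        (P {ω | (e/2)^2 ≤ (T n ω)^2}).toReal ≤ (e/2)^2 * (r/2)) he2sq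
      exact this
    linarith
  -- U-part bound
  have hPU : (P {ω | e/2 ≤ |U n ω|}).toReal ≤ r/2 := by
    have h2 := hmarkU n hn1
    have hδeq : 2*δ = (e/2) * (r/2) := by rw [hδdef]; ring
    rw [hδeq] at h2
    exact le_of_mul_le_mul_left h2 he2
  -- final assembly
  have hfin : (P {ω | e ≤ |(n:ℝ)⁻¹ * ∑ k ∈ Finset.Icc 1 n,
      F (ε k ω) ((k:ℝ)/(n:ℝ))|}).toReal ≤ r := by
    have hm : P {ω | e ≤ |(n:ℝ)⁻¹ * ∑ k ∈ Finset.Icc 1 n, F (ε k ω) ((k:ℝ)/(n:ℝ))|}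
        ≤ P {ω | e/2 ≤ |T n ω|} + P {ω | e/2 ≤ |U n ω|} :=
      (measure_mono hsub).trans (measure_union_le _ _)
    have h8 : (P {ω | e ≤ |(n:ℝ)⁻¹ * ∑ k ∈ Finset.Icc 1 n,
        F (ε k ω) ((k:ℝ)/(n:ℝ))|}).toReal
        ≤ (P {ω | e/2 ≤ |T n ω|} + P {ω | e/2 ≤ |U n ω|}).toReal :=
      ENNReal.toReal_mono
        (ENNReal.add_ne_top.2 ⟨measure_ne_top _ _, measure_ne_top _ _⟩) hm
    rw [ENNReal.toReal_add (measure_ne_top _ _) (measure_ne_top _ _)] at h8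
    linarith
  exact (ENNReal.le_ofReal_iff_toReal_le (measure_ne_top _ _) hr0.le).2 hfin
end
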